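/- arXiv:1805.05141 — 7 statements merged into one kernel-verified Lean document; each statement's English description precedes it below -/
import Mathlib

section
/- Let c : [0,∞) → [0,∞) be Borel measurable with c(0)=0, and define τ(w) = inf{ F^c[ψ] : ψ ∈ H¹(ℝ), ψ ≥ 0, ∫_ℝ ψ dy = w }. Assume τ(w) < ∞ for every w > 0. Then τ is admissible: τ ≥ 0, τ(0)=0, τ is nondecreasing, concave on [0,∞), and continuous (in particular continuous at 0). -/
open MeasureTheory Filter Set
open scoped ENNReal Topology

/-- `ψ` lies in `H¹(ℝ)` with weak derivative `dψ`: both are square integrable and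
`ψ` is the (locally absolutely continuous) primitive of `dψ`. -/
def MemH1 (ψ dψ : ℝ → ℝ) : Prop :=
  MemLp ψ 2 volume ∧ MemLp dψ 2 volume ∧
    ∀ t : ℝ, ψ t = ψ 0 + ∫ s in (0:ℝ)..t, dψ s

/-- The phase field energy `F^c[ψ] = ∫_ℝ (1/2)|ψ′|² + c(ψ)`. -/
noncomputable def phaseEnergy (c : ℝ → ℝ) (ψ dψ : ℝ → ℝ) : ℝ≥0∞ :=
  ∫⁻ y, ENNReal.ofReal ((1/2) * dψ y ^ 2 + c (ψ y))

/-- The induced transport cost `τ^c(w) = inf { F^c[ψ] | ψ ∈ H¹(ℝ), ψ ≥ 0, ∫ψ = w }`. -/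
noncomputable def tauC (c : ℝ → ℝ) (w : ℝ) : ℝ≥0∞ :=
  ⨅ (p : (ℝ → ℝ) × (ℝ → ℝ)) (_ : MemH1 p.1 p.2 ∧ (∀ y, 0 ≤ p.1 y) ∧
      Integrable p.1 ∧ (∫ y, p.1 y) = w), phaseEnergy c p.1 p.2

/-- Feasibility predicate. -/
def Feas (ψ dψ : ℝ → ℝ) (w : ℝ) : Prop :=
  MemH1 ψ dψ ∧ (∀ y, 0 ≤ ψ y) ∧ Integrable ψ ∧ (∫ y, ψ y) = w

/-- The energy density. -/
noncomputable def eDen (c ψ dψ : ℝ → ℝ) (y : ℝ) : ℝ≥0∞ :=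
  ENNReal.ofReal ((1/2) * dψ y ^ 2 + c (ψ y))

lemma phaseEnergy_eq (c ψ dψ : ℝ → ℝ) : phaseEnergy c ψ dψ = ∫⁻ y, eDen c ψ dψ y := rfl

lemma tauC_le_energy (c : ℝ → ℝ) {ψ dψ : ℝ → ℝ} {w : ℝ} (h : Feas ψ dψ w) :
    tauC c w ≤ phaseEnergy c ψ dψ :=
  iInf₂_le (ψ, dψ) h

lemma exists_feas_of_lt {c : ℝ → ℝ} {w : ℝ} {C : ℝ≥0∞} (h : tauC c w < C) :
    ∃ ψ dψ, Feas ψ dψ w ∧ phaseEnergy c ψ dψ < C := by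
  rw [tauC, iInf_lt_iff] at h
  obtain ⟨p, hp⟩ := h
  rw [iInf_lt_iff] at hp
  obtain ⟨hfeas, hlt⟩ := hp
  exact ⟨p.1, p.2, hfeas, hlt⟩

lemma memℒp_two_intervalIntegrable {f : ℝ → ℝ} (hf : MemLp f 2 volume) (a b : ℝ) :
    IntervalIntegrable f volume a b := by
  rw [intervalIntegrable_iff]
  have h2 : IsFiniteMeasure (volume.restrict (uIoc a b)) := by
    constructor
    rw [Measure.restrict_apply_univ]
    exact measure_Ioc_lt_top
  exact (MemLp.restrict (uIoc a b) hf).mono_exponent (p := 1) (by norm_num) |>.integrable le_rfl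

lemma MemH1.continuous {ψ dψ : ℝ → ℝ} (h : MemH1 ψ dψ) : Continuous ψ := by
  have : ψ = fun t => ψ 0 + ∫ s in (0:ℝ)..t, dψ s := funext h.2.2
  rw [this]
  exact continuous_const.add
    (intervalIntegral.continuous_primitive (fun a b => memℒp_two_intervalIntegrable h.2.1 a b) 0)

lemma MemH1.integral_sub {ψ dψ : ℝ → ℝ} (h : MemH1 ψ dψ) (a b : ℝ) :
    ∫ s in a..b, dψ s = ψ b - ψ a := by
  rw [h.2.2 a, h.2.2 b]
  rw [← intervalIntegral.integral_interval_sub_left (memℒp_two_intervalIntegrable h.2.1 0 b)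
    (memℒp_two_intervalIntegrable h.2.1 0 a)]
  ring_nf

lemma tauC_zero {c : ℝ → ℝ} (hc0 : c 0 = 0) : tauC c 0 = 0 := by
  have hz : MemLp (fun _ : ℝ => (0:ℝ)) 2 volume := MemLp.zero'
  have hfeas : Feas (fun _ => (0:ℝ)) (fun _ => (0:ℝ)) 0 := by
    refine ⟨⟨hz, hz, fun t => by simp⟩, fun y => le_refl 0, integrable_zero _ _ _, by simp⟩
  have h := tauC_le_energy c hfeas
  refine le_antisymm (h.trans ?_) bot_le
  rw [phaseEnergy]
  simp [hc0]

section Reflect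

lemma preim_Iio (t : ℝ) : (fun y : ℝ => 2*t - y) ⁻¹' (Iio t) = Ioi t := by
  ext y; simp only [mem_preimage, mem_Iio, mem_Ioi]; constructor <;> intro h <;> linarith

lemma preim_Iic (t : ℝ) : (fun y : ℝ => 2*t - y) ⁻¹' (Iic t) = Ici t := by
  ext y; simp only [mem_preimage, mem_Iic, mem_Ici]; constructor <;> intro h <;> linarith

lemma setint_reflect (t : ℝ) (ψ : ℝ → ℝ) :
    ∫ y in Ioi t, ψ (2*t - y) = ∫ y in Iic t, ψ y := by
  rw [← preim_Iio t, (Measure.measurePreserving_sub_left volume (2*t)).setIntegral_preimage_emb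
    (MeasurableEquiv.subLeft (2*t)).measurableEmbedding ψ (Iio t)]
  exact setIntegral_congr_set Iio_ae_eq_Iic

lemma setlint_reflect (t : ℝ) (e : ℝ → ℝ≥0∞) :
    ∫⁻ y in Ioi t, e (2*t - y) = ∫⁻ y in Iic t, e y := by
  rw [← preim_Iio t, (Measure.measurePreserving_sub_left volume (2*t)).setLIntegral_comp_preimage_emb
    (MeasurableEquiv.subLeft (2*t)).measurableEmbedding e (Iio t)]
  exact setLIntegral_congr Iio_ae_eq_Iic

/-- Reflection of the part of `ψ` left of `t` across `t`. -/
noncomputable def reflL (ψ : ℝ → ℝ) (t : ℝ) : ℝ → ℝ := fun y => if y ≤ t then ψ y else ψ (2*t - y)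

noncomputable def reflLD (dψ : ℝ → ℝ) (t : ℝ) : ℝ → ℝ :=
  fun y => if y ≤ t then dψ y else -dψ (2*t - y)

lemma reflect_left {c ψ dψ : ℝ → ℝ} {w : ℝ} (hf : Feas ψ dψ w) (t : ℝ) :
    Feas (reflL ψ t) (reflLD dψ t) (2 * ∫ y in Iic t, ψ y) ∧
      phaseEnergy c (reflL ψ t) (reflLD dψ t) = 2 * ∫⁻ y in Iic t, eDen c ψ dψ y := by
  obtain ⟨⟨hψ2, hdψ2, hftc⟩, hpos, hint, hmass⟩ := hf
  have hmp : MeasurePreserving (fun y : ℝ => 2*t - y) volume volume :=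
    Measure.measurePreserving_sub_left volume (2*t)
  have hemb : MeasurableEmbedding (fun y : ℝ => 2*t - y) :=
    (MeasurableEquiv.subLeft (2*t)).measurableEmbedding
  have hψc : Continuous ψ := MemH1.continuous ⟨hψ2, hdψ2, hftc⟩
  have hσc : Continuous (fun y : ℝ => 2*t - y) := (continuous_const.sub continuous_id)
  have hφc : Continuous (reflL ψ t) := by
    refine Continuous.if_le hψc (hψc.comp hσc) continuous_id continuous_const ?_
    intro x hx; rw [hx]; congr 1; ring
  have hψσ2 : MemLp (fun y => ψ (2*t - y)) 2 volume := hψ2.comp_measurePreserving hmp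
  have hdψσ2 : MemLp (fun y => -dψ (2*t - y)) 2 volume :=
    (hdψ2.comp_measurePreserving hmp).neg
  -- MemLp of the reflected functions
  have hφ2 : MemLp (reflL ψ t) 2 volume := by
    refine MemLp.mono (hψ2.norm.add hψσ2.norm) hφc.aestronglyMeasurable (ae_of_all _ ?_)
    intro y
    have h1 : ‖reflL ψ t y‖ ≤ |ψ y| + |ψ (2*t - y)| := by
      simp only [reflL, Real.norm_eq_abs]
      split_ifs
      · exact le_add_of_nonneg_right (abs_nonneg _)
      · exact le_add_of_nonneg_left (abs_nonneg _)
    refine h1.trans ?_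
    simp only [Pi.add_apply, Real.norm_eq_abs]
    exact le_abs_self _
  have hdφm : AEStronglyMeasurable (reflLD dψ t) volume := by
    have hdψσm : AEStronglyMeasurable (fun y => -dψ (2*t - y)) volume :=
      hdψσ2.aestronglyMeasurable
    have h := AEStronglyMeasurable.piecewise (s := Iic t) measurableSet_Iic
      (hdψ2.aestronglyMeasurable.restrict) (hdψσm.restrict)
    have : (Iic t).piecewise dψ (fun y => -dψ (2*t - y)) = reflLD dψ t := by
      funext y
      by_cases h : y ≤ t
      · rw [Set.piecewise_eq_of_mem _ _ _ (mem_Iic.mpr h)]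
        simp only [reflLD, if_pos h]
      · rw [Set.piecewise_eq_of_notMem _ _ _ (fun hm => h (mem_Iic.mp hm))]
        simp only [reflLD, if_neg h]
    rwa [this] at h
  have hdψσ2' : MemLp (fun y => dψ (2*t - y)) 2 volume := hdψ2.comp_measurePreserving hmp
  have hdφ2 : MemLp (reflLD dψ t) 2 volume := by
    refine MemLp.mono (hdψ2.norm.add hdψσ2'.norm) hdφm (ae_of_all _ ?_)
    intro y
    have h1 : ‖reflLD dψ t y‖ ≤ |dψ y| + |dψ (2*t - y)| := by
      simp only [reflLD, Real.norm_eq_abs]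
      split_ifs
      · exact le_add_of_nonneg_right (abs_nonneg _)
      · rw [abs_neg]; exact le_add_of_nonneg_left (abs_nonneg _)
    refine h1.trans ?_
    simp only [Pi.add_apply, Real.norm_eq_abs]
    exact le_abs_self _
  have hii : ∀ a b : ℝ, IntervalIntegrable (reflLD dψ t) volume a b :=
    fun a b => memℒp_two_intervalIntegrable hdφ2 a b
  -- FTC
  have hsub : ∀ a b : ℝ, ∫ s in a..b, dψ s = ψ b - ψ a :=
    MemH1.integral_sub ⟨hψ2, hdψ2, hftc⟩
  have ftc1 : ∀ x : ℝ, ∫ s in t..x, reflLD dψ t s = reflL ψ t x - reflL ψ t t := by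
    intro x
    rcases le_or_gt x t with hx | hx
    · rw [intervalIntegral.integral_symm]
      have : ∫ s in x..t, reflLD dψ t s = ∫ s in x..t, dψ s := by
        refine intervalIntegral.integral_congr ?_
        intro s hs
        rw [uIcc_of_le hx] at hs
        simp [reflLD, hs.2]
      rw [this, hsub x t]
      simp only [reflL, if_pos hx, if_pos (le_refl t)]
      ring
    · have : ∫ s in t..x, reflLD dψ t s = ∫ s in t..x, -dψ (2*t - s) := by
        refine intervalIntegral.integral_congr_ae ?_
        filter_upwards [] with s hs
        rw [uIoc_of_le hx.le] at hs
        simp [reflLD, not_le.mpr hs.1]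
      rw [this, intervalIntegral.integral_neg, intervalIntegral.integral_comp_sub_left dψ (2*t)]
      have h2t : 2*t - t = t := by ring
      rw [h2t, hsub (2*t - x) t]
      simp only [reflL, if_neg (not_le.mpr hx), if_pos (le_refl t)]
      ring
  have hftcφ : ∀ x : ℝ, reflL ψ t x = reflL ψ t 0 + ∫ s in (0:ℝ)..x, reflLD dψ t s := by
    intro x
    have hadd : ∫ s in (0:ℝ)..x, reflLD dψ t s
        = (∫ s in (0:ℝ)..t, reflLD dψ t s) + ∫ s in t..x, reflLD dψ t s :=
      (intervalIntegral.integral_add_adjacent_intervals (hii 0 t) (hii t x)).symm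
    have h0t : ∫ s in (0:ℝ)..t, reflLD dψ t s = reflL ψ t t - reflL ψ t 0 := by
      rw [intervalIntegral.integral_symm]
      rw [ftc1 0]
      ring
    rw [hadd, h0t, ftc1 x]; ring
  -- nonnegativity
  have hφpos : ∀ y, 0 ≤ reflL ψ t y := by
    intro y; simp only [reflL]; split_ifs <;> exact hpos _
  -- integrability
  have hψσint : Integrable (fun y => ψ (2*t - y)) volume :=
    (hmp.integrable_comp_emb hemb).2 hint
  have hφint : Integrable (reflL ψ t) volume := by
    refine Integrable.mono' (hint.norm.add hψσint.norm) hφc.aestronglyMeasurable (ae_of_all _ ?_)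
    intro y
    have h1 : ‖reflL ψ t y‖ ≤ |ψ y| + |ψ (2*t - y)| := by
      simp only [reflL, Real.norm_eq_abs]
      split_ifs
      · exact le_add_of_nonneg_right (abs_nonneg _)
      · exact le_add_of_nonneg_left (abs_nonneg _)
    refine h1.trans ?_
    simp only [Pi.add_apply, Real.norm_eq_abs]
    exact le_refl _
  -- mass
  have hφmass : ∫ y, reflL ψ t y = 2 * ∫ y in Iic t, ψ y := by
    rw [← integral_add_compl (measurableSet_Iic (a := t)) hφint, compl_Iic]
    have h1 : ∫ y in Iic t, reflL ψ t y = ∫ y in Iic t, ψ y := by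
      refine setIntegral_congr_fun measurableSet_Iic ?_
      intro y hy; simp [reflL, hy, mem_Iic.mp hy]
    have h2 : ∫ y in Ioi t, reflL ψ t y = ∫ y in Iic t, ψ y := by
      rw [show ∫ y in Ioi t, reflL ψ t y = ∫ y in Ioi t, ψ (2*t - y) from
        setIntegral_congr_fun measurableSet_Ioi fun y hy => by
          simp [reflL, not_le.mpr (mem_Ioi.mp hy)]]
      exact setint_reflect t ψ
    rw [h1, h2]; ring
  -- energy
  have hφen : phaseEnergy c (reflL ψ t) (reflLD dψ t) = 2 * ∫⁻ y in Iic t, eDen c ψ dψ y := by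
    rw [phaseEnergy_eq, ← lintegral_add_compl (f := eDen c (reflL ψ t) (reflLD dψ t))
      (measurableSet_Iic (a := t)), compl_Iic]
    have h1 : ∫⁻ y in Iic t, eDen c (reflL ψ t) (reflLD dψ t) y = ∫⁻ y in Iic t, eDen c ψ dψ y := by
      refine setLIntegral_congr_fun measurableSet_Iic ?_
      intro y hy; simp [eDen, reflL, reflLD, mem_Iic.mp hy]
    have h2 : ∫⁻ y in Ioi t, eDen c (reflL ψ t) (reflLD dψ t) y = ∫⁻ y in Iic t, eDen c ψ dψ y := by
      have : ∫⁻ y in Ioi t, eDen c (reflL ψ t) (reflLD dψ t) y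
          = ∫⁻ y in Ioi t, eDen c ψ dψ (2*t - y) := by
        refine setLIntegral_congr_fun measurableSet_Ioi ?_
        intro y hy
        have hy' := not_le.mpr (mem_Ioi.mp hy)
        simp only [eDen, reflL, reflLD, if_neg hy']
        rw [neg_pow]
        norm_num
      rw [this]
      exact setlint_reflect t (eDen c ψ dψ)
    rw [h1, h2, two_mul]
  exact ⟨⟨⟨hφ2, hdφ2, hftcφ⟩, hφpos, hφint, hφmass⟩, hφen⟩

end Reflect

section Mirror

lemma preim_Ici (t : ℝ) : (fun y : ℝ => 2*t - y) ⁻¹' (Ici t) = Iic t := by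
  ext y; simp only [mem_preimage, mem_Iic, mem_Ici]; constructor <;> intro h <;> linarith

lemma setint_reflect' (t : ℝ) (ψ : ℝ → ℝ) :
    ∫ y in Iic t, ψ (2*t - y) = ∫ y in Ici t, ψ y := by
  rw [← preim_Ici t, (Measure.measurePreserving_sub_left volume (2*t)).setIntegral_preimage_emb
    (MeasurableEquiv.subLeft (2*t)).measurableEmbedding ψ (Ici t)]

lemma setlint_reflect' (t : ℝ) (e : ℝ → ℝ≥0∞) :
    ∫⁻ y in Iic t, e (2*t - y) = ∫⁻ y in Ici t, e y := by
  rw [← preim_Ici t, (Measure.measurePreserving_sub_left volume (2*t)).setLIntegral_comp_preimage_emb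
    (MeasurableEquiv.subLeft (2*t)).measurableEmbedding e (Ici t)]

lemma mirror_feas {ψ dψ : ℝ → ℝ} {w : ℝ} (hf : Feas ψ dψ w) (t : ℝ) :
    Feas (fun y => ψ (2*t - y)) (fun y => -dψ (2*t - y)) w := by
  obtain ⟨⟨hψ2, hdψ2, hftc⟩, hpos, hint, hmass⟩ := hf
  have hmp : MeasurePreserving (fun y : ℝ => 2*t - y) volume volume :=
    Measure.measurePreserving_sub_left volume (2*t)
  have hemb : MeasurableEmbedding (fun y : ℝ => 2*t - y) :=
    (MeasurableEquiv.subLeft (2*t)).measurableEmbedding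
  have hsub : ∀ a b : ℝ, ∫ s in a..b, dψ s = ψ b - ψ a :=
    MemH1.integral_sub ⟨hψ2, hdψ2, hftc⟩
  refine ⟨⟨hψ2.comp_measurePreserving hmp, (hdψ2.comp_measurePreserving hmp).neg, ?_⟩,
    fun y => hpos _, (hmp.integrable_comp_emb hemb).2 hint, ?_⟩
  · intro x
    have : ∫ s in (0:ℝ)..x, -dψ (2*t - s) = -∫ s in (0:ℝ)..x, dψ (2*t - s) :=
      intervalIntegral.integral_neg
    rw [this, intervalIntegral.integral_comp_sub_left dψ (2*t)]
    have h0 : 2*t - 0 = 2*t := by ring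
    rw [h0, hsub (2*t - x) (2*t)]
    ring
  · rw [(hmp.integral_comp hemb (fun y => ψ y))]
    exact hmass

end Mirror

section MassFun

lemma mass_continuous {ψ : ℝ → ℝ} (hint : Integrable ψ) :
    Continuous (fun t => ∫ y in Iic t, ψ y) := by
  have key : ∀ t : ℝ, ∫ y in Iic t, ψ y = (∫ y in Iic 0, ψ y) + ∫ y in (0:ℝ)..t, ψ y := by
    intro t
    have := intervalIntegral.integral_Iic_sub_Iic (hint.integrableOn (s := Iic 0))
      (hint.integrableOn (s := Iic t))
    linarith
  rw [funext key]
  refine continuous_const.add (intervalIntegral.continuous_primitive (fun a b => ?_) 0)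
  rw [intervalIntegrable_iff]
  exact hint.integrableOn

lemma mass_tendsto_atTop {ψ : ℝ → ℝ} (hint : Integrable ψ) :
    Tendsto (fun t => ∫ y in Iic t, ψ y) atTop (𝓝 (∫ y, ψ y)) := by
  have heq : ∀ t : ℝ, ∫ y in Iic t, ψ y = ∫ y, (Iic t).indicator ψ y := by
    intro t; rw [integral_indicator measurableSet_Iic]
  simp_rw [heq]
  refine tendsto_integral_filter_of_dominated_convergence (fun y => ‖ψ y‖)
    (Eventually.of_forall fun t => hint.aestronglyMeasurable.indicator measurableSet_Iic)
    (Eventually.of_forall fun t => ae_of_all _ fun y => norm_indicator_le_norm_self ψ y)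
    hint.norm (ae_of_all _ fun y => ?_)
  refine Tendsto.congr' ?_ tendsto_const_nhds
  filter_upwards [eventually_ge_atTop y] with t hty
  exact (indicator_of_mem (mem_Iic.mpr hty) ψ).symm

lemma mass_tendsto_atBot {ψ : ℝ → ℝ} (hint : Integrable ψ) :
    Tendsto (fun t => ∫ y in Iic t, ψ y) atBot (𝓝 0) := by
  have heq : ∀ t : ℝ, ∫ y in Iic t, ψ y = ∫ y, (Iic t).indicator ψ y := by
    intro t; rw [integral_indicator measurableSet_Iic]
  simp_rw [heq]
  have h0 : (0:ℝ) = ∫ y : ℝ, (0:ℝ) := by simp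
  rw [h0]
  refine tendsto_integral_filter_of_dominated_convergence (fun y => ‖ψ y‖)
    (Eventually.of_forall fun t => hint.aestronglyMeasurable.indicator measurableSet_Iic)
    (Eventually.of_forall fun t => ae_of_all _ fun y => norm_indicator_le_norm_self ψ y)
    hint.norm (ae_of_all _ fun y => ?_)
  refine Tendsto.congr' ?_ tendsto_const_nhds
  filter_upwards [eventually_lt_atBot y] with t hty
  exact (indicator_of_notMem (fun hm => absurd (mem_Iic.mp hm) (not_le.mpr hty)) ψ).symm

lemma exists_cut {ψ : ℝ → ℝ} (hint : Integrable ψ) {w u : ℝ}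
    (hmass : ∫ y, ψ y = w) (hu0 : 0 < u) (huw : u < w) :
    ∃ t : ℝ, ∫ y in Iic t, ψ y = u := by
  obtain ⟨T₁, hT₁⟩ := eventually_atBot.mp ((mass_tendsto_atBot hint).eventually_lt_const hu0)
  obtain ⟨T₂, hT₂⟩ := eventually_atTop.mp
    ((mass_tendsto_atTop hint).eventually_const_lt (hmass ▸ huw))
  set a := min T₁ T₂
  set b := max T₁ T₂
  have hab : a ≤ b := min_le_max
  have h1 : (∫ y in Iic a, ψ y) < u := hT₁ a (min_le_left _ _)
  have h2 : u < ∫ y in Iic b, ψ y := hT₂ b (le_max_right _ _)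
  have := intermediate_value_Icc hab (mass_continuous hint).continuousOn
  obtain ⟨t, _, ht⟩ := this ⟨h1.le, h2.le⟩
  exact ⟨t, ht⟩

end MassFun

section Midpoint

lemma energy_split (c ψ dψ : ℝ → ℝ) (t : ℝ) :
    (∫⁻ y in Iic t, eDen c ψ dψ y) + (∫⁻ y in Ici t, eDen c ψ dψ y)
      = phaseEnergy c ψ dψ := by
  have hae : (Ioi t : Set ℝ) =ᵐ[volume] Ici t := Ioi_ae_eq_Ici
  have h2 : (∫⁻ y in Ici t, eDen c ψ dψ y) = ∫⁻ y in Ioi t, eDen c ψ dψ y :=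
    (setLIntegral_congr hae).symm
  rw [h2, phaseEnergy_eq, ← compl_Iic]
  exact lintegral_add_compl _ measurableSet_Iic

lemma tauC_le_double_left {c ψ dψ : ℝ → ℝ} {w : ℝ} (hf : Feas ψ dψ w) (t : ℝ) :
    tauC c (2 * ∫ y in Iic t, ψ y) ≤ 2 * ∫⁻ y in Iic t, eDen c ψ dψ y := by
  obtain ⟨hfeas, hen⟩ := reflect_left (c := c) hf t
  exact (tauC_le_energy c hfeas).trans (le_of_eq hen)

lemma tauC_le_double_right {c ψ dψ : ℝ → ℝ} {w : ℝ} (hf : Feas ψ dψ w) (t : ℝ) :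
    tauC c (2 * ∫ y in Ici t, ψ y) ≤ 2 * ∫⁻ y in Ici t, eDen c ψ dψ y := by
  have hm := mirror_feas hf t
  obtain ⟨hfeas, hen⟩ := reflect_left (c := c) hm t
  have hmass : ∫ y in Iic t, ψ (2*t - y) = ∫ y in Ici t, ψ y := setint_reflect' t ψ
  have henre : (∫⁻ y in Iic t, eDen c (fun y => ψ (2*t - y)) (fun y => -dψ (2*t - y)) y)
      = ∫⁻ y in Ici t, eDen c ψ dψ y := by
    have hptw : ∀ y : ℝ, eDen c (fun y => ψ (2*t - y)) (fun y => -dψ (2*t - y)) y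
        = eDen c ψ dψ (2*t - y) := by
      intro y
      simp only [eDen]
      rw [neg_pow]
      norm_num
    simp_rw [hptw]
    exact setlint_reflect' t (eDen c ψ dψ)
  rw [hmass] at hfeas
  rw [henre] at hen
  exact (tauC_le_energy c hfeas).trans (le_of_eq hen)

lemma tauC_midpoint {c : ℝ → ℝ} {u v : ℝ} (hu : 0 < u) (hv : 0 < v)
    (hfin' : tauC c ((u + v)/2) ≠ ⊤) :
    tauC c u + tauC c v ≤ 2 * tauC c ((u + v)/2) := by
  set w : ℝ := (u + v)/2 with hw
  refine ENNReal.le_of_forall_pos_le_add fun ε hε _ => ?_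
  have hδ : tauC c w < tauC c w + (ε : ℝ≥0∞)/2 := by
    refine ENNReal.lt_add_right hfin' ?_
    simp [ENNReal.div_eq_zero_iff, hε.ne']
  obtain ⟨ψ, dψ, hfeas, hE⟩ := exists_feas_of_lt hδ
  obtain ⟨t, ht⟩ := exists_cut hfeas.2.2.1 hfeas.2.2.2 (by positivity : (0:ℝ) < u/2)
    (by rw [hw]; linarith)
  have hIci : ∫ y in Ici t, ψ y = v/2 := by
    have hsplit : (∫ y in Iic t, ψ y) + ∫ y in Ioi t, ψ y = w := by
      rw [← hfeas.2.2.2, ← integral_add_compl (measurableSet_Iic (a := t)) hfeas.2.2.1, compl_Iic]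
    have : ∫ y in Ioi t, ψ y = ∫ y in Ici t, ψ y := setIntegral_congr_set Ioi_ae_eq_Ici
    rw [this] at hsplit
    rw [hw] at hsplit
    linarith [ht]
  have h1 := tauC_le_double_left (c := c) hfeas t
  have h2 := tauC_le_double_right (c := c) hfeas t
  rw [ht] at h1
  rw [hIci] at h2
  have hu' : 2 * (u/2) = u := by ring
  have hv' : 2 * (v/2) = v := by ring
  rw [hu'] at h1
  rw [hv'] at h2
  calc tauC c u + tauC c v
      ≤ 2 * (∫⁻ y in Iic t, eDen c ψ dψ y) + 2 * ∫⁻ y in Ici t, eDen c ψ dψ y :=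
        add_le_add h1 h2
    _ = 2 * ((∫⁻ y in Iic t, eDen c ψ dψ y) + ∫⁻ y in Ici t, eDen c ψ dψ y) := by ring
    _ = 2 * phaseEnergy c ψ dψ := by rw [energy_split]
    _ ≤ 2 * (tauC c w + (ε : ℝ≥0∞)/2) := by
        exact mul_le_mul_right hE.le 2
    _ = 2 * tauC c w + ε := by
        rw [mul_add, ENNReal.mul_div_cancel' (by norm_num) (by norm_num)]

end Midpoint
section RealLemmas

variable {τ : ℝ → ℝ}

lemma combo_pos {lam a b : ℝ} (hl0 : 0 ≤ lam) (hl1 : lam ≤ 1) (ha : 0 < a) (hb : 0 < b) :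
    0 < lam * a + (1 - lam) * b := by
  rcases eq_or_lt_of_le hl0 with h | h
  · rw [← h]; simpa using hb
  · have h1 : 0 < lam * a := mul_pos h ha
    have h2 : 0 ≤ (1 - lam) * b := mul_nonneg (by linarith) hb.le
    linarith

lemma tau_mono (h0 : τ 0 = 0) (hnn : ∀ w, 0 ≤ τ w)
    (hmid : ∀ u v : ℝ, 0 < u → 0 < v → τ u + τ v ≤ 2 * τ ((u + v) / 2)) :
    ∀ a b : ℝ, 0 ≤ a → a ≤ b → τ a ≤ τ b := by
  have key : ∀ n : ℕ, ∀ a b : ℝ, 0 < a → a ≤ b → (1 - (1/2 : ℝ)^n) * τ a ≤ τ b := by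
    intro n
    induction n with
    | zero => intro a b _ _; simpa using hnn b
    | succ n IH =>
      intro a b ha hab
      have h2 := hmid a (2*b - a) ha (by linarith)
      rw [show (a + (2*b - a))/2 = b by ring] at h2
      have h3 := IH a (2*b - a) ha (by linarith)
      have hq : (1/2 : ℝ)^(n+1) = (1/2)^n * (1/2) := pow_succ _ _
      rw [hq]
      nlinarith [h2, h3]
  intro a b ha hab
  rcases eq_or_lt_of_le ha with h | h
  · rw [← h, h0]; exact hnn b
  · have hlim : Tendsto (fun n : ℕ => (1 - (1/2 : ℝ)^n) * τ a) atTop (𝓝 ((1 - 0) * τ a)) := by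
      exact (tendsto_const_nhds.sub (tendsto_pow_atTop_nhds_zero_of_lt_one (by norm_num)
        (by norm_num))).mul tendsto_const_nhds
    rw [show (1 - (0:ℝ)) * τ a = τ a by ring] at hlim
    exact le_of_tendsto' hlim (fun n => key n a b h hab)

lemma tau_dyadic (hmid : ∀ u v : ℝ, 0 < u → 0 < v → τ u + τ v ≤ 2 * τ ((u + v) / 2)) :
    ∀ n k : ℕ, k ≤ 2^n → ∀ a b : ℝ, 0 < a → 0 < b →
      ((k : ℝ)/2^n) * τ a + (1 - (k : ℝ)/2^n) * τ b
        ≤ τ (((k : ℝ)/2^n) * a + (1 - (k : ℝ)/2^n) * b) := by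
  intro n
  induction n with
  | zero =>
    intro k hk a b _ _
    interval_cases k
    · norm_num
    · norm_num
  | succ n IH =>
    intro k hk a b ha hb
    have hpow : (0:ℝ) < 2^n := by positivity
    have hpow' : (0:ℝ) < 2^(n+1) := by positivity
    rcases Nat.even_or_odd k with ⟨j, hj⟩ | ⟨j, hj⟩
    · have hj' : j ≤ 2^n := by omega
      have hco : ((k : ℝ)/2^(n+1)) = (j : ℝ)/2^n := by
        subst hj; push_cast; rw [pow_succ]; field_simp; ring
      rw [hco]
      exact IH j hj' a b ha hb
    · have hj1 : j + 1 ≤ 2^n := by omega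
      have hj0 : j ≤ 2^n := by omega
      have hl1 : (0:ℝ) ≤ (j : ℝ)/2^n := by positivity
      have hl2 : (j : ℝ)/2^n ≤ 1 := by
        rw [div_le_one hpow]
        have : ((j:ℝ)) ≤ ((2^n : ℕ) : ℝ) := by exact_mod_cast hj0
        simpa using this
      have hm1 : (0:ℝ) ≤ ((j:ℝ)+1)/2^n := by positivity
      have hm2 : ((j:ℝ)+1)/2^n ≤ 1 := by
        rw [div_le_one hpow]
        have : ((j:ℝ)+1) ≤ ((2^n : ℕ) : ℝ) := by exact_mod_cast hj1
        simpa using this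
      have step : ∀ l1 l2 : ℝ, 0 ≤ l1 → l1 ≤ 1 → 0 ≤ l2 → l2 ≤ 1 →
          (l1 * τ a + (1 - l1) * τ b ≤ τ (l1 * a + (1 - l1) * b)) →
          (l2 * τ a + (1 - l2) * τ b ≤ τ (l2 * a + (1 - l2) * b)) →
          ((l1 + l2)/2) * τ a + (1 - (l1 + l2)/2) * τ b
            ≤ τ (((l1 + l2)/2) * a + (1 - (l1 + l2)/2) * b) := by
        intro l1 l2 h10 h11 h20 h21 hin1 hin2
        have hp1 : 0 < l1 * a + (1 - l1) * b := combo_pos h10 h11 ha hb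
        have hp2 : 0 < l2 * a + (1 - l2) * b := combo_pos h20 h21 ha hb
        have hm := hmid _ _ hp1 hp2
        rw [show ((l1 * a + (1 - l1) * b) + (l2 * a + (1 - l2) * b))/2
          = ((l1 + l2)/2) * a + (1 - (l1 + l2)/2) * b by ring] at hm
        linarith
      have h1 := IH j hj0 a b ha hb
      have h2' := IH (j+1) hj1 a b ha hb
      push_cast at h2'
      have hcoef : ((k:ℝ)/2^(n+1)) = (((j:ℝ)/2^n) + (((j:ℝ)+1)/2^n))/2 := by
        subst hj; push_cast; rw [pow_succ]; field_simp; ring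
      rw [hcoef]
      exact step _ _ hl1 hl2 hm1 hm2 h1 h2'

lemma tau_conc_pos (hnn : ∀ w, 0 ≤ τ w)
    (hmono : ∀ a b : ℝ, 0 ≤ a → a ≤ b → τ a ≤ τ b)
    (hmid : ∀ u v : ℝ, 0 < u → 0 < v → τ u + τ v ≤ 2 * τ ((u + v) / 2)) :
    ∀ a b lam : ℝ, 0 < a → 0 < b → 0 ≤ lam → lam ≤ 1 →
      lam * τ a + (1 - lam) * τ b ≤ τ (lam * a + (1 - lam) * b) := by
  have H : ∀ a b lam : ℝ, 0 < a → 0 < b → a ≤ b → 0 ≤ lam → lam ≤ 1 →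
      lam * τ a + (1 - lam) * τ b ≤ τ (lam * a + (1 - lam) * b) := by
    intro a b lam ha hb hab hl0 hl1
    set μ : ℕ → ℝ := fun n => (⌈lam * 2^n⌉₊ : ℝ)/2^n with hμ
    have hpow : ∀ n : ℕ, (0:ℝ) < 2^n := fun n => by positivity
    have hknn : ∀ n : ℕ, (0:ℝ) ≤ lam * 2^n := fun n => mul_nonneg hl0 (hpow n).le
    have hkle : ∀ n : ℕ, ⌈lam * 2^n⌉₊ ≤ 2^n := by
      intro n
      rw [Nat.ceil_le]
      push_cast
      calc lam * 2^n ≤ 1 * 2^n := by nlinarith [hpow n]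
        _ = 2^n := by ring
    have hμge : ∀ n, lam ≤ μ n := by
      intro n
      rw [hμ]
      rw [le_div_iff₀ (hpow n)]
      exact Nat.le_ceil _
    have hμle : ∀ n, μ n ≤ 1 := by
      intro n
      rw [hμ, div_le_one (hpow n)]
      have := hkle n
      calc (⌈lam * 2^n⌉₊ : ℝ) ≤ ((2^n : ℕ) : ℝ) := by exact_mod_cast this
        _ = 2^n := by push_cast; ring
    have hμlt : ∀ n, μ n < lam + (1/2)^n := by
      intro n
      rw [hμ, div_lt_iff₀ (hpow n)]
      have := Nat.ceil_lt_add_one (hknn n)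
      calc (⌈lam * 2^n⌉₊ : ℝ) < lam * 2^n + 1 := this
        _ = (lam + (1/2)^n) * 2^n := by rw [div_pow, one_pow]; field_simp
    have hμtend : Tendsto μ atTop (𝓝 lam) := by
      have hup : Tendsto (fun n : ℕ => lam + (1/2 : ℝ)^n) atTop (𝓝 (lam + 0)) :=
        tendsto_const_nhds.add (tendsto_pow_atTop_nhds_zero_of_lt_one (by norm_num) (by norm_num))
      rw [add_zero] at hup
      exact tendsto_of_tendsto_of_tendsto_of_le_of_le tendsto_const_nhds hup hμge
        (fun n => (hμlt n).le)
    have hbound : ∀ n, μ n * τ a + (1 - μ n) * τ b ≤ τ (lam * a + (1 - lam) * b) := by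
      intro n
      have hd := tau_dyadic hmid n ⌈lam * 2^n⌉₊ (hkle n) a b ha hb
      have hcombo_le : μ n * a + (1 - μ n) * b ≤ lam * a + (1 - lam) * b := by
        nlinarith [hμge n, hab]
      have hcombo_nn : 0 ≤ μ n * a + (1 - μ n) * b :=
        (combo_pos (hl0.trans (hμge n)) (hμle n) ha hb).le
      calc μ n * τ a + (1 - μ n) * τ b ≤ τ (μ n * a + (1 - μ n) * b) := hd
        _ ≤ τ (lam * a + (1 - lam) * b) := hmono _ _ hcombo_nn hcombo_le
    have htendval : Tendsto (fun n => μ n * τ a + (1 - μ n) * τ b) atTop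
        (𝓝 (lam * τ a + (1 - lam) * τ b)) :=
      ((hμtend.mul tendsto_const_nhds).add ((tendsto_const_nhds.sub hμtend).mul
        tendsto_const_nhds))
    exact le_of_tendsto' htendval hbound
  intro a b lam ha hb hl0 hl1
  rcases le_total a b with hab | hab
  · exact H a b lam ha hb hab hl0 hl1
  · have := H b a (1 - lam) hb ha hab (by linarith) (by linarith)
    rw [show (1 : ℝ) - (1 - lam) = lam by ring] at this
    rw [show (1 - lam) * b + lam * a = lam * a + (1 - lam) * b by ring] at this
    linarith

lemma tau_conc (h0 : τ 0 = 0) (hnn : ∀ w, 0 ≤ τ w)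
    (hmono : ∀ a b : ℝ, 0 ≤ a → a ≤ b → τ a ≤ τ b)
    (hmid : ∀ u v : ℝ, 0 < u → 0 < v → τ u + τ v ≤ 2 * τ ((u + v) / 2)) :
    ∀ a b lam : ℝ, 0 ≤ a → 0 ≤ b → 0 ≤ lam → lam ≤ 1 →
      lam * τ a + (1 - lam) * τ b ≤ τ (lam * a + (1 - lam) * b) := by
  -- first, the case of an endpoint at zero
  have HZ : ∀ b mu : ℝ, 0 < b → 0 ≤ mu → mu ≤ 1 → mu * τ b ≤ τ (mu * b) := by
    intro b mu hb hmu0 hmu1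
    rcases eq_or_lt_of_le hmu0 with h | hmu0'
    · rw [← h, zero_mul, zero_mul]; exact hnn 0
    rcases eq_or_lt_of_le hmu1 with h | hmu1'
    · rw [h, one_mul, one_mul]
    have hwb : mu * b < b := by nlinarith
    have hw0 : 0 < mu * b := mul_pos hmu0' hb
    have key : ∀ u' : ℝ, 0 < u' → u' < mu * b →
        ((mu * b - u')/(b - u')) * τ b ≤ τ (mu * b) := by
      intro u' hu'0 hu'w
      have hub : u' < b := hu'w.trans hwb
      have hne : b - u' ≠ 0 := ne_of_gt (by linarith)
      have hl0' : 0 ≤ (b - mu * b)/(b - u') := by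
        apply div_nonneg <;> linarith
      have hl1' : (b - mu * b)/(b - u') ≤ 1 := by
        rw [div_le_one (by linarith)]
        linarith
      have hcp := tau_conc_pos hnn hmono hmid u' b ((b - mu * b)/(b - u')) hu'0 hb hl0' hl1'
      have hcombo : ((b - mu * b)/(b - u')) * u' + (1 - (b - mu * b)/(b - u')) * b = mu * b := by
        field_simp
        ring
      rw [hcombo] at hcp
      have h1 : (1 : ℝ) - (b - mu * b)/(b - u') = (mu * b - u')/(b - u') := by
        field_simp
        ring
      rw [h1] at hcp
      nlinarith [hnn u', mul_nonneg hl0' (hnn u'), hcp]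
    set u : ℕ → ℝ := fun n => (mu * b) / (n + 2) with hu
    have hu0 : ∀ n : ℕ, 0 < u n := fun n => by positivity
    have huw : ∀ n : ℕ, u n < mu * b := by
      intro n
      rw [hu]
      rw [div_lt_iff₀ (by positivity)]
      nlinarith [hw0]
    have htendu : Tendsto u atTop (𝓝 0) := by
      rw [hu]
      apply Tendsto.div_atTop tendsto_const_nhds
      exact tendsto_atTop_add_const_right atTop 2 tendsto_natCast_atTop_atTop
    have htendc : Tendsto (fun n => ((mu * b - u n)/(b - u n)) * τ b) atTop (𝓝 (mu * τ b)) := by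
      have h1 : Tendsto (fun n => (mu * b - u n)/(b - u n)) atTop (𝓝 ((mu * b - 0)/(b - 0))) :=
        (tendsto_const_nhds.sub htendu).div (tendsto_const_nhds.sub htendu) (by simpa using hb.ne')
      have h2 : (mu * b - 0)/(b - 0) = mu := by
        rw [sub_zero, sub_zero, mul_div_assoc, div_self hb.ne', mul_one]
      rw [h2] at h1
      exact h1.mul tendsto_const_nhds
    exact le_of_tendsto' htendc (fun n => key (u n) (hu0 n) (huw n))
  intro a b lam ha hb hl0 hl1
  rcases eq_or_lt_of_le ha with h | ha'
  · rcases eq_or_lt_of_le hb with h' | hb'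
    · rw [← h, ← h', h0]
      simpa using hnn 0
    · rw [← h, h0]
      have := HZ b (1 - lam) hb' (by linarith) (by linarith)
      calc lam * 0 + (1 - lam) * τ b = (1 - lam) * τ b := by ring
        _ ≤ τ ((1 - lam) * b) := this
        _ = τ (lam * 0 + (1 - lam) * b) := by ring_nf
  · rcases eq_or_lt_of_le hb with h' | hb'
    · rw [← h', h0]
      have := HZ a lam ha' hl0 hl1
      calc lam * τ a + (1 - lam) * 0 = lam * τ a := by ring
        _ ≤ τ (lam * a) := this
        _ = τ (lam * a + (1 - lam) * 0) := by ring_nf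
    · exact tau_conc_pos hnn hmono hmid a b lam ha' hb' hl0 hl1

end RealLemmas

section ContZero

lemma mass_mono {ψ : ℝ → ℝ} (hint : Integrable ψ) (hpos : ∀ y, 0 ≤ ψ y) :
    Monotone (fun t => ∫ y in Iic t, ψ y) := by
  intro s t hst
  refine setIntegral_mono_set hint.integrableOn (Eventually.of_forall fun y => hpos y) ?_
  exact HasSubset.Subset.eventuallyLE (Iic_subset_Iic.mpr hst)

lemma cont_zero_of_ae_zero {f : ℝ → ℝ} (hf : Continuous f) {a : ℝ}
    (h : ∀ᵐ y ∂(volume.restrict (Iic a)), f y = 0) : ∀ y ≤ a, f y = 0 := by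
  intro y0 hy0
  by_contra hne
  have hd : 0 < |f y0| := abs_pos.mpr hne
  obtain ⟨δ, hδ0, hδ⟩ := Metric.continuousAt_iff.mp hf.continuousAt _ hd
  have h2 : ∀ᵐ y ∂(volume : Measure ℝ), y ∈ Iic a → f y = 0 :=
    (ae_restrict_iff' measurableSet_Iic).mp h
  rw [ae_iff] at h2
  have hsub : Ioc (y0 - δ/2) y0 ⊆ {y | ¬(y ∈ Iic a → f y = 0)} := by
    intro x hx
    simp only [mem_setOf_eq, _root_.not_imp]
    refine ⟨mem_Iic.mpr (hx.2.trans hy0), fun hfx => ?_⟩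
    have hdist : dist x y0 < δ := by
      rw [Real.dist_eq, abs_lt]
      constructor
      · linarith [hx.1]
      · linarith [hx.2, hδ0]
    have hlt := hδ hdist
    rw [hfx, Real.dist_eq, zero_sub, abs_neg] at hlt
    exact absurd hlt (lt_irrefl _)
  have hle := measure_mono_null hsub h2
  rw [Real.volume_Ioc] at hle
  have : y0 - (y0 - δ/2) = δ/2 := by ring
  rw [this] at hle
  have := ENNReal.ofReal_eq_zero.mp hle
  linarith

lemma eDen_aemeasurable {c ψ dψ : ℝ → ℝ} (hc : Measurable c) (hψc : Continuous ψ)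
    (hdψ : AEMeasurable dψ (volume : Measure ℝ)) :
    AEMeasurable (eDen c ψ dψ) (volume : Measure ℝ) := by
  apply ENNReal.measurable_ofReal.comp_aemeasurable
  apply AEMeasurable.add
  · have h2 : AEMeasurable (fun y => dψ y ^ 2) (volume : Measure ℝ) := by
      simp_rw [pow_two]
      exact hdψ.mul hdψ
    exact h2.const_mul _
  · exact (hc.comp hψc.measurable).aemeasurable

lemma tendsto_lintegral_Iic_neg_nat {e : ℝ → ℝ≥0∞} (he : AEMeasurable e (volume : Measure ℝ))
    (hfin : ∫⁻ y, e y ≠ ⊤) :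
    Tendsto (fun n : ℕ => ∫⁻ y in Iic (-(n:ℝ)), e y) atTop (𝓝 0) := by
  have heq : ∀ t : ℝ, ∫⁻ y in Iic t, e y = ∫⁻ y, (Iic t).indicator e y := by
    intro t; rw [lintegral_indicator measurableSet_Iic]
  simp_rw [heq]
  have h0 : (0:ℝ≥0∞) = ∫⁻ y : ℝ, (fun _ => (0:ℝ≥0∞)) y := by simp
  rw [h0]
  refine tendsto_lintegral_of_dominated_convergence' e
    (fun n => he.indicator measurableSet_Iic)
    (fun n => ae_of_all _ fun y => Set.indicator_le_self _ _ y)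
    hfin (ae_of_all _ fun y => ?_)
  obtain ⟨N, hN⟩ := exists_nat_gt (-y)
  refine Tendsto.congr' ?_ tendsto_const_nhds
  filter_upwards [eventually_ge_atTop N] with n hn
  refine (indicator_of_notMem ?_ e).symm
  rw [mem_Iic, not_le]
  have : (N:ℝ) ≤ n := Nat.cast_le.mpr hn
  linarith

lemma tendsto_lintegral_Iic_add_inv {e : ℝ → ℝ≥0∞} (he : AEMeasurable e (volume : Measure ℝ))
    (hfin : ∫⁻ y, e y ≠ ⊤) (ts : ℝ) :
    Tendsto (fun n : ℕ => ∫⁻ y in Iic (ts + 1/((n:ℝ)+1)), e y) atTop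
      (𝓝 (∫⁻ y in Iic ts, e y)) := by
  have heq : ∀ t : ℝ, ∫⁻ y in Iic t, e y = ∫⁻ y, (Iic t).indicator e y := by
    intro t; rw [lintegral_indicator measurableSet_Iic]
  simp_rw [heq]
  refine tendsto_lintegral_of_dominated_convergence' e
    (fun n => he.indicator measurableSet_Iic)
    (fun n => ae_of_all _ fun y => Set.indicator_le_self _ _ y)
    hfin (ae_of_all _ fun y => ?_)
  by_cases hy : y ≤ ts
  · have hconst : ∀ n : ℕ, (Iic (ts + 1/((n:ℝ)+1))).indicator e y = e y := by
      intro n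
      refine indicator_of_mem (mem_Iic.mpr (hy.trans ?_)) e
      have : (0:ℝ) < 1/((n:ℝ)+1) := by positivity
      linarith
    simp_rw [hconst]
    rw [indicator_of_mem (mem_Iic.mpr hy)]
    exact tendsto_const_nhds
  · push_neg at hy
    obtain ⟨n0, hn0⟩ := exists_nat_one_div_lt (sub_pos.mpr hy)
    rw [indicator_of_notMem (by rw [mem_Iic]; linarith) e]
    refine Tendsto.congr' ?_ tendsto_const_nhds
    filter_upwards [eventually_ge_atTop n0] with n hn
    refine (indicator_of_notMem ?_ e).symm
    rw [mem_Iic, not_le]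
    have h1 : 1/((n:ℝ)+1) ≤ 1/((n0:ℝ)+1) := by
      apply one_div_le_one_div_of_le (by positivity)
      have : (n0:ℝ) ≤ n := Nat.cast_le.mpr hn
      linarith
    linarith

end ContZero

lemma tau_cont_zero {c : ℝ → ℝ} (hc : Measurable c) (hc0 : c 0 = 0)
    (hfin : ∀ w : ℝ, 0 < w → tauC c w < ⊤)
    (τ : ℝ → ℝ) (hτ : ∀ w, τ w = (tauC c w).toReal)
    (hmono : ∀ a b : ℝ, 0 ≤ a → a ≤ b → τ a ≤ τ b) :
    ∀ ε : ℝ, 0 < ε → ∃ δ : ℝ, 0 < δ ∧ ∀ w', 0 < w' → w' < δ → τ w' ≤ ε := by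
  intro ε hε
  have hε2 : (0:ℝ≥0∞) < ENNReal.ofReal ε / 2 :=
    ENNReal.div_pos (ENNReal.ofReal_pos.mpr hε).ne' (by norm_num)
  obtain ⟨ψ, dψ, hfeas, hE⟩ := exists_feas_of_lt (hfin 1 one_pos)
  obtain ⟨⟨hψ2, hdψ2, hftc⟩, hpos, hint, hmass⟩ := hfeas
  have hfeas : Feas ψ dψ 1 := ⟨⟨hψ2, hdψ2, hftc⟩, hpos, hint, hmass⟩
  have hψc : Continuous ψ := MemH1.continuous ⟨hψ2, hdψ2, hftc⟩
  set m : ℝ → ℝ := fun t => ∫ y in Iic t, ψ y with hm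
  have hmnn : ∀ t, 0 ≤ m t := fun t => setIntegral_nonneg measurableSet_Iic fun y _ => hpos y
  have hEfin : ∫⁻ y, eDen c ψ dψ y ≠ ⊤ := by
    rw [← phaseEnergy_eq]; exact hE.ne
  -- the concluding step, common to both cases
  have conclude : ∀ t : ℝ, 0 < m t → tauC c (2 * m t) ≤ ENNReal.ofReal ε →
      ∃ δ : ℝ, 0 < δ ∧ ∀ w', 0 < w' → w' < δ → τ w' ≤ ε := by
    intro t hmt hle
    refine ⟨2 * m t, by linarith, fun w' hw0 hwδ => ?_⟩
    have h1 : τ w' ≤ τ (2 * m t) := hmono w' (2 * m t) hw0.le (by linarith)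
    have h2 : τ (2 * m t) ≤ ε := by
      rw [hτ]
      calc (tauC c (2 * m t)).toReal ≤ (ENNReal.ofReal ε).toReal :=
            ENNReal.toReal_mono (by simp) hle
        _ = ε := ENNReal.toReal_ofReal hε.le
    linarith
  set S : Set ℝ := {t | 0 < m t} with hS
  have hSne : S.Nonempty := by
    have h1 : (1:ℝ)/2 < ∫ y, ψ y := by rw [hmass]; norm_num
    obtain ⟨T, hT⟩ := ((mass_tendsto_atTop hint).eventually_const_lt h1).exists
    exact ⟨T, by simp only [hS, mem_setOf_eq]; linarith⟩
  by_cases hbb : BddBelow S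
  · -- Case B : S is bounded below; clean the derivative left of sInf S
    set ts : ℝ := sInf S with hts
    have hm0 : ∀ t' < ts, m t' = 0 := by
      intro t' ht'
      refine le_antisymm ?_ (hmnn t')
      by_contra hpos'
      push_neg at hpos'
      exact absurd (csInf_le hbb (by simpa [hS] using hpos')) (not_le.mpr ht')
    have hmts : m ts = 0 := by
      have hc1 : Tendsto m (𝓝[<] ts) (𝓝 (m ts)) :=
        ((mass_continuous hint).tendsto ts).mono_left nhdsWithin_le_nhds
      have hc2 : Tendsto m (𝓝[<] ts) (𝓝 0) := by
        refine Tendsto.congr' ?_ tendsto_const_nhds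
        filter_upwards [self_mem_nhdsWithin] with x hx
        exact (hm0 x hx).symm
      exact tendsto_nhds_unique hc1 hc2
    have hψae0 : ∀ᵐ y ∂(volume.restrict (Iic ts)), ψ y = 0 := by
      have hint' : Integrable ψ (volume.restrict (Iic ts)) := hint.restrict
      have := (integral_eq_zero_iff_of_nonneg_ae (μ := volume.restrict (Iic ts))
        (Eventually.of_forall fun y => hpos y) hint').mp hmts
      filter_upwards [this] with y hy using hy
    have hψ0 : ∀ y ≤ ts, ψ y = 0 := cont_zero_of_ae_zero hψc hψae0
    -- the cleaned derivative
    set dd : ℝ → ℝ := fun y => if y ≤ ts then 0 else dψ y with hdd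
    set g : ℝ → ℝ := fun y => if y ≤ ts then dψ y else 0 with hg
    have hdd_eq : ∀ s, dd s = dψ s - g s := by
      intro s; by_cases h : s ≤ ts <;> simp [hdd, hg, h]
    have hddm : AEStronglyMeasurable dd (volume : Measure ℝ) := by
      have h := AEStronglyMeasurable.piecewise (s := Iic ts) measurableSet_Iic
        (aestronglyMeasurable_const (μ := volume.restrict (Iic ts)) (b := (0:ℝ))) (hdψ2.aestronglyMeasurable.restrict)
      have heq : (Iic ts).piecewise (fun _ => (0:ℝ)) dψ = dd := by
        funext y
        by_cases h' : y ≤ ts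
        · rw [Set.piecewise_eq_of_mem _ _ _ (mem_Iic.mpr h')]; simp [hdd, h']
        · rw [Set.piecewise_eq_of_notMem _ _ _ (fun hm' => h' (mem_Iic.mp hm'))]
          simp [hdd, h']
      rwa [heq] at h
    have hgm : AEStronglyMeasurable g (volume : Measure ℝ) := by
      have h := AEStronglyMeasurable.piecewise (s := Iic ts) measurableSet_Iic
        (hdψ2.aestronglyMeasurable.restrict) (aestronglyMeasurable_const (μ := volume.restrict (Iic ts)ᶜ) (b := (0:ℝ)))
      have heq : (Iic ts).piecewise dψ (fun _ => (0:ℝ)) = g := by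
        funext y
        by_cases h' : y ≤ ts
        · rw [Set.piecewise_eq_of_mem _ _ _ (mem_Iic.mpr h')]; simp [hg, h']
        · rw [Set.piecewise_eq_of_notMem _ _ _ (fun hm' => h' (mem_Iic.mp hm'))]
          simp [hg, h']
      rwa [heq] at h
    have hdd2 : MemLp dd 2 volume := by
      refine MemLp.mono hdψ2 hddm (ae_of_all _ fun y => ?_)
      simp only [hdd, Real.norm_eq_abs]
      split_ifs
      · simp [abs_nonneg]
      · exact le_refl _
    have hg2 : MemLp g 2 volume := by
      refine MemLp.mono hdψ2 hgm (ae_of_all _ fun y => ?_)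
      simp only [hg, Real.norm_eq_abs]
      split_ifs
      · exact le_refl _
      · simp [abs_nonneg]
    have hgii : ∀ a b : ℝ, IntervalIntegrable g volume a b :=
      fun a b => memℒp_two_intervalIntegrable hg2 a b
    have hdψii : ∀ a b : ℝ, IntervalIntegrable dψ volume a b :=
      fun a b => memℒp_two_intervalIntegrable hdψ2 a b
    have hsub : ∀ a b : ℝ, ∫ s in a..b, dψ s = ψ b - ψ a :=
      MemH1.integral_sub ⟨hψ2, hdψ2, hftc⟩
    have hgzero : ∀ a b : ℝ, a ≤ b → ∫ s in a..b, g s = 0 := by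
      have hcase1 : ∀ a b : ℝ, a ≤ b → b ≤ ts → ∫ s in a..b, g s = 0 := by
        intro a b hab hbts
        have : ∫ s in a..b, g s = ∫ s in a..b, dψ s := by
          refine intervalIntegral.integral_congr fun s hs => ?_
          rw [uIcc_of_le hab] at hs
          simp [hg, hs.2.trans hbts]
        rw [this, hsub a b, hψ0 b hbts, hψ0 a (hab.trans hbts)]
        ring
      have hcase2 : ∀ a b : ℝ, a ≤ b → ts ≤ a → ∫ s in a..b, g s = 0 := by
        intro a b hab htsa
        have : ∫ s in a..b, g s = ∫ s in a..b, (0:ℝ) := by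
          refine intervalIntegral.integral_congr_ae ?_
          filter_upwards [] with s hs
          rw [uIoc_of_le hab] at hs
          have : ¬ s ≤ ts := by push_neg; exact lt_of_le_of_lt htsa hs.1
          simp [hg, this]
        rw [this]
        simp
      intro a b hab
      rcases le_or_gt b ts with h1 | h1
      · exact hcase1 a b hab h1
      rcases lt_or_ge a ts with h2 | h2
      · have hsplit : ∫ s in a..b, g s = (∫ s in a..ts, g s) + ∫ s in ts..b, g s :=
          (intervalIntegral.integral_add_adjacent_intervals (hgii a ts) (hgii ts b)).symm
        rw [hsplit, hcase1 a ts h2.le (le_refl ts), hcase2 ts b h1.le (le_refl ts)]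
        ring
      · exact hcase2 a b hab h2
    have hftc_dd : ∀ x : ℝ, ψ x = ψ 0 + ∫ s in (0:ℝ)..x, dd s := by
      intro x
      have hddint : ∫ s in (0:ℝ)..x, dd s = (∫ s in (0:ℝ)..x, dψ s) - ∫ s in (0:ℝ)..x, g s := by
        rw [← intervalIntegral.integral_sub (hdψii 0 x) (hgii 0 x)]
        exact intervalIntegral.integral_congr fun s _ => hdd_eq s
      have hg0x : ∫ s in (0:ℝ)..x, g s = 0 := by
        rcases le_total 0 x with h | h
        · exact hgzero 0 x h
        · rw [intervalIntegral.integral_symm, hgzero x 0 h]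
          ring
      rw [hddint, hg0x, hsub 0 x]
      ring
    have hfeas' : Feas ψ dd 1 := ⟨⟨hψ2, hdd2, hftc_dd⟩, hpos, hint, hmass⟩
    have hehat_le : ∀ y, eDen c ψ dd y ≤ eDen c ψ dψ y := by
      intro y
      simp only [eDen, hdd]
      split_ifs with h
      · exact ENNReal.ofReal_le_ofReal (by nlinarith [sq_nonneg (dψ y)])
      · exact le_refl _
    have hEhatfin : ∫⁻ y, eDen c ψ dd y ≠ ⊤ :=
      ((lintegral_mono hehat_le).trans_lt (lt_top_iff_ne_top.mpr hEfin)).ne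
    have hstar0 : ∫⁻ y in Iic ts, eDen c ψ dd y = 0 := by
      have hzero : ∀ᵐ y ∂(volume : Measure ℝ), y ∈ Iic ts → eDen c ψ dd y = 0 := by
        refine ae_of_all _ fun y hy => ?_
        have h1 : dd y = 0 := by simp [hdd, mem_Iic.mp hy]
        have h2 : ψ y = 0 := hψ0 y (mem_Iic.mp hy)
        simp [eDen, h1, h2, hc0]
      rw [setLIntegral_congr_fun_ae measurableSet_Iic hzero]
      simp
    have hAEhat : AEMeasurable (eDen c ψ dd) (volume : Measure ℝ) :=
      eDen_aemeasurable hc hψc hddm.aemeasurable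
    have htend := tendsto_lintegral_Iic_add_inv hAEhat hEhatfin ts
    rw [hstar0] at htend
    obtain ⟨n, hn⟩ := (htend.eventually_lt_const hε2).exists
    set t : ℝ := ts + 1/((n:ℝ)+1) with htdef
    have htst : ts < t := by
      rw [htdef]
      have : (0:ℝ) < 1/((n:ℝ)+1) := by positivity
      linarith
    have hmt : 0 < m t := by
      obtain ⟨s, hsS, hslt⟩ := exists_lt_of_csInf_lt hSne (by rw [← hts]; exact htst)
      have : m s ≤ m t := mass_mono hint hpos hslt.le
      have hms : 0 < m s := by simpa [hS] using hsS
      linarith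
    refine conclude t hmt ?_
    calc tauC c (2 * m t) ≤ 2 * ∫⁻ y in Iic t, eDen c ψ dd y := tauC_le_double_left hfeas' t
      _ ≤ 2 * (ENNReal.ofReal ε / 2) := mul_le_mul_right hn.le 2
      _ = ENNReal.ofReal ε := ENNReal.mul_div_cancel' (by norm_num) (by norm_num)
  · -- Case A : S is unbounded below
    have hAEe : AEMeasurable (eDen c ψ dψ) (volume : Measure ℝ) :=
      eDen_aemeasurable hc hψc hdψ2.aestronglyMeasurable.aemeasurable
    have htend := tendsto_lintegral_Iic_neg_nat hAEe hEfin
    obtain ⟨N, hN⟩ := (htend.eventually_lt_const hε2).exists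
    obtain ⟨t, htS, htlt⟩ := not_bddBelow_iff.mp hbb (-(N:ℝ))
    have hmt : 0 < m t := by simpa [hS] using htS
    refine conclude t hmt ?_
    have hEL : ∫⁻ y in Iic t, eDen c ψ dψ y ≤ ∫⁻ y in Iic (-(N:ℝ)), eDen c ψ dψ y :=
      lintegral_mono_set (Iic_subset_Iic.mpr htlt.le)
    calc tauC c (2 * m t) ≤ 2 * ∫⁻ y in Iic t, eDen c ψ dψ y := tauC_le_double_left hfeas t
      _ ≤ 2 * (ENNReal.ofReal ε / 2) := mul_le_mul_right (hEL.trans hN.le) 2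
      _ = ENNReal.ofReal ε := ENNReal.mul_div_cancel' (by norm_num) (by norm_num)


/-- the transport cost induced by a Borel measurable phase field cost
is admissible. -/
theorem induced_transport_cost_is_admissible
    (c : ℝ → ℝ) (hc : Measurable c)
    (hcnn : ∀ φ ∈ Ici (0:ℝ), 0 ≤ c φ)
    (hc0 : c 0 = 0)
    (hfin : ∀ w : ℝ, 0 < w → tauC c w < ⊤)
    (τ : ℝ → ℝ) (hτ : ∀ w, τ w = (tauC c w).toReal) :
    (∀ w ∈ Ici (0:ℝ), 0 ≤ τ w) ∧
    τ 0 = 0 ∧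
    MonotoneOn τ (Ici 0) ∧
    ConcaveOn ℝ (Ici 0) τ ∧
    ContinuousOn τ (Ici 0) := by
  have τnn : ∀ w, 0 ≤ τ w := fun w => (hτ w) ▸ ENNReal.toReal_nonneg
  have τ0 : τ 0 = 0 := by rw [hτ 0, tauC_zero hc0]; simp
  have hmidτ : ∀ u v : ℝ, 0 < u → 0 < v → τ u + τ v ≤ 2 * τ ((u + v)/2) := by
    intro u v hu hv
    have hw : (0:ℝ) < (u + v)/2 := by linarith
    have h := tauC_midpoint (c := c) hu hv (hfin _ hw).ne
    have hfu := (hfin u hu).ne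
    have hfv := (hfin v hv).ne
    have hfw := (hfin _ hw).ne
    rw [hτ u, hτ v, hτ ((u+v)/2)]
    calc (tauC c u).toReal + (tauC c v).toReal = (tauC c u + tauC c v).toReal :=
          (ENNReal.toReal_add hfu hfv).symm
      _ ≤ (2 * tauC c ((u+v)/2)).toReal :=
          ENNReal.toReal_mono (ENNReal.mul_ne_top (by norm_num) hfw) h
      _ = 2 * (tauC c ((u+v)/2)).toReal := by
          rw [ENNReal.toReal_mul]; norm_num
  have hmonoτ : ∀ a b : ℝ, 0 ≤ a → a ≤ b → τ a ≤ τ b := tau_mono τ0 τnn hmidτ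
  have hconcτ : ConcaveOn ℝ (Ici 0) τ := by
    refine ⟨convex_Ici 0, fun x hx y hy p q hp hq hpq => ?_⟩
    simp only [smul_eq_mul]
    have hq' : q = 1 - p := by linarith
    rw [hq']
    exact tau_conc τ0 τnn hmonoτ hmidτ x y p (mem_Ici.mp hx) (mem_Ici.mp hy) hp (by linarith)
  have hcontτ : ContinuousOn τ (Ioi 0) := by
    have hconvneg : ConvexOn ℝ (Ioi 0) (fun w => -τ w) := by
      have h1 : ConvexOn ℝ (Ici 0) (-τ) := hconcτ.neg
      have h2 := h1.subset Ioi_subset_Ici_self (convex_Ioi 0)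
      exact h2
    have := hconvneg.continuousOn isOpen_Ioi
    have h3 := this.neg
    simpa only [Pi.neg_def, neg_neg] using h3
  refine ⟨fun w _ => τnn w, τ0, fun a ha b hb hab => hmonoτ a b ha hab, hconcτ, ?_⟩
  intro x hx
  rcases eq_or_lt_of_le (mem_Ici.mp hx) with h | h
  · subst h
    rw [ContinuousWithinAt, τ0]
    refine tendsto_order.2 ⟨fun a ha => ?_, fun a ha => ?_⟩
    · exact Eventually.of_forall fun w => lt_of_lt_of_le ha (τnn w)
    · obtain ⟨δ, hδ0, hδ⟩ := tau_cont_zero hc hc0 hfin τ hτ hmonoτ (a/2) (by linarith)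
      have h1 : Iio δ ∈ 𝓝 (0:ℝ) := Iio_mem_nhds hδ0
      filter_upwards [mem_nhdsWithin_of_mem_nhds h1, self_mem_nhdsWithin] with w hw1 hw2
      rcases eq_or_lt_of_le (mem_Ici.mp hw2) with h' | h'
      · rw [← h', τ0]; exact ha
      · have := hδ w h' (mem_Iio.mp hw1)
        linarith
  · exact (hcontτ.continuousAt (Ioi_mem_nhds h)).continuousWithinAt
end

section
/- Let z : [0,∞) → [0,∞] be nonincreasing and lower semicontinuous, and let z^{-1}(x) = inf{ y ∈ [0,∞) : z(y) ≤ x } (with inf ∅ = ∞) be its generalized inverse. Then: (i) z^{-1} is nonincreasing and lower semicontinuous; (ii) the generalized inverse of z^{-1} equals z, i.e. (z^{-1})^{-1} = z; (iii) ∫_0^∞ z(y) dy = ∫_0^∞ z^{-1}(x) dx (both possibly infinite). -/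
open MeasureTheory Filter Set
open scoped ENNReal Topology


/-- Generalized inverse of an extended-real-valued function on `[0,∞)`:
`z⁻¹(x) = inf { y ≥ 0 | z(y) ≤ x }`, with value `∞` for the empty set. -/
noncomputable def genInvE (z : ℝ → ℝ≥0∞) (x : ℝ≥0∞) : ℝ≥0∞ :=
  sInf {t : ℝ≥0∞ | ∃ y : ℝ, 0 ≤ y ∧ t = ENNReal.ofReal y ∧ z y ≤ x}

lemma genInvE_le_easy (z : ℝ → ℝ≥0∞) {X : ℝ≥0∞} {y : ℝ} (hy : 0 ≤ y) (h : z y ≤ X) :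
    genInvE z X ≤ ENNReal.ofReal y :=
  sInf_le ⟨y, hy, rfl, h⟩

lemma genInvE_le_hard (z : ℝ → ℝ≥0∞)
    (hzmono : AntitoneOn z (Ici 0)) (hzlsc : LowerSemicontinuousOn z (Ici 0))
    {X : ℝ≥0∞} {y : ℝ} (hy : 0 ≤ y) (h : genInvE z X ≤ ENNReal.ofReal y) :
    z y ≤ X := by
  set S : Set ℝ := {t | 0 ≤ t ∧ z t ≤ X} with hS
  have hSsub : S ⊆ Ici 0 := fun t ht => ht.1
  have hSclosed : IsClosed S := by
    apply isClosed_of_closure_subset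
    intro t ht
    have ht0 : t ∈ Ici (0:ℝ) := closure_minimal hSsub isClosed_Ici ht
    refine ⟨ht0, ?_⟩
    by_contra hX
    push_neg at hX
    have hev : ∀ᶠ t' in 𝓝[Ici 0] t, X < z t' := hzlsc t ht0 X hX
    have hne : (𝓝[S] t).NeBot := mem_closure_iff_nhdsWithin_neBot.mp ht
    have hle : 𝓝[S] t ≤ 𝓝[Ici 0] t := nhdsWithin_mono t hSsub
    have hev2 : ∀ᶠ t' in 𝓝[S] t, X < z t' := hev.filter_mono hle
    have hev3 : ∀ᶠ t' in 𝓝[S] t, t' ∈ S := eventually_mem_nhdsWithin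
    obtain ⟨t', h1, h2⟩ := (hev2.and hev3).exists
    exact absurd h2.2 (not_le.mpr h1)
  have hSne : S.Nonempty := by
    by_contra hemp
    have hempty : {t : ℝ≥0∞ | ∃ y : ℝ, 0 ≤ y ∧ t = ENNReal.ofReal y ∧ z y ≤ X} = ∅ := by
      ext t
      simp only [mem_setOf_eq, mem_empty_iff_false, iff_false]
      rintro ⟨y', h1, h2, h3⟩
      exact hemp ⟨y', h1, h3⟩
    rw [genInvE, hempty, sInf_empty] at h
    exact absurd (h.trans_lt ENNReal.ofReal_lt_top) (lt_irrefl _)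
  have hbdd : BddBelow S := ⟨0, fun t ht => ht.1⟩
  have haS : sInf S ∈ S := hSclosed.csInf_mem hSne hbdd
  have hga : ENNReal.ofReal (sInf S) ≤ genInvE z X := by
    apply le_sInf
    rintro t ⟨y', hy', rfl, hzy'⟩
    exact ENNReal.ofReal_le_ofReal (csInf_le hbdd ⟨hy', hzy'⟩)
  have hay : sInf S ≤ y := (ENNReal.ofReal_le_ofReal_iff hy).mp (hga.trans h)
  exact (hzmono haS.1 hy hay).trans haS.2

lemma vol_slab (a : ℝ≥0∞) :
    ∫⁻ t in Ioi (0:ℝ), (if ENNReal.ofReal t < a then (1:ℝ≥0∞) else 0) = a := by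
  have hmeas : MeasurableSet {t : ℝ | ENNReal.ofReal t < a} :=
    measurableSet_lt ENNReal.measurable_ofReal measurable_const
  have hind : (fun t : ℝ => if ENNReal.ofReal t < a then (1:ℝ≥0∞) else 0)
      = Set.indicator {t : ℝ | ENNReal.ofReal t < a} (fun _ => 1) := by
    ext t; simp [Set.indicator_apply]
  rw [hind, lintegral_indicator hmeas, setLIntegral_one, Measure.restrict_apply hmeas]
  rcases eq_or_ne a ⊤ with rfl | ha
  · have : {t : ℝ | ENNReal.ofReal t < ⊤} ∩ Ioi 0 = Ioi 0 := by
      ext t; simp [ENNReal.ofReal_lt_top]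
    rw [this, Real.volume_Ioi]
  · have : {t : ℝ | ENNReal.ofReal t < a} ∩ Ioi 0 = Ioo 0 a.toReal := by
      ext t
      simp only [mem_inter_iff, mem_setOf_eq, mem_Ioi, mem_Ioo]
      constructor
      · rintro ⟨h1, h2⟩
        exact ⟨h2, (ENNReal.ofReal_lt_iff_lt_toReal h2.le ha).mp h1⟩
      · rintro ⟨h1, h2⟩
        exact ⟨(ENNReal.ofReal_lt_iff_lt_toReal h1.le ha).mpr h2, h1⟩
    rw [this, Real.volume_Ioo, sub_zero, ENNReal.ofReal_toReal ha]

/-- properties of the generalized inverse of a nonincreasing lower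
semicontinuous function `z : [0,∞) → [0,∞]`: it is nonincreasing and lower
semicontinuous, its generalized inverse is `z` again, and it has the same integral. -/
theorem generalized_inverse_properties
    (z : ℝ → ℝ≥0∞)
    (hzmono : AntitoneOn z (Ici 0))
    (hzlsc : LowerSemicontinuousOn z (Ici 0))
    (zinv : ℝ → ℝ≥0∞) (hzinv : ∀ x, zinv x = genInvE z (ENNReal.ofReal x)) :
    (AntitoneOn zinv (Ici 0) ∧ LowerSemicontinuousOn zinv (Ici 0)) ∧
    (∀ y ∈ Ici (0:ℝ), genInvE zinv (ENNReal.ofReal y) = z y) ∧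
    (∫⁻ y in Ioi (0:ℝ), z y) = ∫⁻ x in Ioi (0:ℝ), zinv x := by
  have hdual : ∀ x y : ℝ, 0 ≤ x → 0 ≤ y →
      (zinv x ≤ ENNReal.ofReal y ↔ z y ≤ ENNReal.ofReal x) := by
    intro x y hx hy
    rw [hzinv]
    exact ⟨genInvE_le_hard z hzmono hzlsc hy, genInvE_le_easy z hy⟩
  have hantiG : Antitone zinv := by
    intro x x' hxx'
    rw [hzinv, hzinv]
    apply sInf_le_sInf
    rintro t ⟨y', h1, h2, h3⟩
    exact ⟨y', h1, h2, h3.trans (ENNReal.ofReal_le_ofReal hxx')⟩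
  have hlsc : LowerSemicontinuousOn zinv (Ici 0) := by
    intro x₀ hx₀ c hc
    by_cases hex : ∃ x, x₀ < x ∧ c < zinv x
    · obtain ⟨x, hx1, hx2⟩ := hex
      have h1 : Iio x ∈ 𝓝[Ici 0] x₀ := nhdsWithin_le_nhds (Iio_mem_nhds hx1)
      filter_upwards [h1] with x' hx'
      exact hx2.trans_le (hantiG hx'.le)
    · push_neg at hex
      exfalso
      have hcne : c ≠ ⊤ := ne_top_of_lt hc
      have hC0 : (0:ℝ) ≤ c.toReal := ENNReal.toReal_nonneg
      have hzC : ∀ x, x₀ < x → z c.toReal ≤ ENNReal.ofReal x := by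
        intro x hx
        have h2 : zinv x ≤ ENNReal.ofReal c.toReal := by
          rw [ENNReal.ofReal_toReal hcne]; exact hex x hx
        exact (hdual x c.toReal (hx₀.trans hx.le) hC0).mp h2
      have hzC0 : z c.toReal ≤ ENNReal.ofReal x₀ := by
        have htt : Tendsto (fun ε : ℝ => x₀ + ε) (𝓝[>] (0:ℝ)) (𝓝 x₀) := by
          have h0 : Tendsto (fun ε : ℝ => x₀ + ε) (𝓝 (0:ℝ)) (𝓝 (x₀ + 0)) :=
            tendsto_const_nhds.add tendsto_id
          rw [add_zero] at h0
          exact h0.mono_left nhdsWithin_le_nhds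
        have ht : Tendsto (fun ε : ℝ => ENNReal.ofReal (x₀ + ε)) (𝓝[>] (0:ℝ))
            (𝓝 (ENNReal.ofReal x₀)) := (ENNReal.continuous_ofReal.tendsto _).comp htt
        refine ge_of_tendsto ht ?_
        filter_upwards [self_mem_nhdsWithin] with ε hε
        exact hzC _ (by have := mem_Ioi.mp hε; linarith)
      have hfin : zinv x₀ ≤ c := by
        rw [hzinv, ← ENNReal.ofReal_toReal hcne]
        exact genInvE_le_easy z hC0 hzC0
      exact absurd hc (not_lt.mpr hfin)
  have hii : ∀ y ∈ Ici (0:ℝ), genInvE zinv (ENNReal.ofReal y) = z y := by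
    intro y hy
    apply le_antisymm
    · by_cases htop : z y = ⊤
      · rw [htop]; exact le_top
      · have h1 : z y ≤ ENNReal.ofReal (z y).toReal :=
          le_of_eq (ENNReal.ofReal_toReal htop).symm
        have h2 : zinv (z y).toReal ≤ ENNReal.ofReal y :=
          (hdual _ y ENNReal.toReal_nonneg hy).mpr h1
        calc genInvE zinv (ENNReal.ofReal y) ≤ ENNReal.ofReal (z y).toReal :=
              sInf_le ⟨(z y).toReal, ENNReal.toReal_nonneg, rfl, h2⟩
          _ = z y := ENNReal.ofReal_toReal htop
    · apply le_sInf
      rintro t ⟨x, hx0, rfl, hle⟩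
      exact (hdual x y hx0 hy).mp hle
  refine ⟨⟨hantiG.antitoneOn _, hlsc⟩, hii, ?_⟩
  have hdual' : ∀ x y : ℝ, 0 ≤ x → 0 ≤ y →
      (ENNReal.ofReal y < zinv x ↔ ENNReal.ofReal x < z y) := by
    intro x y hx hy
    rw [← not_le, ← not_le, hdual x y hx hy]
  have hmeasinv : Measurable zinv := hantiG.measurable
  have hU : MeasurableSet {p : ℝ × ℝ | ENNReal.ofReal p.1 < zinv p.2} :=
    measurableSet_lt (ENNReal.measurable_ofReal.comp measurable_fst)
      (hmeasinv.comp measurable_snd)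
  have hmeasG : Measurable (fun p : ℝ × ℝ =>
      if ENNReal.ofReal p.1 < zinv p.2 then (1:ℝ≥0∞) else 0) :=
    Measurable.ite hU measurable_const measurable_const
  have key := lintegral_lintegral_swap (μ := volume.restrict (Ioi (0:ℝ)))
    (ν := volume.restrict (Ioi (0:ℝ)))
    (f := fun y x => if ENNReal.ofReal y < zinv x then (1:ℝ≥0∞) else 0)
    hmeasG.aemeasurable
  have hL : (∫⁻ y in Ioi (0:ℝ), ∫⁻ x in Ioi (0:ℝ),
      (if ENNReal.ofReal y < zinv x then (1:ℝ≥0∞) else 0))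
      = ∫⁻ y in Ioi (0:ℝ), z y := by
    apply setLIntegral_congr_fun measurableSet_Ioi
    intro y hy
    have hy0 : (0:ℝ) ≤ y := (mem_Ioi.mp hy).le
    calc (∫⁻ x in Ioi (0:ℝ), if ENNReal.ofReal y < zinv x then (1:ℝ≥0∞) else 0)
        = ∫⁻ x in Ioi (0:ℝ), (if ENNReal.ofReal x < z y then (1:ℝ≥0∞) else 0) := by
          apply setLIntegral_congr_fun measurableSet_Ioi
          intro x hx
          exact if_congr (hdual' x y (mem_Ioi.mp hx).le hy0) rfl rfl
      _ = z y := vol_slab (z y)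
  have hR : (∫⁻ x in Ioi (0:ℝ), ∫⁻ y in Ioi (0:ℝ),
      (if ENNReal.ofReal y < zinv x then (1:ℝ≥0∞) else 0))
      = ∫⁻ x in Ioi (0:ℝ), zinv x := by
    apply setLIntegral_congr_fun measurableSet_Ioi
    intro x hx
    exact vol_slab (zinv x)
  rw [← hL, ← hR]
  exact key
end

section
/- Let z : [0,∞) → [0,∞) be nonincreasing and lower semicontinuous, set c(φ) = z(φ)·φ, assume ∫_0^1 √(c(φ)) dφ < ∞, and let τ = τ^c. Suppose that for some W > 0 one has τ(w) = L·w for all w ∈ [0,W], where L = lim_{v→0+} τ(v)/v. Then for every w ∈ (0,W) there is NO minimizer: no nonnegative ψ ∈ H¹(ℝ) with ∫_ℝ ψ dy = w satisfies F^c[ψ] = τ(w). -/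
open MeasureTheory Filter Set
open scoped ENNReal Topology

lemma aux_exp_sq (t : ℝ) : Real.exp (-(t^2)) ^ 2 = Real.exp (-2 * t^2) := by
  rw [pow_two, ← Real.exp_add]; congr 1; ring

/-- Scaling of Lebesgue integral on `ℝ` under `y ↦ y / l`. -/
lemma aux_lintegral_comp_div (g : ℝ → ℝ≥0∞) (hg : Measurable g) {l : ℝ} (hl : 0 < l) :
    ∫⁻ y, g (y / l) = ENNReal.ofReal l * ∫⁻ y, g y := by
  have h1 : (fun y : ℝ => g (y / l)) = fun y => g (l⁻¹ * y) := by
    funext y; rw [div_eq_inv_mul]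
  rw [h1]
  have h2 := MeasureTheory.lintegral_map (μ := (volume : Measure ℝ)) hg
    (measurable_const_mul l⁻¹)
  calc ∫⁻ y, g (l⁻¹ * y) = ∫⁻ y, g y ∂(Measure.map (l⁻¹ * ·) volume) := h2.symm
    _ = ENNReal.ofReal l * ∫⁻ y, g y := by
        rw [Real.map_volume_mul_left (inv_ne_zero hl.ne'), lintegral_smul_measure, inv_inv,
          abs_of_pos hl, smul_eq_mul]

/-- A Gaussian competitor shows that `tauC c w` is finite. -/
lemma aux_tauC_lt_top (z : ℝ → ℝ) (hznn : ∀ φ ∈ Ici (0:ℝ), 0 ≤ z φ)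
    (hzmono : AntitoneOn z (Ici 0)) (c : ℝ → ℝ) (hcz : ∀ φ, c φ = z φ * φ)
    (w : ℝ) (hw : 0 < w) : tauC c w < ⊤ := by
  have hπ : 0 < Real.sqrt Real.pi := Real.sqrt_pos.mpr Real.pi_pos
  set a := w / Real.sqrt Real.pi with hadef
  have ha : 0 < a := div_pos hw hπ
  set ψ := fun y : ℝ => a * Real.exp (-(y^2)) with hψdef
  set dψ := fun y : ℝ => a * (Real.exp (-(y^2)) * (-(2*y))) with hdψdef
  have hψcont : Continuous ψ := by fun_prop
  have hdψcont : Continuous dψ := by fun_prop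
  have hz0 : 0 ≤ z 0 := hznn 0 self_mem_Ici
  have hψnn : ∀ y, 0 ≤ ψ y := fun y => by positivity
  have hd : ∀ y, HasDerivAt ψ (dψ y) y := by
    intro y
    have h1 : HasDerivAt (fun x : ℝ => -(x^2)) (-(2*y)) y := by
      exact ((hasDerivAt_pow 2 y).neg).congr_deriv (by norm_num)
    have h2 : HasDerivAt (fun x : ℝ => Real.exp (-(x^2)))
        (Real.exp (-(y^2)) * (-(2*y))) y := (Real.hasDerivAt_exp _).comp y h1
    exact h2.const_mul a
  have hg2 : Integrable (fun y : ℝ => Real.exp (-2 * y^2)) := integrable_exp_neg_mul_sq two_pos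
  have hg1 : Integrable (fun y : ℝ => Real.exp (-(y^2))) := by
    have := integrable_exp_neg_mul_sq (one_pos (α := ℝ))
    simpa using this
  have hysq : Integrable (fun y : ℝ => y^2 * Real.exp (-2*y^2)) := by
    apply Integrable.mono' hg1 ((continuous_pow 2).mul (by fun_prop) |>.aestronglyMeasurable)
    apply Eventually.of_forall; intro y
    simp only [Pi.mul_apply]
    rw [Real.norm_eq_abs, abs_of_nonneg (mul_nonneg (sq_nonneg y) (Real.exp_pos _).le)]
    have h1 : y^2 ≤ Real.exp (y^2) := by nlinarith [Real.add_one_le_exp (y^2)]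
    calc y^2 * Real.exp (-2*y^2) ≤ Real.exp (y^2) * Real.exp (-2*y^2) :=
          mul_le_mul_of_nonneg_right h1 (Real.exp_pos _).le
      _ = Real.exp (-(y^2)) := by rw [← Real.exp_add]; congr 1; ring
  have hmem1 : MemLp ψ 2 volume := by
    rw [memLp_two_iff_integrable_sq hψcont.aestronglyMeasurable]
    have h1 : (fun y => ψ y ^ 2) = fun y => a^2 * Real.exp (-2*y^2) := by
      funext y
      simp only [hψdef]
      linear_combination a^2 * aux_exp_sq y
    rw [h1]; exact hg2.const_mul _
  have hdψsq : (fun y => dψ y ^ 2) = fun y => (4*a^2) * (y^2 * Real.exp (-2*y^2)) := by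
    funext y
    simp only [hdψdef]
    linear_combination (4*a^2*y^2) * aux_exp_sq y
  have hmem2 : MemLp dψ 2 volume := by
    rw [memLp_two_iff_integrable_sq hdψcont.aestronglyMeasurable]
    rw [hdψsq]; exact hysq.const_mul _
  have hFTCg : ∀ t, ψ t = ψ 0 + ∫ s in (0:ℝ)..t, dψ s := by
    intro t
    have h1 : ∫ s in (0:ℝ)..t, dψ s = ψ t - ψ 0 :=
      intervalIntegral.integral_eq_sub_of_hasDerivAt (fun x _ => hd x)
        (hdψcont.intervalIntegrable 0 t)
    rw [h1]; ring
  have hintg : Integrable ψ := hg1.const_mul a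
  have hmassg : (∫ y, ψ y) = w := by
    have h2 : ∫ y : ℝ, Real.exp (-(y^2)) = Real.sqrt Real.pi := by
      have := integral_gaussian 1
      simpa using this
    simp only [hψdef]
    rw [integral_const_mul, h2, hadef]
    field_simp
  have hbound : Integrable (fun y => (1/2) * dψ y ^2 + z 0 * ψ y) := by
    apply Integrable.add
    · have h1 : (fun y => (1/2) * dψ y ^ 2) = fun y => (2*a^2) * (y^2 * Real.exp (-2*y^2)) := by
        funext y
        simp only [hdψdef]
        linear_combination (2*a^2*y^2) * aux_exp_sq y
      rw [h1]; exact hysq.const_mul _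
    · exact hintg.const_mul _
  have hfin : phaseEnergy c ψ dψ < ⊤ := by
    unfold phaseEnergy
    have hb := (hasFiniteIntegral_iff_ofReal (Eventually.of_forall fun y =>
      add_nonneg (by positivity) (mul_nonneg hz0 (hψnn y)))).mp hbound.hasFiniteIntegral
    refine lt_of_le_of_lt (lintegral_mono fun y => ?_) hb
    apply ENNReal.ofReal_le_ofReal
    have h1 : c (ψ y) ≤ z 0 * ψ y := by
      rw [hcz]
      exact mul_le_mul_of_nonneg_right (hzmono self_mem_Ici (hψnn y) (hψnn y)) (hψnn y)
    linarith
  calc tauC c w ≤ phaseEnergy c ψ dψ :=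
        iInf₂_le (⟨ψ, dψ⟩ : (ℝ → ℝ) × (ℝ → ℝ)) ⟨⟨hmem1, hmem2, hFTCg⟩, hψnn, hintg, hmassg⟩
    _ < ⊤ := hfin

/-- nonexistence of an optimal phase field profile in the region where `τ`
is linear with the slope `L = τ'(0)`. -/
theorem nonexistence_of_minimizer_for_linear_tau
    (z : ℝ → ℝ) (hznn : ∀ φ ∈ Ici (0:ℝ), 0 ≤ z φ)
    (hzmono : AntitoneOn z (Ici 0))
    (hzlsc : LowerSemicontinuousOn z (Ici 0))
    (c : ℝ → ℝ) (hcz : ∀ φ, c φ = z φ * φ)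
    (hcint : (∫⁻ φ in Ioc (0:ℝ) 1, ENNReal.ofReal (Real.sqrt (c φ))) < ⊤)
    (τ : ℝ → ℝ) (hτ : ∀ v, τ v = (tauC c v).toReal)
    (L : ℝ) (hL : Tendsto (fun v => τ v / v) (𝓝[>] 0) (𝓝 L))
    (W : ℝ) (hW : 0 < W)
    (hlin : ∀ w ∈ Icc (0:ℝ) W, τ w = L * w) :
    ∀ w ∈ Ioo (0:ℝ) W,
      ¬ ∃ ψ dψ : ℝ → ℝ, MemH1 ψ dψ ∧ (∀ y, 0 ≤ ψ y) ∧ Integrable ψ ∧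
        (∫ y, ψ y) = w ∧ phaseEnergy c ψ dψ = tauC c w := by
  rintro w ⟨hw0, hwW⟩ ⟨ψ, dψ, ⟨hψ2, hdψ2, hFTC⟩, hpos, hint, hmass, hmin⟩
  -- measurable representative of the weak derivative
  set dψ₀ := hdψ2.aestronglyMeasurable.mk dψ with hdψ₀def
  have hdψ₀sm : StronglyMeasurable dψ₀ := hdψ2.aestronglyMeasurable.stronglyMeasurable_mk
  have hae : dψ =ᵐ[volume] dψ₀ := hdψ2.aestronglyMeasurable.ae_eq_mk
  have hdψ₀2 : MemLp dψ₀ 2 volume := hdψ2.ae_eq hae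
  have hdψ₀m : Measurable dψ₀ := hdψ₀sm.measurable
  have hFTC₀ : ∀ t, ψ t = ψ 0 + ∫ s in (0:ℝ)..t, dψ₀ s := by
    intro t
    rw [hFTC t]
    congr 1
    exact intervalIntegral.integral_congr_ae (by filter_upwards [hae] with x hx _; exact hx)
  -- continuity of ψ
  have hii : ∀ a b : ℝ, IntervalIntegrable dψ₀ volume a b := by
    intro a b
    rw [intervalIntegrable_iff]
    haveI : IsFiniteMeasure (volume.restrict (uIoc a b)) := by
      constructor
      rw [Measure.restrict_apply_univ]
      exact measure_Ioc_lt_top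
    exact (hdψ₀2.restrict _).integrable one_le_two
  have hψcont : Continuous ψ := by
    have h1 : ψ = fun t => ψ 0 + ∫ s in (0:ℝ)..t, dψ₀ s := funext hFTC₀
    rw [h1]
    exact continuous_const.add (intervalIntegral.continuous_primitive hii 0)
  -- measurability of c ∘ ψ
  have hzψlsc : LowerSemicontinuous fun y => z (ψ y) := by
    intro y b hb
    have h1 := hzlsc (ψ y) (hpos y) b hb
    have ht : Tendsto ψ (𝓝 y) (𝓝[Ici 0] (ψ y)) :=
      tendsto_nhdsWithin_iff.mpr ⟨hψcont.tendsto y, Eventually.of_forall hpos⟩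
    exact ht.eventually h1
  have hcmeas : Measurable fun y => c (ψ y) := by
    simp only [hcz]
    exact hzψlsc.measurable.mul hψcont.measurable
  have hcnn : ∀ y, 0 ≤ c (ψ y) := fun y => by
    rw [hcz]; exact mul_nonneg (hznn _ (hpos y)) (hpos y)
  -- split the energy
  set G' := ∫⁻ y, ENNReal.ofReal ((1/2) * dψ₀ y ^ 2) with hG'def
  set C' := ∫⁻ y, ENNReal.ofReal (c (ψ y)) with hC'def
  have hGm : Measurable fun y => ENNReal.ofReal ((1/2) * dψ₀ y ^ 2) :=
    (((hdψ₀m.pow_const 2).const_mul (1/2))).ennreal_ofReal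
  have hsplit : phaseEnergy c ψ dψ = G' + C' := by
    unfold phaseEnergy
    have h1 : (fun y => ENNReal.ofReal ((1/2) * dψ y ^ 2 + c (ψ y))) =ᵐ[volume]
        fun y => ENNReal.ofReal ((1/2) * dψ₀ y ^ 2) + ENNReal.ofReal (c (ψ y)) := by
      filter_upwards [hae] with y hy
      rw [hy, ENNReal.ofReal_add (by positivity) (hcnn y)]
    rw [lintegral_congr_ae h1, lintegral_add_left hGm]
  have hG'fin : G' ≠ ⊤ := by
    have hsq : Integrable (fun y => dψ₀ y ^ 2) :=
      (memLp_two_iff_integrable_sq hdψ₀sm.aestronglyMeasurable).mp hdψ₀2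
    have h2 : Integrable (fun y => (1/2) * dψ₀ y ^ 2) := hsq.const_mul _
    exact ((hasFiniteIntegral_iff_ofReal (Eventually.of_forall fun y => by positivity)).mp
      h2.hasFiniteIntegral).ne
  have hfin : tauC c w ≠ ⊤ := (aux_tauC_lt_top z hznn hzmono c hcz w hw0).ne
  have hEfin : G' + C' ≠ ⊤ := by rw [← hsplit, hmin]; exact hfin
  have hC'fin : C' ≠ ⊤ := fun h => hEfin (by simp [h])
  set G := G'.toReal with hGdef
  set C := C'.toReal with hCdef
  have hGCw : L * w = G + C := by
    have h1 : τ w = L * w := hlin w ⟨hw0.le, hwW.le⟩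
    rw [hτ w, ← hmin, hsplit, ENNReal.toReal_add hG'fin hC'fin] at h1
    linarith
  -- horizontally rescaled competitor
  set l := W / w with hldef
  have hl1 : 1 < l := (one_lt_div hw0).mpr hwW
  have hl0 : 0 < l := lt_trans one_pos hl1
  set ψl := fun y => ψ (y / l) with hψldef
  set dψl := fun y => dψ₀ (y / l) / l with hdψldef
  have hψlcont : Continuous ψl := hψcont.comp (continuous_id.div_const l)
  have hdψlm : Measurable dψl := (hdψ₀m.comp (measurable_id.div_const l)).div_const l
  have hsqψ : Integrable (fun y => ψ y ^ 2) :=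
    (memLp_two_iff_integrable_sq hψ2.aestronglyMeasurable).mp hψ2
  have hsq₀ : Integrable (fun y => dψ₀ y ^ 2) :=
    (memLp_two_iff_integrable_sq hdψ₀sm.aestronglyMeasurable).mp hdψ₀2
  have hmemψl : MemLp ψl 2 volume := by
    rw [memLp_two_iff_integrable_sq hψlcont.aestronglyMeasurable]
    exact hsqψ.comp_div hl0.ne'
  have hmemdψl : MemLp dψl 2 volume := by
    rw [memLp_two_iff_integrable_sq hdψlm.aestronglyMeasurable]
    have h1 : Integrable (fun x : ℝ => dψ₀ (x / l) ^ 2) := hsq₀.comp_div hl0.ne'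
    apply (h1.const_mul (1 / l ^ 2)).congr
    apply Eventually.of_forall
    intro x
    simp only [hdψldef]
    field_simp
  have hFTCl : ∀ t, ψl t = ψl 0 + ∫ s in (0:ℝ)..t, dψl s := by
    intro t
    have h1 : ∫ s in (0:ℝ)..t, dψl s = (∫ s in (0:ℝ)..t, dψ₀ (s / l)) / l :=
      intervalIntegral.integral_div l _
    have h2 : (∫ s in (0:ℝ)..t, dψ₀ (s / l)) = l • ∫ s in (0:ℝ)/l..t/l, dψ₀ s :=
      intervalIntegral.integral_comp_div (f := dψ₀) hl0.ne'
    have h3 : (∫ s in (0:ℝ)..t/l, dψ₀ s) = ψ (t/l) - ψ 0 := by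
      rw [hFTC₀ (t/l)]; ring
    simp only [hψldef]
    rw [h1, h2, zero_div, h3, smul_eq_mul]
    field_simp
    ring
  have hintψl : Integrable ψl := hint.comp_div hl0.ne'
  have hmassl : (∫ y, ψl y) = W := by
    have h1 := MeasureTheory.Measure.integral_comp_div ψ l
    simp only [hψldef]
    rw [h1, hmass, abs_of_pos hl0, smul_eq_mul, hldef]
    field_simp
  have hle : tauC c W ≤ phaseEnergy c ψl dψl :=
    iInf₂_le (⟨ψl, dψl⟩ : (ℝ → ℝ) × (ℝ → ℝ))
      ⟨⟨hmemψl, hmemdψl, hFTCl⟩, fun y => hpos _, hintψl, hmassl⟩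
  have henergy : phaseEnergy c ψl dψl
      = ENNReal.ofReal l * (ENNReal.ofReal (1 / l ^ 2) * G' + C') := by
    unfold phaseEnergy
    set g := fun u => ENNReal.ofReal ((1/2) * (dψ₀ u / l) ^ 2 + c (ψ u)) with hgdef
    have hgm : Measurable g :=
      ((((hdψ₀m.div_const l).pow_const 2).const_mul (1/2)).add hcmeas).ennreal_ofReal
    have h1 : (fun y => ENNReal.ofReal ((1/2) * dψl y ^ 2 + c (ψl y))) = fun y => g (y / l) := rfl
    rw [h1, aux_lintegral_comp_div g hgm hl0]
    congr 1
    have h2 : g = fun u => ENNReal.ofReal ((1 / l ^ 2) * ((1/2) * dψ₀ u ^ 2))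
        + ENNReal.ofReal (c (ψ u)) := by
      funext u
      have hb : g u = ENNReal.ofReal ((1/2) * (dψ₀ u / l) ^ 2 + c (ψ u)) := rfl
      rw [hb]
      rw [show (1/2) * (dψ₀ u / l) ^ 2 + c (ψ u)
          = (1 / l ^ 2) * ((1/2) * dψ₀ u ^ 2) + c (ψ u) by field_simp]
      rw [ENNReal.ofReal_add (by positivity) (hcnn u)]
    rw [h2, lintegral_add_left (((hdψ₀m.pow_const 2).const_mul _ |>.const_mul _).ennreal_ofReal)]
    congr 1
    have h3 : (fun u => ENNReal.ofReal ((1 / l ^ 2) * ((1/2) * dψ₀ u ^ 2)))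
        = fun u => ENNReal.ofReal (1 / l ^ 2) * ENNReal.ofReal ((1/2) * dψ₀ u ^ 2) := by
      funext u
      rw [ENNReal.ofReal_mul (by positivity)]
    rw [h3, lintegral_const_mul _ hGm]
  have hEfin' : ENNReal.ofReal l * (ENNReal.ofReal (1 / l ^ 2) * G' + C') ≠ ⊤ :=
    ENNReal.mul_ne_top ENNReal.ofReal_ne_top
      (ENNReal.add_ne_top.mpr ⟨ENNReal.mul_ne_top ENNReal.ofReal_ne_top hG'fin, hC'fin⟩)
  have hμW : L * W ≤ l * ((1 / l ^ 2) * G + C) := by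
    have h2 : (tauC c W).toReal
        ≤ (ENNReal.ofReal l * (ENNReal.ofReal (1 / l ^ 2) * G' + C')).toReal :=
      ENNReal.toReal_mono hEfin' (henergy ▸ hle)
    rw [ENNReal.toReal_mul, ENNReal.toReal_add
        (ENNReal.mul_ne_top ENNReal.ofReal_ne_top hG'fin) hC'fin, ENNReal.toReal_mul,
      ENNReal.toReal_ofReal hl0.le, ENNReal.toReal_ofReal (by positivity)] at h2
    have h3 : τ W = L * W := hlin W ⟨hW.le, le_rfl⟩
    rw [hτ W] at h3
    rw [← h3]
    exact h2
  have hWl : W = l * w := by rw [hldef]; field_simp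
  have hGnn : 0 ≤ G := ENNReal.toReal_nonneg
  have hGz : G = 0 := by
    have h3 : L * (l * w) ≤ l * ((1 / l ^ 2) * G + C) := hWl ▸ hμW
    have h5 : l * (G + C) ≤ (1/l) * G + l * C := by
      calc l * (G + C) = L * (l * w) := by rw [← hGCw]; ring
        _ ≤ l * ((1 / l ^ 2) * G + C) := h3
        _ = (1/l) * G + l * C := by field_simp
    have h6 : (l - 1/l) * G ≤ 0 := by linarith
    have h7 : 0 < l - 1/l := by
      have h8 : 1/l < 1 := by rw [div_lt_one hl0]; exact hl1
      linarith
    nlinarith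
  have hG'0 : G' = 0 := by
    rcases (ENNReal.toReal_eq_zero_iff G').mp hGz with h | h
    · exact h
    · exact absurd h hG'fin
  have hdψ₀0 : dψ₀ =ᵐ[volume] 0 := by
    have h2 : ∀ᵐ y ∂(volume : Measure ℝ),
        ENNReal.ofReal ((1/2) * dψ₀ y ^ 2) = 0 := by
      have := (lintegral_eq_zero_iff hGm).mp hG'0
      filter_upwards [this] with y hy
      simpa using hy
    filter_upwards [h2] with y hy
    rw [ENNReal.ofReal_eq_zero] at hy
    have h3 : dψ₀ y ^ 2 = 0 := le_antisymm (by linarith) (sq_nonneg _)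
    simpa using (pow_eq_zero_iff two_ne_zero).mp h3
  have hconst : ∀ t, ψ t = ψ 0 := by
    intro t
    rw [hFTC₀ t]
    have h0 : (∫ s in (0:ℝ)..t, dψ₀ s) = 0 := by
      rw [intervalIntegral.integral_congr_ae
        (by filter_upwards [hdψ₀0] with x hx _; exact hx)]
      simp
    rw [h0, add_zero]
  have hψ00 : ψ 0 ≠ 0 := by
    intro h0
    have h1 : ψ = fun _ => (0:ℝ) := funext fun t => by rw [hconst t, h0]
    rw [h1] at hmass
    simp at hmass
    exact hw0.ne' hmass.symm
  have h2 : Integrable (fun _ : ℝ => ψ 0) volume :=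
    hint.congr (Eventually.of_forall hconst)
  rcases integrable_const_iff.mp h2 with h | h
  · exact hψ00 h
  · haveI := h
    exact absurd (measure_lt_top (volume : Measure ℝ) univ) (by simp)
end

section
/- Let z : [0,∞) → [0,∞) be nonincreasing and lower semicontinuous, c(φ) = z(φ)·φ, τ = τ^c, and let w > 0 satisfy τ(w) ≠ w · lim_{v→0+} τ(v)/v. Let ψ̂ ∈ H¹(ℝ) be a bounded, continuous, even minimizer of F^c among nonnegative H¹ functions of mass w which is nonincreasing on [0,∞), and set λ = z(ψ̂(0)). Then: (i) ψ̂ minimizes ψ ↦ F^c[ψ] − λ ∫_ℝ ψ dy over all nonnegative ψ ∈ H¹(ℝ) which are even, nonincreasing on [0,∞), and satisfy ψ(0) = ψ̂(0); (ii) τ(w+h) − τ(w) ≤ λ·h for every h > 0 (λ is at least the right derivative of τ at w); (iii) τ(w) − τ(w−h) ≥ λ·h for every 0 < h < w (λ is at most the left derivative of τ at w). -/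
open MeasureTheory Filter Set
open scoped ENNReal Topology

lemma intervalIntegrable_of_memL2 {f : ℝ → ℝ} (h : MemLp f 2 volume) (a b : ℝ) :
    IntervalIntegrable f volume a b := by
  have h2 := h.restrict (Set.uIoc a b)
  haveI : IsFiniteMeasure (volume.restrict (Set.uIoc a b)) := by
    constructor
    rw [Measure.restrict_apply_univ]
    exact measure_Ioc_lt_top
  exact intervalIntegrable_iff.mpr (h2.integrable (by norm_num))

lemma memH1_diff {ψ dψ : ℝ → ℝ} (h : MemH1 ψ dψ) (a b : ℝ) :
    ψ b = ψ a + ∫ s in a..b, dψ s := by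
  have hii : ∀ u v : ℝ, IntervalIntegrable dψ volume u v :=
    intervalIntegrable_of_memL2 h.2.1
  have hb := h.2.2 b
  have ha := h.2.2 a
  have : (∫ s in (0:ℝ)..b, dψ s) = (∫ s in (0:ℝ)..a, dψ s) + ∫ s in a..b, dψ s :=
    (intervalIntegral.integral_add_adjacent_intervals (hii 0 a) (hii a b)).symm
  rw [hb, ha, this]; ring

lemma peak_le {ψ : ℝ → ℝ} (heven : ∀ y, ψ (-y) = ψ y) (hmono : AntitoneOn ψ (Ici 0))
    (y : ℝ) : ψ y ≤ ψ 0 := by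
  rcases le_total 0 y with hy | hy
  · exact hmono (by simp) (by simpa using hy) hy
  · have : ψ y = ψ (-y) := (heven y).symm
    rw [this]
    exact hmono (by simp) (by simp [neg_nonneg.mpr hy]) (by linarith)

lemma lsplit2 (f : ℝ → ℝ≥0∞) (a : ℝ) :
    (∫⁻ y, f y) = (∫⁻ y in Iio a, f y) + ∫⁻ y in Ici a, f y := by
  have := (lintegral_add_compl (μ := volume) f (measurableSet_Iio (a := a))).symm
  rwa [compl_Iio] at this

lemma lsplit3 (f : ℝ → ℝ≥0∞) {a b : ℝ} (hab : a ≤ b) :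
    (∫⁻ y, f y) = (∫⁻ y in Iio a, f y) + (∫⁻ y in Ico a b, f y) + ∫⁻ y in Ici b, f y := by
  rw [lsplit2 f a, add_assoc]
  congr 1
  rw [← lintegral_union measurableSet_Ici (by
    rw [Set.disjoint_left]; intro x hx hx'; exact absurd (hx'.trans_lt' hx.2).le (by simp [hx']; linarith [hx.2, (mem_Ici.mp hx')])),
    Ico_union_Ici_eq_Ici hab]

lemma disj_Ico_Ici {a b : ℝ} : Disjoint (Ico a b) (Ici b) := by
  rw [Set.disjoint_left]; intro x hx hx'; exact absurd (mem_Ici.mp hx') (not_le.mpr hx.2)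

lemma isplit2 {f : ℝ → ℝ} (hf : Integrable f) (a : ℝ) :
    (∫ y, f y) = (∫ y in Iio a, f y) + ∫ y in Ici a, f y := by
  have := (integral_add_compl (μ := volume) (measurableSet_Iio (a := a)) hf).symm
  rwa [compl_Iio] at this

lemma isplit3 {f : ℝ → ℝ} (hf : Integrable f) {a b : ℝ} (hab : a ≤ b) :
    (∫ y, f y) = (∫ y in Iio a, f y) + (∫ y in Ico a b, f y) + ∫ y in Ici b, f y := by
  rw [isplit2 hf a, add_assoc]
  congr 1
  rw [← setIntegral_union disj_Ico_Ici measurableSet_Ici hf.integrableOn hf.integrableOn,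
    Ico_union_Ici_eq_Ici hab]

lemma lshift_set (f : ℝ → ℝ≥0∞) {A B : Set ℝ} (hA : MeasurableSet A) (hB : MeasurableSet B)
    (s : ℝ) (h : ∀ y, y ∈ A ↔ y - s ∈ B) :
    (∫⁻ y in A, f (y - s)) = ∫⁻ y in B, f y := by
  calc (∫⁻ y in A, f (y - s)) = ∫⁻ y, A.indicator (fun y => f (y - s)) y :=
        (lintegral_indicator hA _).symm
    _ = ∫⁻ y, B.indicator f (y - s) := by
        apply lintegral_congr
        intro y
        by_cases hy : y ∈ A
        · simp [indicator_of_mem hy, indicator_of_mem ((h y).mp hy)]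
        · simp [indicator_of_notMem hy, indicator_of_notMem (fun hc => hy ((h y).mpr hc))]
    _ = ∫⁻ y, B.indicator f y := by
        simpa [sub_eq_add_neg] using lintegral_add_right_eq_self (B.indicator f) (-s)
    _ = ∫⁻ y in B, f y := lintegral_indicator hB _

lemma ishift_set (f : ℝ → ℝ) {A B : Set ℝ} (hA : MeasurableSet A) (hB : MeasurableSet B)
    (s : ℝ) (h : ∀ y, y ∈ A ↔ y - s ∈ B) :
    (∫ y in A, f (y - s)) = ∫ y in B, f y := by
  calc (∫ y in A, f (y - s)) = ∫ y, A.indicator (fun y => f (y - s)) y :=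
        (integral_indicator hA).symm
    _ = ∫ y, B.indicator f (y - s) := by
        apply integral_congr_ae; apply Eventually.of_forall; intro y
        by_cases hy : y ∈ A
        · simp [indicator_of_mem hy, indicator_of_mem ((h y).mp hy)]
        · simp [indicator_of_notMem hy, indicator_of_notMem (fun hc => hy ((h y).mpr hc))]
    _ = ∫ y, B.indicator f y := integral_sub_right_eq_self (B.indicator f) s
    _ = ∫ y in B, f y := integral_indicator hB

lemma memL2_shift {f : ℝ → ℝ} (h : MemLp f 2 volume) (s : ℝ) :
    MemLp (fun y => f (y - s)) 2 volume :=
  h.comp_measurePreserving (measurePreserving_sub_right volume s)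

lemma integrable_shift {f : ℝ → ℝ} (h : Integrable f) (s : ℝ) :
    Integrable (fun y => f (y - s)) :=
  memLp_one_iff_integrable.mp
    ((memLp_one_iff_integrable.mpr h).comp_measurePreserving
      (measurePreserving_sub_right volume s))

lemma tauC_le {c : ℝ → ℝ} {ψ dψ : ℝ → ℝ} {w : ℝ} (h1 : MemH1 ψ dψ) (h2 : ∀ y, 0 ≤ ψ y)
    (h3 : Integrable ψ) (h4 : (∫ y, ψ y) = w) : tauC c w ≤ phaseEnergy c ψ dψ :=
  iInf_le_of_le (ψ, dψ) (iInf_le_of_le ⟨h1, h2, h3, h4⟩ le_rfl)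

lemma ae_ne_point (a : ℝ) : ∀ᵐ y : ℝ ∂volume, y ≠ a := by
  have h : (volume : Measure ℝ) {a} = 0 := Real.volume_singleton
  exact ae_iff.mpr (by simpa using h)

lemma insert_plateau {z c : ℝ → ℝ} (hznn : ∀ φ ∈ Ici (0:ℝ), 0 ≤ z φ)
    (hcz : ∀ φ, c φ = z φ * φ)
    {ψ dψ : ℝ → ℝ} (hH : MemH1 ψ dψ) (hnn : ∀ y, 0 ≤ ψ y) (hint : Integrable ψ)
    {s : ℝ} (hs : 0 < s) :
    tauC c ((∫ y, ψ y) + s * ψ 0) ≤ phaseEnergy c ψ dψ + ENNReal.ofReal (s * c (ψ 0)) := by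
  classical
  set θ := ψ 0 with hθ
  have hθnn : 0 ≤ θ := hnn 0
  have hcθ : 0 ≤ c θ := by rw [hcz]; exact mul_nonneg (hznn θ hθnn) hθnn
  set ψp : ℝ → ℝ := fun y => if y < 0 then ψ y else if y < s then θ else ψ (y - s) with hψp
  set dψp : ℝ → ℝ := fun y => if y < 0 then dψ y else if y < s then 0 else dψ (y - s) with hdψp
  -- L² bounds
  have hψpL2 : MemLp ψp 2 volume := by
    have hrepr : ψp = (Iio (0:ℝ)).indicator ψ + (Ico (0:ℝ) s).indicator (fun _ => θ)
        + (Ici s).indicator (fun y => ψ (y - s)) := by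
      funext y
      by_cases h1 : y < 0
      · simp [hψp, h1, indicator_of_mem (mem_Iio.mpr h1),
          indicator_of_notMem (by simp [mem_Ico, not_lt.mpr h1.le]; intro h; linarith : y ∉ Ico (0:ℝ) s),
          indicator_of_notMem (by simp [mem_Ici]; linarith : y ∉ Ici s)]
      · by_cases h2 : y < s
        · simp [hψp, h1, h2, indicator_of_notMem (by simpa using h1 : y ∉ Iio (0:ℝ)),
            indicator_of_mem (mem_Ico.mpr ⟨not_lt.mp h1, h2⟩),
            indicator_of_notMem (by simpa using h2 : y ∉ Ici s)]
        · simp [hψp, h1, h2, indicator_of_notMem (by simpa using h1 : y ∉ Iio (0:ℝ)),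
            indicator_of_notMem (by simp [mem_Ico, not_lt.mp h2] : y ∉ Ico (0:ℝ) s),
            indicator_of_mem (mem_Ici.mpr (not_lt.mp h2))]
    rw [hrepr]
    exact ((hH.1.indicator measurableSet_Iio).add
      (memLp_indicator_const 2 measurableSet_Ico θ (Or.inr (by simp [Real.volume_Ico])))).add
      ((memL2_shift hH.1 s).indicator measurableSet_Ici)
  have hdψpL2 : MemLp dψp 2 volume := by
    have hrepr : dψp = (Iio (0:ℝ)).indicator dψ + (Ici s).indicator (fun y => dψ (y - s)) := by
      funext y
      by_cases h1 : y < 0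
      · simp [hdψp, h1, indicator_of_mem (mem_Iio.mpr h1),
          indicator_of_notMem (by simp [mem_Ici]; linarith : y ∉ Ici s)]
      · by_cases h2 : y < s
        · simp [hdψp, h1, h2, indicator_of_notMem (by simpa using h1 : y ∉ Iio (0:ℝ)),
            indicator_of_notMem (by simpa using h2 : y ∉ Ici s)]
        · simp [hdψp, h1, h2, indicator_of_notMem (by simpa using h1 : y ∉ Iio (0:ℝ)),
            indicator_of_mem (mem_Ici.mpr (not_lt.mp h2))]
    rw [hrepr]
    exact (hH.2.1.indicator measurableSet_Iio).add
      ((memL2_shift hH.2.1 s).indicator measurableSet_Ici)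
  have hiip : ∀ a b : ℝ, IntervalIntegrable dψp volume a b := intervalIntegrable_of_memL2 hdψpL2
  have hψp0 : ψp 0 = θ := by simp [hψp, hs]
  -- FTC
  have hFTC : ∀ t : ℝ, ψp t = ψp 0 + ∫ u in (0:ℝ)..t, dψp u := by
    intro t
    rcases lt_or_ge t 0 with ht | ht
    · have hcong : (∫ u in (0:ℝ)..t, dψp u) = ∫ u in (0:ℝ)..t, dψ u := by
        apply intervalIntegral.integral_congr_ae
        filter_upwards [ae_ne_point (0:ℝ)] with y hy0 hy
        have hy' : y ∈ Ioc t 0 := by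
          rwa [Set.uIoc_of_ge ht.le] at hy
        have : y < 0 := lt_of_le_of_ne hy'.2 hy0
        simp [hdψp, this]
      rw [hcong, hψp0]
      show ψp t = θ + _
      rw [hψp]; simp only [if_pos ht]
      rw [hθ]; exact hH.2.2 t
    · rcases lt_or_ge t s with hts | hts
      · have hcong : (∫ u in (0:ℝ)..t, dψp u) = ∫ u in (0:ℝ)..t, (0:ℝ) := by
          apply intervalIntegral.integral_congr
          intro y hy
          rw [Set.uIcc_of_le ht] at hy
          have h1 : ¬ y < 0 := not_lt.mpr hy.1
          have h2 : y < s := lt_of_le_of_lt hy.2 hts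
          simp [hdψp, h1, h2]
        rw [hcong, hψp0]
        show ψp t = θ + _
        rw [hψp]; simp [not_lt.mpr ht, hts]
      · have hsplit : (∫ u in (0:ℝ)..t, dψp u)
            = (∫ u in (0:ℝ)..s, dψp u) + ∫ u in s..t, dψp u :=
          (intervalIntegral.integral_add_adjacent_intervals (hiip 0 s) (hiip s t)).symm
        have h1 : (∫ u in (0:ℝ)..s, dψp u) = 0 := by
          have : (∫ u in (0:ℝ)..s, dψp u) = ∫ u in (0:ℝ)..s, (0:ℝ) := by
            apply intervalIntegral.integral_congr_ae
            filter_upwards [ae_ne_point s] with y hys hy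
            have hy' : y ∈ Ioc 0 s := by rwa [Set.uIoc_of_le hs.le] at hy
            have hy1 : ¬ y < 0 := not_lt.mpr hy'.1.le
            have hy2 : y < s := lt_of_le_of_ne hy'.2 hys
            simp [hdψp, hy1, hy2]
          simpa using this
        have h2 : (∫ u in s..t, dψp u) = ∫ u in s..t, dψ (u - s) := by
          apply intervalIntegral.integral_congr
          intro y hy
          rw [Set.uIcc_of_le hts] at hy
          have hy1 : ¬ y < 0 := not_lt.mpr (le_trans hs.le hy.1)
          have hy2 : ¬ y < s := not_lt.mpr hy.1
          simp [hdψp, hy1, hy2]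
        have h3 : (∫ u in s..t, dψ (u - s)) = ∫ u in (0:ℝ)..(t - s), dψ u := by
          have := intervalIntegral.integral_comp_sub_right (a := s) (b := t) (fun u => dψ u) s
          simpa using this
        have hψpt : ψp t = ψ (t - s) := by
          rw [hψp]
          simp [not_lt.mpr (le_trans hs.le hts), not_lt.mpr hts]
        rw [hsplit, h1, h2, h3, hψp0, hψpt, hθ]
        rw [hH.2.2 (t - s)]
        ring
  have hH1p : MemH1 ψp dψp := ⟨hψpL2, hdψpL2, hFTC⟩
  have hintp : Integrable ψp := by
    have hrepr : ψp = (Iio (0:ℝ)).indicator ψ + (Ico (0:ℝ) s).indicator (fun _ => θ)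
        + (Ici s).indicator (fun y => ψ (y - s)) := by
      funext y
      by_cases h1 : y < 0
      · simp [hψp, h1, indicator_of_mem (mem_Iio.mpr h1),
          indicator_of_notMem (by simp [mem_Ico, not_lt.mpr h1.le]; intro h; linarith : y ∉ Ico (0:ℝ) s),
          indicator_of_notMem (by simp [mem_Ici]; linarith : y ∉ Ici s)]
      · by_cases h2 : y < s
        · simp [hψp, h1, h2, indicator_of_notMem (by simpa using h1 : y ∉ Iio (0:ℝ)),
            indicator_of_mem (mem_Ico.mpr ⟨not_lt.mp h1, h2⟩),
            indicator_of_notMem (by simpa using h2 : y ∉ Ici s)]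
        · simp [hψp, h1, h2, indicator_of_notMem (by simpa using h1 : y ∉ Iio (0:ℝ)),
            indicator_of_notMem (by simp [mem_Ico, not_lt.mp h2] : y ∉ Ico (0:ℝ) s),
            indicator_of_mem (mem_Ici.mpr (not_lt.mp h2))]
    rw [hrepr]
    exact ((hint.integrableOn.integrable_indicator measurableSet_Iio).add
      ((integrableOn_const (C := θ) (by simp [Real.volume_Ico])).integrable_indicator
        measurableSet_Ico)).add
      ((integrable_shift hint s).integrableOn.integrable_indicator measurableSet_Ici)
  have hm1 : (∫ y in Iio (0:ℝ), ψp y) = ∫ y in Iio (0:ℝ), ψ y :=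
    setIntegral_congr_fun measurableSet_Iio (fun y hy => by simp [hψp, mem_Iio.mp hy])
  have hm2 : (∫ y in Ico (0:ℝ) s, ψp y) = s * θ := by
    rw [setIntegral_congr_fun measurableSet_Ico (g := fun _ => θ) (fun y hy => by
      simp [hψp, not_lt.mpr hy.1, hy.2]), setIntegral_const]
    simp [Real.volume_Ico, ENNReal.toReal_ofReal hs.le, hs.le]
  have hm3 : (∫ y in Ici s, ψp y) = ∫ y in Ici (0:ℝ), ψ y := by
    rw [setIntegral_congr_fun measurableSet_Ici (g := fun y => ψ (y - s)) (fun y hy => by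
      simp [hψp, not_lt.mpr (le_trans hs.le (mem_Ici.mp hy)), not_lt.mpr (mem_Ici.mp hy)])]
    exact ishift_set ψ measurableSet_Ici measurableSet_Ici s (fun y => by simp [mem_Ici, sub_nonneg])
  have hmass : (∫ y, ψp y) = (∫ y, ψ y) + s * θ := by
    rw [isplit3 hintp hs.le, hm1, hm2, hm3, isplit2 hint 0]
    ring
  have henergy : phaseEnergy c ψp dψp = phaseEnergy c ψ dψ + ENNReal.ofReal (s * c θ) := by
    unfold phaseEnergy
    rw [lsplit3 (fun y => ENNReal.ofReal ((1/2) * dψp y ^ 2 + c (ψp y))) hs.le,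
        lsplit2 (fun y => ENNReal.ofReal ((1/2) * dψ y ^ 2 + c (ψ y))) 0]
    have he1 : (∫⁻ y in Iio (0:ℝ), ENNReal.ofReal ((1/2) * dψp y ^ 2 + c (ψp y)))
        = ∫⁻ y in Iio (0:ℝ), ENNReal.ofReal ((1/2) * dψ y ^ 2 + c (ψ y)) := by
      apply setLIntegral_congr_fun_ae measurableSet_Iio
      apply Eventually.of_forall
      intro y hy
      simp [hψp, hdψp, mem_Iio.mp hy]
    have he2 : (∫⁻ y in Ico (0:ℝ) s, ENNReal.ofReal ((1/2) * dψp y ^ 2 + c (ψp y)))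
        = ENNReal.ofReal (s * c θ) := by
      rw [setLIntegral_congr_fun_ae measurableSet_Ico (Eventually.of_forall (fun y hy => by
        have h1 : ¬ y < 0 := not_lt.mpr hy.1
        simp only [hψp, hdψp, if_neg h1, if_pos hy.2]
        norm_num : ∀ y ∈ Ico (0:ℝ) s, ENNReal.ofReal ((1/2) * dψp y ^ 2 + c (ψp y))
          = ENNReal.ofReal (c θ)))]
      rw [setLIntegral_const, Real.volume_Ico, ← ENNReal.ofReal_mul hcθ]
      rw [show c θ * (s - 0) = s * c θ by ring]
    have he3 : (∫⁻ y in Ici s, ENNReal.ofReal ((1/2) * dψp y ^ 2 + c (ψp y)))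
        = ∫⁻ y in Ici (0:ℝ), ENNReal.ofReal ((1/2) * dψ y ^ 2 + c (ψ y)) := by
      rw [setLIntegral_congr_fun_ae measurableSet_Ici (Eventually.of_forall (fun y hy => by
        have h0 : ¬ y < 0 := not_lt.mpr (le_trans hs.le (mem_Ici.mp hy))
        have h1 : ¬ y < s := not_lt.mpr (mem_Ici.mp hy)
        simp only [hψp, hdψp, if_neg h0, if_neg h1] :
          ∀ y ∈ Ici s, ENNReal.ofReal ((1/2) * dψp y ^ 2 + c (ψp y))
            = ENNReal.ofReal ((1/2) * dψ (y - s) ^ 2 + c (ψ (y - s)))))]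
      exact lshift_set (fun u => ENNReal.ofReal ((1/2) * dψ u ^ 2 + c (ψ u)))
        measurableSet_Ici measurableSet_Ici s (fun y => by simp [mem_Ici, sub_nonneg])
    rw [he1, he2, he3, add_right_comm]
  have hnnp : ∀ y, 0 ≤ ψp y := by
    intro y
    rw [hψp]
    dsimp only
    split_ifs
    · exact hnn y
    · exact hθnn
    · exact hnn _
  calc tauC c ((∫ y, ψ y) + s * θ) ≤ phaseEnergy c ψp dψp :=
        tauC_le hH1p hnnp hintp hmass
    _ = phaseEnergy c ψ dψ + ENNReal.ofReal (s * c θ) := henergy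

lemma remove_slab {z c : ℝ → ℝ} (hznn : ∀ φ ∈ Ici (0:ℝ), 0 ≤ z φ)
    (hzmono : AntitoneOn z (Ici 0)) (hcz : ∀ φ, c φ = z φ * φ)
    {ψ dψ : ℝ → ℝ} (hH : MemH1 ψ dψ) (hnn : ∀ y, 0 ≤ ψ y)
    (heven : ∀ y, ψ (-y) = ψ y) (hmono : AntitoneOn ψ (Ici 0)) (hint : Integrable ψ)
    {h' : ℝ} (h0 : 0 ≤ h') (hlt : h' < ∫ y, ψ y) :
    tauC c ((∫ y, ψ y) - h') + ENNReal.ofReal (z (ψ 0) * h') ≤ phaseEnergy c ψ dψ := by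
  classical
  have hiiψ : ∀ a b : ℝ, IntervalIntegrable ψ volume a b := fun a b =>
    intervalIntegrable_iff.mpr hint.integrableOn
  -- find the cut length ℓ via the intermediate value theorem
  have hPcont : Continuous fun t : ℝ => ∫ u in (0:ℝ)..t, ψ u :=
    intervalIntegral.continuous_primitive hiiψ 0
  set G : ℝ → ℝ := fun ℓ => ∫ u in (-ℓ)..ℓ, ψ u with hG
  have hGℓeq : ∀ ℓ : ℝ, G ℓ = (∫ u in (0:ℝ)..ℓ, ψ u) - ∫ u in (0:ℝ)..(-ℓ), ψ u := by
    intro ℓ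
    rw [hG]
    dsimp only
    rw [← intervalIntegral.integral_add_adjacent_intervals (hiiψ 0 (-ℓ)) (hiiψ (-ℓ) ℓ)]
    ring
  have hGcont : Continuous G := by
    have : Continuous fun ℓ : ℝ => (∫ u in (0:ℝ)..ℓ, ψ u) - ∫ u in (0:ℝ)..(-ℓ), ψ u :=
      hPcont.sub (hPcont.comp continuous_neg)
    exact this.congr fun ℓ => (hGℓeq ℓ).symm
  have hGtend : Tendsto G atTop (𝓝 (∫ y, ψ y)) :=
    intervalIntegral_tendsto_integral hint tendsto_neg_atTop_atBot tendsto_id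
  obtain ⟨ℓ₀, hℓ₀⟩ : ∃ ℓ₀ : ℝ, 0 ≤ ℓ₀ ∧ h' < G ℓ₀ := by
    have h1 : ∀ᶠ ℓ in atTop, h' < G ℓ := hGtend.eventually (eventually_gt_nhds hlt)
    exact ((eventually_ge_atTop (0:ℝ)).and h1).exists
  have hG0 : G 0 = 0 := by simp [hG]
  obtain ⟨ℓ, hℓmem, hGℓ⟩ : ∃ ℓ ∈ Icc (0:ℝ) ℓ₀, G ℓ = h' := by
    have := intermediate_value_Icc hℓ₀.1 hGcont.continuousOn
    have hmem : h' ∈ Icc (G 0) (G ℓ₀) := by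
      rw [hG0]; exact ⟨h0, hℓ₀.2.le⟩
    obtain ⟨ℓ, hℓ, hℓ'⟩ := this hmem
    exact ⟨ℓ, hℓ, hℓ'⟩
  have hℓ0 : 0 ≤ ℓ := hℓmem.1
  have hnegℓ : -ℓ ≤ ℓ := by linarith
  -- removed mass over the set `Ico (-ℓ) ℓ`
  have hremIco : (∫ y in Ico (-ℓ) ℓ, ψ y) = h' := by
    rw [setIntegral_congr_set Ico_ae_eq_Ioc, ← intervalIntegral.integral_of_le hnegℓ]
    exact hGℓ
  -- the competitor obtained by removing the middle slab
  set ψm : ℝ → ℝ := fun y => if y < 0 then ψ (y - ℓ) else ψ (y + ℓ) with hψm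
  set dψm : ℝ → ℝ := fun y => if y < 0 then dψ (y - ℓ) else dψ (y + ℓ) with hdψm
  have hsub : ∀ f : ℝ → ℝ, (fun y : ℝ => f (y - -ℓ)) = fun y : ℝ => f (y + ℓ) := by
    intro f; funext y; rw [sub_neg_eq_add]
  have hreprgen : ∀ f : ℝ → ℝ, (fun y => if y < 0 then f (y - ℓ) else f (y + ℓ))
      = (Iio (0:ℝ)).indicator (fun y => f (y - ℓ)) + (Ici (0:ℝ)).indicator (fun y => f (y + ℓ)) := by
    intro f
    funext y
    by_cases h1 : y < 0
    · simp [h1, indicator_of_mem (mem_Iio.mpr h1),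
        indicator_of_notMem (by simpa using h1 : y ∉ Ici (0:ℝ))]
    · simp [h1, indicator_of_notMem (by simpa using h1 : y ∉ Iio (0:ℝ)),
        indicator_of_mem (mem_Ici.mpr (not_lt.mp h1))]
  have hψmL2 : MemLp ψm 2 volume := by
    rw [hψm, hreprgen ψ]
    refine ((memL2_shift hH.1 ℓ).indicator measurableSet_Iio).add ?_
    have := (memL2_shift hH.1 (-ℓ))
    rw [hsub ψ] at this
    exact this.indicator measurableSet_Ici
  have hdψmL2 : MemLp dψm 2 volume := by
    rw [hdψm, hreprgen dψ]
    refine ((memL2_shift hH.2.1 ℓ).indicator measurableSet_Iio).add ?_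
    have := (memL2_shift hH.2.1 (-ℓ))
    rw [hsub dψ] at this
    exact this.indicator measurableSet_Ici
  have hintm : Integrable ψm := by
    rw [hψm, hreprgen ψ]
    refine ((integrable_shift hint ℓ).integrableOn.integrable_indicator measurableSet_Iio).add ?_
    have := integrable_shift hint (-ℓ)
    rw [hsub ψ] at this
    exact this.integrableOn.integrable_indicator measurableSet_Ici
  have hψm0 : ψm 0 = ψ ℓ := by simp [hψm]
  have hFTC : ∀ t : ℝ, ψm t = ψm 0 + ∫ u in (0:ℝ)..t, dψm u := by
    intro t
    rcases lt_or_ge t 0 with ht | ht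
    · have hcong : (∫ u in (0:ℝ)..t, dψm u) = ∫ u in (0:ℝ)..t, dψ (u - ℓ) := by
        apply intervalIntegral.integral_congr_ae
        filter_upwards [ae_ne_point (0:ℝ)] with y hy0 hy
        have hy' : y ∈ Ioc t 0 := by rwa [Set.uIoc_of_ge ht.le] at hy
        have : y < 0 := lt_of_le_of_ne hy'.2 hy0
        simp [hdψm, this]
      have hshift : (∫ u in (0:ℝ)..t, dψ (u - ℓ)) = ∫ u in (-ℓ)..(t - ℓ), dψ u := by
        have := intervalIntegral.integral_comp_sub_right (a := (0:ℝ)) (b := t) (fun u => dψ u) ℓ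
        simpa using this
      have hdiff := memH1_diff hH (-ℓ) (t - ℓ)
      have hψmt : ψm t = ψ (t - ℓ) := by rw [hψm]; simp [ht]
      rw [hcong, hshift, hψm0, hψmt, hdiff, heven ℓ]
    · have hcong : (∫ u in (0:ℝ)..t, dψm u) = ∫ u in (0:ℝ)..t, dψ (u + ℓ) := by
        apply intervalIntegral.integral_congr
        intro y hy
        rw [Set.uIcc_of_le ht] at hy
        have h1 : ¬ y < 0 := not_lt.mpr hy.1
        simp [hdψm, h1]
      have hshift : (∫ u in (0:ℝ)..t, dψ (u + ℓ)) = ∫ u in ℓ..(t + ℓ), dψ u := by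
        have := intervalIntegral.integral_comp_add_right (a := (0:ℝ)) (b := t) (fun u => dψ u) ℓ
        simpa using this
      have hdiff := memH1_diff hH ℓ (t + ℓ)
      have hψmt : ψm t = ψ (t + ℓ) := by rw [hψm]; simp [not_lt.mpr ht]
      rw [hcong, hshift, hψm0, hψmt, hdiff]
  have hH1m : MemH1 ψm dψm := ⟨hψmL2, hdψmL2, hFTC⟩
  have hnnm : ∀ y, 0 ≤ ψm y := by
    intro y; rw [hψm]; dsimp only; split_ifs <;> exact hnn _
  -- mass of ψm
  have hm1 : (∫ y in Iio (0:ℝ), ψm y) = ∫ y in Iio (-ℓ), ψ y := by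
    rw [setIntegral_congr_fun measurableSet_Iio (g := fun y => ψ (y - ℓ)) (fun y hy => by
      simp [hψm, mem_Iio.mp hy])]
    exact ishift_set ψ measurableSet_Iio measurableSet_Iio ℓ (fun y => by
      simp only [mem_Iio, sub_lt_iff_lt_add]
      constructor <;> intro <;> linarith)
  have hm2 : (∫ y in Ici (0:ℝ), ψm y) = ∫ y in Ici ℓ, ψ y := by
    rw [setIntegral_congr_fun measurableSet_Ici (g := fun y => ψ (y + ℓ)) (fun y hy => by
      simp [hψm, not_lt.mpr (mem_Ici.mp hy)])]
    have := ishift_set ψ (A := Ici 0) (B := Ici ℓ) measurableSet_Ici measurableSet_Ici (-ℓ)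
      (fun y => by simp only [mem_Ici, sub_neg_eq_add]; constructor <;> intro <;> linarith)
    rw [hsub ψ] at this
    exact this
  have hmass : (∫ y, ψm y) = (∫ y, ψ y) - h' := by
    rw [isplit2 hintm 0, hm1, hm2]
    have := isplit3 hint hnegℓ
    rw [hremIco] at this
    linarith
  -- energy split
  have he1 : (∫⁻ y in Iio (0:ℝ), ENNReal.ofReal ((1/2) * dψm y ^ 2 + c (ψm y)))
      = ∫⁻ y in Iio (-ℓ), ENNReal.ofReal ((1/2) * dψ y ^ 2 + c (ψ y)) := by
    rw [setLIntegral_congr_fun_ae measurableSet_Iio (Eventually.of_forall (fun y hy => by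
      simp only [hψm, hdψm, if_pos (mem_Iio.mp hy)] :
        ∀ y ∈ Iio (0:ℝ), ENNReal.ofReal ((1/2) * dψm y ^ 2 + c (ψm y))
          = ENNReal.ofReal ((1/2) * dψ (y - ℓ) ^ 2 + c (ψ (y - ℓ)))))]
    exact lshift_set (fun u => ENNReal.ofReal ((1/2) * dψ u ^ 2 + c (ψ u)))
      measurableSet_Iio measurableSet_Iio ℓ (fun y => by
        simp only [mem_Iio, sub_lt_iff_lt_add]
        constructor <;> intro <;> linarith)
  have he2 : (∫⁻ y in Ici (0:ℝ), ENNReal.ofReal ((1/2) * dψm y ^ 2 + c (ψm y)))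
      = ∫⁻ y in Ici ℓ, ENNReal.ofReal ((1/2) * dψ y ^ 2 + c (ψ y)) := by
    rw [setLIntegral_congr_fun_ae measurableSet_Ici (Eventually.of_forall (fun y hy => by
      simp only [hψm, hdψm, if_neg (not_lt.mpr (mem_Ici.mp hy))] :
        ∀ y ∈ Ici (0:ℝ), ENNReal.ofReal ((1/2) * dψm y ^ 2 + c (ψm y))
          = ENNReal.ofReal ((1/2) * dψ (y + ℓ) ^ 2 + c (ψ (y + ℓ)))))]
    have := lshift_set (fun u => ENNReal.ofReal ((1/2) * dψ u ^ 2 + c (ψ u)))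
      (A := Ici 0) (B := Ici ℓ) measurableSet_Ici measurableSet_Ici (-ℓ)
      (fun y => by simp only [mem_Ici, sub_neg_eq_add]; constructor <;> intro <;> linarith)
    simp only [sub_neg_eq_add] at this
    exact this
  have henergym : phaseEnergy c ψm dψm
      = (∫⁻ y in Iio (-ℓ), ENNReal.ofReal ((1/2) * dψ y ^ 2 + c (ψ y)))
        + ∫⁻ y in Ici ℓ, ENNReal.ofReal ((1/2) * dψ y ^ 2 + c (ψ y)) := by
    unfold phaseEnergy
    rw [lsplit2 (fun y => ENNReal.ofReal ((1/2) * dψm y ^ 2 + c (ψm y))) 0, he1, he2]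
  -- the removed energy dominates lam * h'
  have hpeak : ∀ y, ψ y ≤ ψ 0 := peak_le heven hmono
  have hzpt : ∀ y : ℝ, z (ψ 0) * ψ y ≤ (1/2) * dψ y ^ 2 + c (ψ y) := by
    intro y
    have h1 : z (ψ 0) ≤ z (ψ y) := hzmono (mem_Ici.mpr (hnn y)) (mem_Ici.mpr (hnn 0)) (hpeak y)
    have h2 : z (ψ 0) * ψ y ≤ z (ψ y) * ψ y := mul_le_mul_of_nonneg_right h1 (hnn y)
    have h3 : (0:ℝ) ≤ (1/2) * dψ y ^ 2 := by positivity
    rw [hcz]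
    linarith
  have hbound : ENNReal.ofReal (z (ψ 0) * h')
      ≤ ∫⁻ y in Ico (-ℓ) ℓ, ENNReal.ofReal ((1/2) * dψ y ^ 2 + c (ψ y)) := by
    have step1 : ENNReal.ofReal (z (ψ 0) * h')
        = ∫⁻ y in Ico (-ℓ) ℓ, ENNReal.ofReal (z (ψ 0) * ψ y) := by
      rw [← hremIco, ← MeasureTheory.integral_const_mul]
      exact ofReal_integral_eq_lintegral_ofReal ((hint.const_mul (z (ψ 0))).integrableOn)
        (Eventually.of_forall (fun y => mul_nonneg (hznn _ (mem_Ici.mpr (hnn 0))) (hnn y)))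
    rw [step1]
    exact lintegral_mono (fun y => ENNReal.ofReal_le_ofReal (hzpt y))
  -- conclusion
  have htau : tauC c ((∫ y, ψ y) - h') ≤ phaseEnergy c ψm dψm :=
    tauC_le hH1m hnnm hintm hmass
  have hsplitE : phaseEnergy c ψ dψ
      = phaseEnergy c ψm dψm + ∫⁻ y in Ico (-ℓ) ℓ, ENNReal.ofReal ((1/2) * dψ y ^ 2 + c (ψ y)) := by
    rw [henergym]
    show (∫⁻ y, ENNReal.ofReal ((1/2) * dψ y ^ 2 + c (ψ y))) = _
    rw [lsplit3 (fun y => ENNReal.ofReal ((1/2) * dψ y ^ 2 + c (ψ y))) hnegℓ]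
    ring
  calc tauC c ((∫ y, ψ y) - h') + ENNReal.ofReal (z (ψ 0) * h')
      ≤ phaseEnergy c ψm dψm + ∫⁻ y in Ico (-ℓ) ℓ, ENNReal.ofReal ((1/2) * dψ y ^ 2 + c (ψ y)) :=
        add_le_add htau hbound
    _ = phaseEnergy c ψ dψ := hsplitE.symm

lemma energy_lt_top {z c : ℝ → ℝ} (hznn : ∀ φ ∈ Ici (0:ℝ), 0 ≤ z φ)
    (hzmono : AntitoneOn z (Ici 0)) (hcz : ∀ φ, c φ = z φ * φ)
    {ψ dψ : ℝ → ℝ} (hH : MemH1 ψ dψ) (hnn : ∀ y, 0 ≤ ψ y) (hint : Integrable ψ) :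
    phaseEnergy c ψ dψ ≠ ⊤ := by
  have hz0 : 0 ≤ z 0 := hznn 0 (mem_Ici.mpr le_rfl)
  have hg : Integrable (fun y => (1/2) * dψ y ^ 2 + z 0 * ψ y) :=
    ((hH.2.1.integrable_sq).const_mul _).add (hint.const_mul _)
  have hpt : ∀ y, (1/2) * dψ y ^ 2 + c (ψ y) ≤ (1/2) * dψ y ^ 2 + z 0 * ψ y := by
    intro y
    have h1 : z (ψ y) ≤ z 0 := hzmono (mem_Ici.mpr le_rfl) (mem_Ici.mpr (hnn y)) (hnn y)
    have h2 := mul_le_mul_of_nonneg_right h1 (hnn y)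
    rw [hcz]; linarith
  have hle : phaseEnergy c ψ dψ ≤ ∫⁻ y, ENNReal.ofReal ((1/2) * dψ y ^ 2 + z 0 * ψ y) :=
    lintegral_mono fun y => ENNReal.ofReal_le_ofReal (hpt y)
  have heq : (∫⁻ y, ENNReal.ofReal ((1/2) * dψ y ^ 2 + z 0 * ψ y))
      = ENNReal.ofReal (∫ y, (1/2) * dψ y ^ 2 + z 0 * ψ y) :=
    (ofReal_integral_eq_lintegral_ofReal hg (Eventually.of_forall fun y =>
      add_nonneg (by positivity) (mul_nonneg hz0 (hnn y)))).symm
  exact ((hle.trans_eq heq).trans_lt ENNReal.ofReal_lt_top).ne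

/-- alternative characterization of optimal phase field functions:
with `λ = z(ψ̂(0))`, the minimizer `ψ̂` minimizes the energy penalized by `-λ·mass`
among profiles of the same height, and `λ` lies between the one-sided derivatives
of `τ` at `w`. -/
theorem alternative_characterization_of_minimizer
    (z : ℝ → ℝ) (hznn : ∀ φ ∈ Ici (0:ℝ), 0 ≤ z φ)
    (hzmono : AntitoneOn z (Ici 0))
    (hzlsc : LowerSemicontinuousOn z (Ici 0))
    (c : ℝ → ℝ) (hcz : ∀ φ, c φ = z φ * φ)
    (τ : ℝ → ℝ) (hτ : ∀ v, τ v = (tauC c v).toReal)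
    (L : ℝ) (hL : Tendsto (fun v => τ v / v) (𝓝[>] 0) (𝓝 L))
    (w : ℝ) (hw : 0 < w) (hne : τ w ≠ w * L)
    (ψh dψh : ℝ → ℝ)
    (hψh : MemH1 ψh dψh) (hψhnn : ∀ y, 0 ≤ ψh y)
    (hψhbd : ∃ M : ℝ, ∀ y, ψh y ≤ M) (hψhcont : Continuous ψh)
    (hψheven : ∀ y, ψh (-y) = ψh y) (hψhmono : AntitoneOn ψh (Ici 0))
    (hψhint : Integrable ψh) (hψhmass : (∫ y, ψh y) = w)
    (hψhmin : phaseEnergy c ψh dψh = tauC c w)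
    (lam : ℝ) (hlam : lam = z (ψh 0)) :
    (∀ ψ dψ : ℝ → ℝ, MemH1 ψ dψ → (∀ y, 0 ≤ ψ y) → (∀ y, ψ (-y) = ψ y) →
      AntitoneOn ψ (Ici 0) → Integrable ψ → ψ 0 = ψh 0 →
      phaseEnergy c ψh dψh + ENNReal.ofReal (lam * ∫ y, ψ y) ≤
        phaseEnergy c ψ dψ + ENNReal.ofReal (lam * w)) ∧
    (∀ h : ℝ, 0 < h → τ (w + h) - τ w ≤ lam * h) ∧
    (∀ h : ℝ, 0 < h → h < w → lam * h ≤ τ w - τ (w - h)) := by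
  have hθnn : 0 ≤ ψh 0 := hψhnn 0
  have hθpos : 0 < ψh 0 := by
    rcases lt_or_eq_of_le hθnn with h | h
    · exact h
    · exfalso
      have hz : ∀ y, ψh y = 0 := fun y =>
        le_antisymm (by rw [h]; exact peak_le hψheven hψhmono y) (hψhnn y)
      have : (∫ y, ψh y) = 0 := by
        rw [funext hz]; simp
      rw [hψhmass] at this; linarith
  have hlamnn : 0 ≤ lam := by rw [hlam]; exact hznn _ (mem_Ici.mpr hθnn)
  have hfin : phaseEnergy c ψh dψh ≠ ⊤ := energy_lt_top hznn hzmono hcz hψh hψhnn hψhint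
  have hTfin : tauC c w ≠ ⊤ := hψhmin ▸ hfin
  refine ⟨?_, ?_, ?_⟩
  · -- (i)
    intro ψ dψ hH hnn heven hmono hint hheight
    set m := ∫ y, ψ y with hm
    have hmnn : 0 ≤ m := integral_nonneg hnn
    rcases lt_trichotomy m w with hmw | hmw | hmw
    · have hs : 0 < (w - m) / ψh 0 := div_pos (by linarith) hθpos
      have h1 := insert_plateau hznn hcz hH hnn hint hs
      rw [hheight, ← hm] at h1
      have hmass : m + (w - m) / ψh 0 * ψh 0 = w := by field_simp; ring
      have hcoef : (w - m) / ψh 0 * c (ψh 0) = lam * (w - m) := by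
        rw [hcz, hlam]; field_simp
      rw [hmass, hcoef] at h1
      calc phaseEnergy c ψh dψh + ENNReal.ofReal (lam * m)
          = tauC c w + ENNReal.ofReal (lam * m) := by rw [hψhmin]
        _ ≤ (phaseEnergy c ψ dψ + ENNReal.ofReal (lam * (w - m))) + ENNReal.ofReal (lam * m) :=
            add_le_add_left h1 _
        _ = phaseEnergy c ψ dψ + ENNReal.ofReal (lam * w) := by
            rw [add_assoc, ← ENNReal.ofReal_add (mul_nonneg hlamnn (by linarith))
              (mul_nonneg hlamnn hmnn), show lam * (w - m) + lam * m = lam * w by ring]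
    · have h1 : tauC c w ≤ phaseEnergy c ψ dψ := tauC_le hH hnn hint (by rw [← hm, hmw])
      rw [hψhmin, hmw]
      exact add_le_add_left h1 _
    · have h1 := remove_slab hznn hzmono hcz hH hnn heven hmono hint
        (h0 := sub_nonneg.mpr hmw.le) (hlt := by rw [← hm]; linarith)
      rw [← hm, show m - (m - w) = w by ring, hheight, ← hlam] at h1
      calc phaseEnergy c ψh dψh + ENNReal.ofReal (lam * m)
          = (tauC c w + ENNReal.ofReal (lam * (m - w))) + ENNReal.ofReal (lam * w) := by
            rw [hψhmin, add_assoc, ← ENNReal.ofReal_add (mul_nonneg hlamnn (by linarith))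
              (mul_nonneg hlamnn hw.le), show lam * (m - w) + lam * w = lam * m by ring]
        _ ≤ phaseEnergy c ψ dψ + ENNReal.ofReal (lam * w) := add_le_add_left h1 _
  · -- (ii)
    intro h hh
    have hs : 0 < h / ψh 0 := div_pos hh hθpos
    have h1 := insert_plateau hznn hcz hψh hψhnn hψhint hs
    have e1 : w + h / ψh 0 * ψh 0 = w + h := by field_simp
    have e2 : h / ψh 0 * c (ψh 0) = lam * h := by rw [hcz, hlam]; field_simp
    rw [hψhmass, e1, e2, hψhmin] at h1
    have hBfin : tauC c w + ENNReal.ofReal (lam * h) ≠ ⊤ :=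
      ENNReal.add_ne_top.mpr ⟨hTfin, ENNReal.ofReal_ne_top⟩
    have h2 := ENNReal.toReal_mono hBfin h1
    rw [ENNReal.toReal_add hTfin ENNReal.ofReal_ne_top,
      ENNReal.toReal_ofReal (mul_nonneg hlamnn hh.le)] at h2
    rw [hτ (w + h), hτ w]
    linarith [h2]
  · -- (iii)
    intro h hh hhw
    have h1 := remove_slab hznn hzmono hcz hψh hψhnn hψheven hψhmono hψhint
      (h0 := hh.le) (hlt := by rw [hψhmass]; exact hhw)
    rw [hψhmass, ← hlam, hψhmin] at h1
    have hAfin : tauC c (w - h) ≠ ⊤ :=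
      ne_top_of_le_ne_top hTfin (le_trans (le_add_right le_rfl) h1)
    have h2 := ENNReal.toReal_mono hTfin h1
    rw [ENNReal.toReal_add hAfin ENNReal.ofReal_ne_top,
      ENNReal.toReal_ofReal (mul_nonneg hlamnn hh.le)] at h2
    rw [hτ w, hτ (w - h)]
    linarith [h2]
end

section
/- Let z : [0,∞) → [0,∞) be nonincreasing on (0,∞), set c(φ) = z(φ)·φ, and suppose the induced transport cost τ^c is finite on [0,∞). Then ∫_0^1 √(c(φ)) dφ < ∞, and consequently liminf_{φ→0+} z(φ)·φ³ = 0. -/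
open MeasureTheory Filter Set
open scoped ENNReal Topology

-- Young-type pointwise inequality
lemma young_aux {x m cc : ℝ} (hm : 0 ≤ m) (hc : m ≤ cc) :
    Real.sqrt (2 * m) * |x| ≤ 1/2 * x ^ 2 + cc := by
  have h := Real.sq_sqrt (by linarith : (0:ℝ) ≤ 2 * m)
  nlinarith [sq_nonneg (|x| - Real.sqrt (2 * m)), sq_abs x, Real.sqrt_nonneg (2 * m)]

-- crossing construction
lemma crossing (ψ : ℝ → ℝ) (hcont : Continuous ψ)
    (hsmall : ∀ r t : ℝ, 0 < r → ∃ q, t < q ∧ ψ q < r)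
    (a b p : ℝ) (ha : 0 < a) (hab : a < b) (hp : b ≤ ψ p) :
    ∃ s e : ℝ, p ≤ s ∧ s < e ∧ ψ s = b ∧ ψ e = a ∧
      ∀ t ∈ Icc s e, a ≤ ψ t ∧ ψ t ≤ b := by
  obtain ⟨q, hpq, hq⟩ := hsmall a p ha
  set S : Set ℝ := Icc p q ∩ ψ ⁻¹' (Iic a) with hS
  have hSc : IsClosed S := isClosed_Icc.inter (isClosed_Iic.preimage hcont)
  have hSne : S.Nonempty := ⟨q, ⟨hpq.le, le_rfl⟩, hq.le⟩
  have hSbd : BddBelow S := ⟨p, fun t ht => ht.1.1⟩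
  set e := sInf S with he
  have heS : e ∈ S := hSc.csInf_mem hSne hSbd
  have hea : ψ e ≤ a := heS.2
  have hpe : p < e := lt_of_le_of_ne heS.1.1 (fun h => by rw [← h] at hea; linarith)
  have hlt : ∀ t, p ≤ t → t < e → a < ψ t := by
    intro t h1 h2
    by_contra hh; push_neg at hh
    have : t ∈ S := ⟨⟨h1, le_trans h2.le heS.1.2⟩, hh⟩
    exact absurd (csInf_le hSbd this) (not_le.mpr h2)
  have hψe : ψ e = a := by
    refine le_antisymm hea ?_
    have hC : IsClosed {t : ℝ | a ≤ ψ t} := isClosed_le continuous_const hcont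
    have hsub : Ico p e ⊆ {t : ℝ | a ≤ ψ t} := fun t ht => (hlt t ht.1 ht.2).le
    have : e ∈ closure (Ico p e) := by
      rw [closure_Ico hpe.ne]; exact right_mem_Icc.2 hpe.le
    exact hC.closure_subset_iff.mpr hsub this
  set S2 : Set ℝ := Icc p e ∩ ψ ⁻¹' (Ici b) with hS2
  have hS2c : IsClosed S2 := isClosed_Icc.inter (isClosed_Ici.preimage hcont)
  have hS2ne : S2.Nonempty := ⟨p, ⟨le_rfl, hpe.le⟩, hp⟩
  have hS2bd : BddAbove S2 := ⟨e, fun t ht => ht.1.2⟩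
  set s := sSup S2 with hs
  have hsS : s ∈ S2 := hS2c.csSup_mem hS2ne hS2bd
  have hbs : b ≤ ψ s := hsS.2
  have hse : s < e := lt_of_le_of_ne hsS.1.2 (fun h => by rw [h, hψe] at hbs; linarith)
  have hgt : ∀ t, s < t → t ≤ e → ψ t < b := by
    intro t h1 h2
    by_contra hh; push_neg at hh
    have : t ∈ S2 := ⟨⟨le_trans hsS.1.1 h1.le, h2⟩, hh⟩
    exact absurd (le_csSup hS2bd this) (not_le.mpr h1)
  have hψs : ψ s = b := by
    refine le_antisymm ?_ hbs
    have hC : IsClosed {t : ℝ | ψ t ≤ b} := isClosed_le hcont continuous_const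
    have hsub : Ioc s e ⊆ {t : ℝ | ψ t ≤ b} := fun t ht => (hgt t ht.1 ht.2).le
    have : s ∈ closure (Ioc s e) := by
      rw [closure_Ioc hse.ne]; exact left_mem_Icc.2 hse.le
    exact hC.closure_subset_iff.mpr hsub this
  refine ⟨s, e, hsS.1.1, hse, hψs, hψe, fun t ht => ⟨?_, ?_⟩⟩
  · rcases eq_or_lt_of_le ht.2 with h | h
    · rw [h, hψe]
    · exact (hlt t (le_trans hsS.1.1 ht.1) h).le
  · rcases eq_or_lt_of_le ht.1 with h | h
    · rw [← h, hψs]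
    · exact (hgt t h ht.2).le


/-- a priori estimates on a phase field cost inducing a finite transport
cost: `∫₀¹ √(c(φ)) dφ < ∞` and consequently `liminf_{φ→0⁺} z(φ)·φ³ = 0`. -/
theorem a_priori_estimates_on_phase_field_cost
    (z : ℝ → ℝ) (hznn : ∀ φ ∈ Ici (0:ℝ), 0 ≤ z φ)
    (hzmono : AntitoneOn z (Ioi 0))
    (c : ℝ → ℝ) (hcz : ∀ φ, c φ = z φ * φ)
    (hfin : ∀ w ∈ Ici (0:ℝ), tauC c w < ⊤) :
    (∫⁻ φ in Ioc (0:ℝ) 1, ENNReal.ofReal (Real.sqrt (c φ))) < ⊤ ∧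
    Filter.liminf (fun φ => z φ * φ ^ 3) (𝓝[>] (0:ℝ)) = 0 := by
  -- extract a competitor with finite energy for w = 1
  have h1 : tauC c 1 < ⊤ := hfin 1 (by norm_num)
  rw [tauC, iInf_lt_iff] at h1
  obtain ⟨⟨ψ, dψ⟩, h1⟩ := h1
  rw [iInf_lt_iff] at h1
  obtain ⟨⟨⟨hψ2, hdψ2, hFTC⟩, hpos, hint, hsum⟩, hE⟩ := h1
  simp only [phaseEnergy] at hE
  -- interval integrability of dψ
  have hii : ∀ a b : ℝ, IntervalIntegrable dψ volume a b := by
    intro a b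
    rw [intervalIntegrable_iff]
    have : IsFiniteMeasure (volume.restrict (Set.uIoc a b)) := by
      constructor
      rw [Measure.restrict_apply_univ]
      exact measure_Ioc_lt_top
    exact (hdψ2.restrict _).integrable one_le_two
  -- continuity of ψ
  have hcont : Continuous ψ := by
    have h : Continuous fun t => ψ 0 + ∫ s in (0:ℝ)..t, dψ s :=
      continuous_const.add (intervalIntegral.continuous_primitive hii 0)
    exact h.congr fun t => (hFTC t).symm
  -- existence of a point where ψ is positive
  have hψex : ∃ t₀ : ℝ, 0 < ψ t₀ := by
    by_contra h; push_neg at h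
    have hzero : ψ = fun _ => 0 := funext fun t => le_antisymm (h t) (hpos t)
    rw [hzero] at hsum
    simp at hsum
  obtain ⟨t₀, ht₀⟩ := hψex
  -- small values beyond any point
  have hsmall : ∀ r t : ℝ, 0 < r → ∃ q, t < q ∧ ψ q < r := by
    intro r t hr
    by_contra h; push_neg at h
    have hl : (∫⁻ y, (‖ψ y‖₊ : ℝ≥0∞)) < ⊤ := hint.2
    have h2 : (∫⁻ y in Ioi t, ENNReal.ofReal r) ≤ ∫⁻ y in Ioi t, (‖ψ y‖₊ : ℝ≥0∞) := by
      refine lintegral_mono_ae (ae_restrict_of_forall_mem measurableSet_Ioi fun y hy => ?_)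
      exact le_trans (ENNReal.ofReal_le_ofReal (h y hy)) (Real.ofReal_le_enorm _)
    rw [setLIntegral_const, Real.volume_Ioi, ENNReal.mul_top (by simp [hr.ne', ENNReal.ofReal_eq_zero, not_le, hr])] at h2
    have h3 : (∫⁻ y in Ioi t, (‖ψ y‖₊ : ℝ≥0∞)) ≤ ∫⁻ y, (‖ψ y‖₊ : ℝ≥0∞) :=
      setLIntegral_le_lintegral _ _
    rw [top_le_iff.mp h2] at h3
    rw [top_le_iff.mp h3] at hl
    exact absurd hl (by simp)
  -- dyadic levels
  set A : ℕ → ℝ := fun k => (2⁻¹ : ℝ) ^ k with hA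
  have hApos : ∀ k, 0 < A k := fun k => pow_pos (by norm_num) k
  have hAsucc : ∀ k, A (k + 1) = A k * 2⁻¹ := fun k => pow_succ _ _
  have hAlt : ∀ k, A (k + 1) < A k := by
    intro k; rw [hAsucc]; nlinarith [hApos k]
  obtain ⟨k₀, hk₀⟩ : ∃ k₀ : ℕ, A k₀ < min (ψ t₀) 1 :=
    exists_pow_lt_of_lt_one (lt_min ht₀ one_pos) (by norm_num)
  -- the crossing step
  have hstep : ∀ (k : ℕ) (p : ℝ), A (k₀ + k) ≤ ψ p →
      ∃ se : ℝ × ℝ, p ≤ se.1 ∧ se.1 < se.2 ∧ ψ se.1 = A (k₀ + k) ∧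
        ψ se.2 = A (k₀ + k + 1) ∧
        ∀ t ∈ Icc se.1 se.2, A (k₀ + k + 1) ≤ ψ t ∧ ψ t ≤ A (k₀ + k) := by
    intro k p hp
    obtain ⟨s, e, h1, h2, h3, h4, h5⟩ :=
      crossing ψ hcont hsmall (A (k₀ + k + 1)) (A (k₀ + k)) p (hApos _) (hAlt _) hp
    exact ⟨(s, e), h1, h2, h3, h4, h5⟩
  choose! F hF1 hF2 hF3 hF4 hF5 using hstep
  -- ladder
  set P : ℕ → ℝ := fun k => Nat.rec t₀ (fun k pk => (F k pk).2) k with hPdef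
  have hPsucc : ∀ k, P (k + 1) = (F k (P k)).2 := fun k => rfl
  have hPstep : ∀ k, A (k₀ + k) ≤ ψ (P k) := by
    intro k
    induction k with
    | zero =>
      have : A k₀ ≤ ψ t₀ := le_trans hk₀.le (min_le_left _ _)
      exact this
    | succ k ih =>
      rw [hPsucc k, hF4 k (P k) ih, Nat.add_succ]
  set s : ℕ → ℝ := fun k => (F k (P k)).1 with hsdef
  set e : ℕ → ℝ := fun k => (F k (P k)).2 with hedef
  have hse : ∀ k, s k < e k := fun k => hF2 k (P k) (hPstep k)
  have hψs : ∀ k, ψ (s k) = A (k₀ + k) := fun k => hF3 k (P k) (hPstep k)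
  have hψe : ∀ k, ψ (e k) = A (k₀ + k + 1) := fun k => hF4 k (P k) (hPstep k)
  have hband : ∀ k, ∀ t ∈ Icc (s k) (e k), A (k₀ + k + 1) ≤ ψ t ∧ ψ t ≤ A (k₀ + k) :=
    fun k => hF5 k (P k) (hPstep k)
  have hes : ∀ k, e k ≤ s (k + 1) := by
    intro k
    have := hF1 (k + 1) (P (k + 1)) (hPstep (k + 1))
    rwa [hPsucc k] at this
  have hmono : ∀ i j, i < j → e i ≤ s j := by
    intro i j hij
    induction j with
    | zero => omega
    | succ j ih =>
      rcases Nat.lt_succ_iff_lt_or_eq.mp hij with h | h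
      · exact le_trans (ih h) (le_trans (hse j).le (hes j))
      · rw [h]; exact hes j
  have hdisj : Pairwise (Function.onFun Disjoint fun k => Ioc (s k) (e k)) := by
    intro i j hij
    simp only [Function.onFun]
    rcases Ne.lt_or_gt hij with h | h
    · exact Set.disjoint_left.mpr fun x hx1 hx2 =>
        absurd (lt_of_le_of_lt (le_trans hx1.2 (hmono i j h)) hx2.1) (lt_irrefl x)
    · exact Set.disjoint_left.mpr fun x hx1 hx2 =>
        absurd (lt_of_le_of_lt (le_trans hx2.2 (hmono j i h)) hx1.1) (lt_irrefl x)
  -- the minimum of c on each band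
  set m : ℕ → ℝ := fun k => z (A (k₀ + k)) * A (k₀ + k + 1) with hm
  have hmnn : ∀ k, 0 ≤ m k := fun k =>
    mul_nonneg (hznn _ (hApos _).le) (hApos _).le
  have hck : ∀ k, ∀ t ∈ Icc (s k) (e k), m k ≤ c (ψ t) := by
    intro k t ht
    obtain ⟨h1, h2⟩ := hband k t ht
    have hψt0 : 0 < ψ t := lt_of_lt_of_le (hApos _) h1
    have hzz : z (A (k₀ + k)) ≤ z (ψ t) := hzmono hψt0 (hApos _) h2
    rw [hcz]
    calc m k = z (A (k₀ + k)) * A (k₀ + k + 1) := rfl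
      _ ≤ z (A (k₀ + k)) * ψ t := mul_le_mul_of_nonneg_left h1 (hznn _ (hApos _).le)
      _ ≤ z (ψ t) * ψ t := mul_le_mul_of_nonneg_right hzz hψt0.le
  -- lower bound on the energy on each band
  have hEk : ∀ k, ENNReal.ofReal (Real.sqrt (2 * m k) * A (k₀ + k + 1)) ≤
      ∫⁻ y in Ioc (s k) (e k), ENNReal.ofReal (1 / 2 * dψ y ^ 2 + c (ψ y)) := by
    intro k
    have hFTCk : ψ (e k) - ψ (s k) = ∫ y in (s k)..(e k), dψ y := by
      have h1 := hFTC (e k)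
      have h2 := hFTC (s k)
      have h3 := intervalIntegral.integral_add_adjacent_intervals
        (hii 0 (s k)) (hii (s k) (e k))
      simp only at h1 h2
      linarith
    have key1 : A (k₀ + k + 1) ≤ ∫ y in (s k)..(e k), |dψ y| := by
      have habs : |∫ y in (s k)..(e k), dψ y| ≤ ∫ y in (s k)..(e k), |dψ y| :=
        intervalIntegral.abs_integral_le_integral_abs (hse k).le
      have hdiff : A (k₀ + k + 1) = ψ (s k) - ψ (e k) := by
        rw [hψs, hψe, hAsucc (k₀ + k)]; ring
      calc A (k₀ + k + 1) = ψ (s k) - ψ (e k) := hdiff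
        _ ≤ |ψ (e k) - ψ (s k)| := by rw [abs_sub_comm]; exact le_abs_self _
        _ = |∫ y in (s k)..(e k), dψ y| := by rw [hFTCk]
        _ ≤ _ := habs
    have hIoc : IntegrableOn (fun y => |dψ y|) (Ioc (s k) (e k)) := (hii (s k) (e k)).1.abs
    have key2 : ENNReal.ofReal (∫ y in Ioc (s k) (e k), Real.sqrt (2 * m k) * |dψ y|) =
        ∫⁻ y in Ioc (s k) (e k), ENNReal.ofReal (Real.sqrt (2 * m k) * |dψ y|) := by
      refine ofReal_integral_eq_lintegral_ofReal (hIoc.const_mul _) ?_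
      exact Eventually.of_forall fun y => mul_nonneg (Real.sqrt_nonneg _) (abs_nonneg _)
    calc ENNReal.ofReal (Real.sqrt (2 * m k) * A (k₀ + k + 1))
        ≤ ENNReal.ofReal (∫ y in Ioc (s k) (e k), Real.sqrt (2 * m k) * |dψ y|) := by
          refine ENNReal.ofReal_le_ofReal ?_
          rw [integral_const_mul, ← intervalIntegral.integral_of_le (hse k).le]
          exact mul_le_mul_of_nonneg_left key1 (Real.sqrt_nonneg _)
      _ = ∫⁻ y in Ioc (s k) (e k), ENNReal.ofReal (Real.sqrt (2 * m k) * |dψ y|) := key2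
      _ ≤ ∫⁻ y in Ioc (s k) (e k), ENNReal.ofReal (1 / 2 * dψ y ^ 2 + c (ψ y)) := by
          refine lintegral_mono_ae (ae_restrict_of_forall_mem measurableSet_Ioc fun y hy => ?_)
          exact ENNReal.ofReal_le_ofReal
            (young_aux (hmnn k) (hck k y (Ioc_subset_Icc_self hy)))
  -- summation over bands
  have hsumE : (∑' k : ℕ, ENNReal.ofReal (Real.sqrt (2 * m k) * A (k₀ + k + 1))) < ⊤ := by
    have hstep1 : (∑' k : ℕ, ENNReal.ofReal (Real.sqrt (2 * m k) * A (k₀ + k + 1))) ≤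
        ∑' k : ℕ, ∫⁻ y in Ioc (s k) (e k), ENNReal.ofReal (1 / 2 * dψ y ^ 2 + c (ψ y)) :=
      ENNReal.tsum_le_tsum hEk
    have hstep2 : (∑' k : ℕ, ∫⁻ y in Ioc (s k) (e k),
          ENNReal.ofReal (1 / 2 * dψ y ^ 2 + c (ψ y))) =
        ∫⁻ y in ⋃ k, Ioc (s k) (e k), ENNReal.ofReal (1 / 2 * dψ y ^ 2 + c (ψ y)) :=
      (lintegral_iUnion (fun k => measurableSet_Ioc) hdisj _).symm
    have hstep3 : (∫⁻ y in ⋃ k, Ioc (s k) (e k),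
          ENNReal.ofReal (1 / 2 * dψ y ^ 2 + c (ψ y))) ≤
        ∫⁻ y, ENNReal.ofReal (1 / 2 * dψ y ^ 2 + c (ψ y)) :=
      setLIntegral_le_lintegral _ _
    exact lt_of_le_of_lt (hstep1.trans (hstep2 ▸ hstep3)) hE
  -- covering of (0, A k₀] by dyadic bands
  have hcover : Ioc (0:ℝ) (A k₀) ⊆ ⋃ k : ℕ, Ioc (A (k₀ + k + 1)) (A (k₀ + k)) := by
    intro x hx
    have hex : ∃ k : ℕ, A (k₀ + k) < x := by
      obtain ⟨n, hn⟩ := exists_pow_lt_of_lt_one hx.1 (by norm_num : (2⁻¹ : ℝ) < 1)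
      exact ⟨n, lt_of_le_of_lt
        (pow_le_pow_of_le_one (by norm_num) (by norm_num) (Nat.le_add_left n k₀)) hn⟩
    have hk := Nat.find_spec hex
    have hk0 : Nat.find hex ≠ 0 := by
      intro h
      rw [h] at hk
      simp only [Nat.add_zero] at hk
      exact absurd hx.2 (not_le.mpr hk)
    obtain ⟨j, hj⟩ := Nat.exists_eq_succ_of_ne_zero hk0
    have hjm : ¬ A (k₀ + j) < x := Nat.find_min hex (by omega)
    refine mem_iUnion.2 ⟨j, ⟨?_, not_lt.mp hjm⟩⟩
    have : A (k₀ + Nat.find hex) < x := hk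
    rwa [hj, Nat.add_succ] at this
  -- per-band upper bound for the sqrt integral
  have hbandInt : ∀ k : ℕ, (∫⁻ φ in Ioc (A (k₀ + k + 1)) (A (k₀ + k)),
        ENNReal.ofReal (Real.sqrt (c φ))) ≤
      ENNReal.ofReal (Real.sqrt (z (A (k₀ + k + 1)) * A (k₀ + k)) * A (k₀ + k + 1)) := by
    intro k
    have hb : ∀ φ ∈ Ioc (A (k₀ + k + 1)) (A (k₀ + k)),
        Real.sqrt (c φ) ≤ Real.sqrt (z (A (k₀ + k + 1)) * A (k₀ + k)) := by
      intro φ hφ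
      refine Real.sqrt_le_sqrt ?_
      rw [hcz]
      have hφ0 : 0 < φ := lt_trans (hApos _) hφ.1
      have hz1 : z φ ≤ z (A (k₀ + k + 1)) := hzmono (hApos _) hφ0 hφ.1.le
      calc z φ * φ ≤ z (A (k₀ + k + 1)) * φ := mul_le_mul_of_nonneg_right hz1 hφ0.le
        _ ≤ z (A (k₀ + k + 1)) * A (k₀ + k) :=
          mul_le_mul_of_nonneg_left hφ.2 (hznn _ (hApos _).le)
    calc (∫⁻ φ in Ioc (A (k₀ + k + 1)) (A (k₀ + k)), ENNReal.ofReal (Real.sqrt (c φ)))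
        ≤ ∫⁻ _ in Ioc (A (k₀ + k + 1)) (A (k₀ + k)),
            ENNReal.ofReal (Real.sqrt (z (A (k₀ + k + 1)) * A (k₀ + k))) := by
          refine lintegral_mono_ae (ae_restrict_of_forall_mem measurableSet_Ioc fun φ hφ => ?_)
          exact ENNReal.ofReal_le_ofReal (hb φ hφ)
      _ = ENNReal.ofReal (Real.sqrt (z (A (k₀ + k + 1)) * A (k₀ + k))) *
            volume (Ioc (A (k₀ + k + 1)) (A (k₀ + k))) := setLIntegral_const _ _
      _ = ENNReal.ofReal (Real.sqrt (z (A (k₀ + k + 1)) * A (k₀ + k)) * A (k₀ + k + 1)) := by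
          rw [Real.volume_Ioc, ← ENNReal.ofReal_mul (Real.sqrt_nonneg _)]
          congr 1
          rw [hAsucc (k₀ + k)]
          ring
  -- comparison with the energy summands (index shift)
  have hcmp : ∀ k : ℕ, Real.sqrt (z (A (k₀ + k + 1)) * A (k₀ + k)) * A (k₀ + k + 1) ≤
      3 * (Real.sqrt (2 * m (k + 1)) * A (k₀ + (k + 1) + 1)) := by
    intro k
    have hZ : 0 ≤ z (A (k₀ + k + 1)) := hznn _ (hApos _).le
    have hmk : m (k + 1) = z (A (k₀ + k + 1)) * A (k₀ + k + 2) := rfl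
    have e1 : A (k₀ + k) = 4 * A (k₀ + k + 2) := by
      simp only [hA]
      rw [pow_succ, pow_succ]
      ring
    have e2 : A (k₀ + k + 1) = 2 * A (k₀ + k + 2) := by
      simp only [hA]
      rw [pow_succ]
      ring
    have e3 : A (k₀ + (k + 1) + 1) = A (k₀ + k + 2) := rfl
    have lhs_eq : Real.sqrt (z (A (k₀ + k + 1)) * A (k₀ + k)) * A (k₀ + k + 1) =
        Real.sqrt (z (A (k₀ + k + 1)) * A (k₀ + k) * A (k₀ + k + 1) ^ 2) := by
      rw [Real.sqrt_mul (mul_nonneg hZ (hApos _).le), Real.sqrt_sq (hApos _).le]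
    have rhs_eq : 3 * (Real.sqrt (2 * m (k + 1)) * A (k₀ + (k + 1) + 1)) =
        Real.sqrt (9 * (2 * m (k + 1)) * A (k₀ + (k + 1) + 1) ^ 2) := by
      rw [Real.sqrt_mul (by positivity : (0:ℝ) ≤ 9 * (2 * m (k + 1))),
        Real.sqrt_sq (hApos _).le,
        Real.sqrt_mul (by norm_num : (0:ℝ) ≤ 9)]
      rw [show Real.sqrt 9 = 3 by
        rw [show (9:ℝ) = 3 ^ 2 by norm_num, Real.sqrt_sq]; norm_num]
      ring
    rw [lhs_eq, rhs_eq]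
    refine Real.sqrt_le_sqrt ?_
    rw [hmk, e3]
    obtain ⟨Z, hZeq⟩ : ∃ Z, z (A (k₀ + k + 1)) = Z := ⟨_, rfl⟩
    rw [hZeq] at hZ ⊢
    rw [e1, e2]
    have ha := hApos (k₀ + k + 2)
    nlinarith [mul_nonneg hZ (mul_nonneg (mul_nonneg ha.le ha.le) ha.le)]
  -- finiteness on (0, A k₀]
  have hfin0 : (∫⁻ φ in Ioc (0:ℝ) (A k₀), ENNReal.ofReal (Real.sqrt (c φ))) < ⊤ := by
    calc (∫⁻ φ in Ioc (0:ℝ) (A k₀), ENNReal.ofReal (Real.sqrt (c φ)))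
        ≤ ∫⁻ φ in ⋃ k : ℕ, Ioc (A (k₀ + k + 1)) (A (k₀ + k)),
            ENNReal.ofReal (Real.sqrt (c φ)) := lintegral_mono_set hcover
      _ ≤ ∑' k : ℕ, ∫⁻ φ in Ioc (A (k₀ + k + 1)) (A (k₀ + k)),
            ENNReal.ofReal (Real.sqrt (c φ)) := lintegral_iUnion_le _ _
      _ ≤ ∑' k : ℕ, ENNReal.ofReal
            (Real.sqrt (z (A (k₀ + k + 1)) * A (k₀ + k)) * A (k₀ + k + 1)) :=
          ENNReal.tsum_le_tsum hbandInt
      _ ≤ ∑' k : ℕ, ENNReal.ofReal 3 *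
            ENNReal.ofReal (Real.sqrt (2 * m (k + 1)) * A (k₀ + (k + 1) + 1)) := by
          refine ENNReal.tsum_le_tsum fun k => ?_
          rw [← ENNReal.ofReal_mul (by norm_num : (0:ℝ) ≤ 3)]
          exact ENNReal.ofReal_le_ofReal (hcmp k)
      _ = ENNReal.ofReal 3 *
            ∑' k : ℕ, ENNReal.ofReal (Real.sqrt (2 * m (k + 1)) * A (k₀ + (k + 1) + 1)) :=
          ENNReal.tsum_mul_left
      _ ≤ ENNReal.ofReal 3 *
            ∑' k : ℕ, ENNReal.ofReal (Real.sqrt (2 * m k) * A (k₀ + k + 1)) := by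
          refine mul_le_mul_right ?_ _
          exact ENNReal.tsum_comp_le_tsum_of_injective Nat.succ_injective
            (fun k => ENNReal.ofReal (Real.sqrt (2 * m k) * A (k₀ + k + 1)))
      _ < ⊤ := ENNReal.mul_lt_top ENNReal.ofReal_lt_top hsumE
  -- finiteness on (A k₀, 1]
  have hfin1 : (∫⁻ φ in Ioc (A k₀) 1, ENNReal.ofReal (Real.sqrt (c φ))) < ⊤ := by
    have hb : ∀ φ ∈ Ioc (A k₀) (1:ℝ), Real.sqrt (c φ) ≤ Real.sqrt (z (A k₀)) := by
      intro φ hφ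
      have hφ0 : 0 < φ := lt_trans (hApos _) hφ.1
      have hz1 : z φ ≤ z (A k₀) := hzmono (hApos _) hφ0 hφ.1.le
      refine Real.sqrt_le_sqrt ?_
      rw [hcz]
      calc z φ * φ ≤ z (A k₀) * φ := mul_le_mul_of_nonneg_right hz1 hφ0.le
        _ ≤ z (A k₀) * 1 := mul_le_mul_of_nonneg_left hφ.2 (hznn _ (hApos _).le)
        _ = z (A k₀) := mul_one _
    calc (∫⁻ φ in Ioc (A k₀) 1, ENNReal.ofReal (Real.sqrt (c φ)))
        ≤ ∫⁻ _ in Ioc (A k₀) (1:ℝ), ENNReal.ofReal (Real.sqrt (z (A k₀))) := by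
          refine lintegral_mono_ae (ae_restrict_of_forall_mem measurableSet_Ioc fun φ hφ => ?_)
          exact ENNReal.ofReal_le_ofReal (hb φ hφ)
      _ = ENNReal.ofReal (Real.sqrt (z (A k₀))) * volume (Ioc (A k₀) 1) :=
          setLIntegral_const _ _
      _ < ⊤ := ENNReal.mul_lt_top ENNReal.ofReal_lt_top measure_Ioc_lt_top
  -- part 1
  have hpart1 : (∫⁻ φ in Ioc (0:ℝ) 1, ENNReal.ofReal (Real.sqrt (c φ))) < ⊤ := by
    have hsub : Ioc (0:ℝ) 1 ⊆ Ioc (0:ℝ) (A k₀) ∪ Ioc (A k₀) 1 := by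
      intro x hx
      rcases le_or_gt x (A k₀) with h | h
      · exact Or.inl ⟨hx.1, h⟩
      · exact Or.inr ⟨h, hx.2⟩
    calc (∫⁻ φ in Ioc (0:ℝ) 1, ENNReal.ofReal (Real.sqrt (c φ)))
        ≤ ∫⁻ φ in Ioc (0:ℝ) (A k₀) ∪ Ioc (A k₀) 1, ENNReal.ofReal (Real.sqrt (c φ)) :=
          lintegral_mono_set hsub
      _ ≤ (∫⁻ φ in Ioc (0:ℝ) (A k₀), ENNReal.ofReal (Real.sqrt (c φ))) +
            ∫⁻ φ in Ioc (A k₀) 1, ENNReal.ofReal (Real.sqrt (c φ)) :=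
          lintegral_union_le _ _ _
      _ < ⊤ := ENNReal.add_lt_top.mpr ⟨hfin0, hfin1⟩
  refine ⟨hpart1, ?_⟩
  -- Part 2: liminf
  have hub : ∀ a ∈ {a : ℝ | ∀ᶠ φ in 𝓝[>] (0:ℝ), a ≤ z φ * φ ^ 3}, a ≤ 0 := by
    intro a ha
    by_contra hle; push_neg at hle
    simp only [Set.mem_setOf_eq] at ha
    rw [(nhdsGT_basis (0:ℝ)).eventually_iff] at ha
    obtain ⟨ε, hε, hball⟩ := ha
    set b := min ε 1 with hbdef
    have hb : 0 < b := lt_min hε one_pos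
    have hsub : Ioo (0:ℝ) b ⊆ Ioc 0 1 := fun x hx =>
      ⟨hx.1, le_trans hx.2.le (min_le_right _ _)⟩
    have hlow : ∀ φ ∈ Ioo (0:ℝ) b, Real.sqrt a * φ⁻¹ ≤ Real.sqrt (c φ) := by
      intro φ hφ
      have h1 : a ≤ z φ * φ ^ 3 := hball ⟨hφ.1, lt_of_lt_of_le hφ.2 (min_le_left _ _)⟩
      have hφ0 : 0 < φ := hφ.1
      have h2 : a * (φ⁻¹ * φ⁻¹) ≤ c φ := by
        rw [hcz]
        have h3 := mul_le_mul_of_nonneg_right h1 (by positivity : (0:ℝ) ≤ φ⁻¹ * φ⁻¹)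
        calc a * (φ⁻¹ * φ⁻¹) ≤ z φ * φ ^ 3 * (φ⁻¹ * φ⁻¹) := h3
          _ = z φ * φ := by field_simp
      calc Real.sqrt a * φ⁻¹ = Real.sqrt (a * (φ⁻¹ * φ⁻¹)) := by
            rw [Real.sqrt_mul hle.le, Real.sqrt_mul_self (by positivity : (0:ℝ) ≤ φ⁻¹)]
        _ ≤ Real.sqrt (c φ) := Real.sqrt_le_sqrt h2
    have hdiv : (∫⁻ φ in Ioo (0:ℝ) b, ENNReal.ofReal (Real.sqrt a * φ⁻¹)) = ⊤ := by
      by_contra hfin'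
      have hmeas : Measurable fun φ : ℝ => Real.sqrt a * φ⁻¹ := measurable_const.mul measurable_inv
      have hint' : IntegrableOn (fun φ : ℝ => Real.sqrt a * φ⁻¹) (Ioo 0 b) := by
        constructor
        · exact hmeas.aestronglyMeasurable
        · rw [hasFiniteIntegral_iff_norm]
          have heq : (∫⁻ φ in Ioo (0:ℝ) b, ENNReal.ofReal ‖Real.sqrt a * φ⁻¹‖) =
              ∫⁻ φ in Ioo (0:ℝ) b, ENNReal.ofReal (Real.sqrt a * φ⁻¹) := by
            refine lintegral_congr_ae (ae_restrict_of_forall_mem measurableSet_Ioo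
              fun φ hφ => ?_)
            dsimp only
            rw [Real.norm_eq_abs, abs_of_nonneg
              (mul_nonneg (Real.sqrt_nonneg _) (inv_nonneg.mpr hφ.1.le))]
          rw [heq]
          exact lt_top_iff_ne_top.mpr hfin'
      have hsq : 0 < Real.sqrt a := Real.sqrt_pos.mpr hle
      have h3 : IntegrableOn (fun φ : ℝ => φ⁻¹) (Ioo (0:ℝ) b) := by
        have h4 : IntegrableOn (fun x : ℝ => (Real.sqrt a)⁻¹ * (Real.sqrt a * x⁻¹)) (Ioo 0 b) :=
          hint'.const_mul (Real.sqrt a)⁻¹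
        refine h4.congr_fun (fun x _ => ?_) measurableSet_Ioo
        field_simp
      have h4 : IntegrableOn (fun φ : ℝ => φ ^ (-1 : ℝ)) (Ioo (0:ℝ) b) := by
        refine h3.congr_fun (fun x hx => ?_) measurableSet_Ioo
        rw [Real.rpow_neg_one]
      have := (intervalIntegral.integrableOn_Ioo_rpow_iff hb).mp h4
      linarith
    have hcontra : (∫⁻ φ in Ioc (0:ℝ) 1, ENNReal.ofReal (Real.sqrt (c φ))) = ⊤ := by
      refine top_le_iff.mp ?_
      rw [← hdiv]
      calc (∫⁻ φ in Ioo (0:ℝ) b, ENNReal.ofReal (Real.sqrt a * φ⁻¹))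
          ≤ ∫⁻ φ in Ioo (0:ℝ) b, ENNReal.ofReal (Real.sqrt (c φ)) := by
            refine lintegral_mono_ae (ae_restrict_of_forall_mem measurableSet_Ioo
              fun φ hφ => ?_)
            exact ENNReal.ofReal_le_ofReal (hlow φ hφ)
        _ ≤ ∫⁻ φ in Ioc (0:ℝ) 1, ENNReal.ofReal (Real.sqrt (c φ)) :=
            lintegral_mono_set hsub
    exact absurd hcontra hpart1.ne
  have h0mem : (0:ℝ) ∈ {a : ℝ | ∀ᶠ φ in 𝓝[>] (0:ℝ), a ≤ z φ * φ ^ 3} := by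
    filter_upwards [self_mem_nhdsWithin] with φ hφ
    exact mul_nonneg (hznn φ (Set.mem_Ici.mpr (le_of_lt hφ))) (pow_nonneg (le_of_lt hφ) 3)
  rw [Filter.liminf_eq]
  exact le_antisymm (csSup_le ⟨0, h0mem⟩ hub) (le_csSup ⟨0, hub⟩ h0mem)
end

section
/- Let c : [0,∞) → [0,∞) be arbitrary (Borel measurable so that the energy is defined), and let ψ ∈ H¹(ℝ) be nonnegative with ∫_ℝ ψ dy = w > 0 and essential supremum ψ̂ = ess sup ψ. Then F^c[ψ] ≥ (ψ̂/2)³ / (w/2) = ψ̂³/(4w). -/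
open MeasureTheory Filter Set
open scoped ENNReal Topology

/-- Cauchy–Schwarz (via AM–GM) lower bound: if `f` climbs total amount `a > 0` over an
interval of length `v - u`, then `∫ f² ≥ a²/(v-u)`. -/
lemma sq_integral_lower_bound (f : ℝ → ℝ) {u v : ℝ} (huv : u < v)
    (hf : IntervalIntegrable f volume u v)
    (hsq : IntervalIntegrable (fun s => f s ^ 2) volume u v)
    {a : ℝ} (ha : 0 < a) (hval : a ≤ ∫ s in u..v, f s) :
    a ^ 2 / (v - u) ≤ ∫ s in u..v, f s ^ 2 := by
  set L : ℝ := v - u with hLdef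
  have hLpos : 0 < L := by simp only [hLdef]; linarith
  set t : ℝ := a / L with htdef
  have htpos : 0 < t := by positivity
  set I : ℝ := ∫ s in u..v, f s ^ 2 with hIdef
  have hptwise : ∀ s : ℝ, f s ≤ (1/(2*t)) * f s ^ 2 + t/2 := by
    intro s
    have h1 : 0 ≤ (f s - t)^2 := sq_nonneg _
    have h2 : (1/(2*t)) * (2*t) = 1 := by field_simp
    nlinarith [mul_pos htpos htpos]
  have hint : ∫ s in u..v, f s ≤ ∫ s in u..v, ((1/(2*t)) * f s ^ 2 + t/2) := by
    apply intervalIntegral.integral_mono_on huv.le hf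
      ((hsq.const_mul _).add intervalIntegrable_const) (fun s _ => hptwise s)
  rw [intervalIntegral.integral_add (hsq.const_mul _) intervalIntegrable_const,
      intervalIntegral.integral_const_mul, intervalIntegral.integral_const,
      smul_eq_mul] at hint
  have hLt : L * (t/2) = a/2 := by
    rw [htdef]; field_simp
  have h1 : a / 2 ≤ (1/(2*t)) * I := by
    have : (v - u) * (t/2) = a/2 := hLt
    linarith [hval.trans hint]
  have h2 : a * t ≤ I := by
    have h3 := mul_le_mul_of_nonneg_right h1 (by positivity : (0:ℝ) ≤ 2*t)
    calc a * t = a/2 * (2*t) := by ring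
      _ ≤ (1/(2*t)) * I * (2*t) := h3
      _ = I := by field_simp
  have h4 : a ^ 2 / L = a * t := by
    rw [htdef]; field_simp
  rw [h4]
  exact h2

set_option maxHeartbeats 1000000 in
/-- a priori lower estimate on the phase field energy in terms of the
essential supremum and the mass of the profile. -/
theorem a_priori_energy_estimate
    (c : ℝ → ℝ) (hc : Measurable c) (hcnn : ∀ φ ∈ Ici (0:ℝ), 0 ≤ c φ)
    (ψ dψ : ℝ → ℝ) (hψ : MemH1 ψ dψ) (hψnn : ∀ y, 0 ≤ ψ y)
    (hψint : Integrable ψ)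
    (w : ℝ) (hw : 0 < w) (hmass : (∫ y, ψ y) = w)
    (ψhat : ℝ) (hψhat : ψhat = essSup ψ volume) :
    ENNReal.ofReal (ψhat ^ 3 / (4 * w)) ≤ phaseEnergy c ψ dψ := by
  obtain ⟨hψ2, hdψ2, hFTC⟩ := hψ
  rcases le_or_gt ψhat 0 with hM | hM
  · have h0 : ψhat ^ 3 / (4 * w) ≤ 0 := by
      apply div_nonpos_of_nonpos_of_nonneg
      · nlinarith [sq_nonneg ψhat]
      · linarith
    rw [ENNReal.ofReal_eq_zero.mpr h0]
    exact zero_le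
  -- main case : 0 < ψhat
  have hEsq : Integrable (fun y => dψ y ^ 2) volume := hdψ2.integrable_sq
  obtain ⟨E, hEdef⟩ : ∃ E : ℝ, E = ∫ y, dψ y ^ 2 := ⟨_, rfl⟩
  -- Step B: energy dominates ofReal ((1/2) * E)
  have key : ENNReal.ofReal ((1/2) * E) ≤ phaseEnergy c ψ dψ := by
    rw [hEdef, ← integral_const_mul,
      ofReal_integral_eq_lintegral_ofReal (hEsq.const_mul _)
        (ae_of_all _ fun y => by positivity)]
    refine lintegral_mono fun y => ENNReal.ofReal_le_ofReal ?_
    have := hcnn (ψ y) (hψnn y)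
    linarith
  refine le_trans (ENNReal.ofReal_le_ofReal ?_) key
  -- real inequality : ψhat^3/(4w) ≤ (1/2) E
  -- Step D: the key estimate for every small ε
  have hloc : ∀ u v : ℝ, IntervalIntegrable dψ volume u v := fun u v =>
    ((hdψ2.locallyIntegrable one_le_two).integrableOn_isCompact isCompact_uIcc).intervalIntegrable
  have hψcont : Continuous ψ :=
    (continuous_const.add (intervalIntegral.continuous_primitive hloc 0)).congr
      fun t => (hFTC t).symm
  -- Chebyshev bound on the measure of S = {ψ ≥ ψhat/2}
  obtain ⟨S, hSdef⟩ : ∃ S : Set ℝ, S = {x | ψhat/2 ≤ ψ x} := ⟨_, rfl⟩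
  have hSmeas : volume S ≤ ENNReal.ofReal (2*w/ψhat) := by
    have cheb := mul_meas_ge_le_lintegral₀ (μ := volume)
      ((ENNReal.measurable_ofReal.comp hψcont.measurable)).aemeasurable
      (ENNReal.ofReal (ψhat/2))
    have hset : {x : ℝ | ENNReal.ofReal (ψhat/2) ≤ (ENNReal.ofReal ∘ ψ) x}
        = {x : ℝ | ψhat/2 ≤ ψ x} := by
      ext x
      simp only [mem_setOf_eq, Function.comp_apply,
        ENNReal.ofReal_le_ofReal_iff (hψnn x)]
    have hlint : ∫⁻ x, (ENNReal.ofReal ∘ ψ) x = ENNReal.ofReal w := by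
      simp only [Function.comp_apply]
      rw [← hmass, ← ofReal_integral_eq_lintegral_ofReal hψint (ae_of_all _ hψnn)]
    rw [hset, ← hSdef, hlint] at cheb
    have h2 : volume S ≤ ENNReal.ofReal w / ENNReal.ofReal (ψhat/2) := by
      rw [ENNReal.le_div_iff_mul_le (Or.inl (by simp; positivity)) (Or.inl ENNReal.ofReal_ne_top)]
      rw [mul_comm]; exact cheb
    calc volume S ≤ ENNReal.ofReal w / ENNReal.ofReal (ψhat/2) := h2
      _ = ENNReal.ofReal (w / (ψhat/2)) := (ENNReal.ofReal_div_of_pos (by positivity)).symm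
      _ = ENNReal.ofReal (2*w/ψhat) := by
          congr 1
          field_simp
  have Hε : ∀ ε ∈ Ioo (0:ℝ) (ψhat/2), ψhat * (ψhat/2 - ε)^2 / w ≤ (1/2) * E := by
    rintro ε ⟨hε1, hε2⟩
    obtain ⟨a, hadef⟩ : ∃ a : ℝ, a = ψhat/2 - ε := ⟨_, rfl⟩
    have ha : 0 < a := by rw [hadef]; linarith
    -- find y0 with ψ y0 > ψhat - ε
    have hU : volume {x : ℝ | ψhat - ε < ψ x} ≠ 0 := by
      intro h0
      have hbdd : BddBelow {b : ℝ | volume {x | b < ψ x} = 0} := by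
        refine ⟨0, fun b hb => ?_⟩
        simp only [mem_setOf_eq] at hb
        by_contra hbneg
        push_neg at hbneg
        have huniv : {x : ℝ | b < ψ x} = univ :=
          eq_univ_of_forall fun x => lt_of_lt_of_le hbneg (hψnn x)
        rw [huniv] at hb
        simp [Real.volume_univ] at hb
      have hle : essSup ψ volume ≤ ψhat - ε := by
        rw [essSup_eq_sInf]
        exact csInf_le hbdd h0
      rw [← hψhat] at hle
      linarith
    obtain ⟨y0, hy0⟩ := nonempty_of_measure_ne_zero hU
    have hy0' : ψhat - ε < ψ y0 := hy0
    have hy0half : ψhat/2 < ψ y0 := by linarith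
    obtain ⟨K, hKdef⟩ : ∃ K : ℝ, K = 2*w/ψhat + 1 := ⟨_, rfl⟩
    have hK : 0 < K := by rw [hKdef]; positivity
    have hKgt : ENNReal.ofReal (2*w/ψhat) < ENNReal.ofReal K := by
      rw [ENNReal.ofReal_lt_ofReal_iff hK]
      rw [hKdef]; linarith
    -- left point p with ψ p < ψhat/2
    have hnotsubL : ¬ (Icc (y0 - K) y0 ⊆ {x | ψhat/2 ≤ ψ x}) := by
      intro hsub
      have h1 : volume (Icc (y0-K) y0) ≤ volume S := hSdef ▸ measure_mono hsub
      rw [Real.volume_Icc, show y0 - (y0 - K) = K by ring] at h1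
      exact absurd (h1.trans hSmeas) (not_le.mpr hKgt)
    obtain ⟨p, hpmem, hpS⟩ := not_subset.mp hnotsubL
    have hpψ : ψ p < ψhat/2 := lt_of_not_ge hpS
    have hpy0 : p < y0 := lt_of_le_of_ne hpmem.2 (by
      intro h; rw [h] at hpψ; linarith)
    -- right point q with ψ q < ψhat/2
    have hnotsubR : ¬ (Icc y0 (y0 + K) ⊆ {x | ψhat/2 ≤ ψ x}) := by
      intro hsub
      have h1 : volume (Icc y0 (y0+K)) ≤ volume S := hSdef ▸ measure_mono hsub
      rw [Real.volume_Icc, show y0 + K - y0 = K by ring] at h1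
      exact absurd (h1.trans hSmeas) (not_le.mpr hKgt)
    obtain ⟨q, hqmem, hqS⟩ := not_subset.mp hnotsubR
    have hqψ : ψ q < ψhat/2 := lt_of_not_ge hqS
    have hqy0 : y0 < q := lt_of_le_of_ne hqmem.1 (by
      intro h; rw [← h] at hqψ; linarith)
    -- p' : the last time before y0 at level ≤ ψhat/2
    obtain ⟨T, hTdef⟩ : ∃ T : Set ℝ, T = Icc p y0 ∩ ψ ⁻¹' (Iic (ψhat/2)) := ⟨_, rfl⟩
    have hTclosed : IsClosed T := hTdef ▸ isClosed_Icc.inter (isClosed_Iic.preimage hψcont)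
    have hTne : T.Nonempty := hTdef ▸ ⟨p, ⟨le_refl p, hpy0.le⟩, hpψ.le⟩
    have hTbdd : BddAbove T := hTdef ▸ ⟨y0, fun x hx => hx.1.2⟩
    obtain ⟨p', hp'def⟩ : ∃ p' : ℝ, p' = sSup T := ⟨_, rfl⟩
    have hp'T : p' ∈ Icc p y0 ∩ ψ ⁻¹' (Iic (ψhat/2)) := by
      rw [← hTdef, hp'def]; exact hTclosed.csSup_mem hTne hTbdd
    have hp'ψ : ψ p' ≤ ψhat/2 := hp'T.2
    have hp'lt : p' < y0 := lt_of_le_of_ne hp'T.1.2 (by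
      intro h; rw [h] at hp'ψ; linarith)
    have hIocS : ∀ x ∈ Ioc p' y0, ψhat/2 ≤ ψ x := by
      intro x hx
      by_contra hlt
      push_neg at hlt
      have hxT : x ∈ T := by
        rw [hTdef]; exact ⟨⟨hp'T.1.1.trans hx.1.le, hx.2⟩, hlt.le⟩
      have := le_csSup hTbdd hxT
      rw [← hp'def] at this
      exact absurd this (not_le.mpr hx.1)
    -- q' : the first time after y0 at level ≤ ψhat/2
    obtain ⟨T', hT'def⟩ : ∃ T' : Set ℝ, T' = Icc y0 q ∩ ψ ⁻¹' (Iic (ψhat/2)) := ⟨_, rfl⟩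
    have hT'closed : IsClosed T' := hT'def ▸ isClosed_Icc.inter (isClosed_Iic.preimage hψcont)
    have hT'ne : T'.Nonempty := hT'def ▸ ⟨q, ⟨hqy0.le, le_refl q⟩, hqψ.le⟩
    have hT'bdd : BddBelow T' := hT'def ▸ ⟨y0, fun x hx => hx.1.1⟩
    obtain ⟨q', hq'def⟩ : ∃ q' : ℝ, q' = sInf T' := ⟨_, rfl⟩
    have hq'T : q' ∈ Icc y0 q ∩ ψ ⁻¹' (Iic (ψhat/2)) := by
      rw [← hT'def, hq'def]; exact hT'closed.csInf_mem hT'ne hT'bdd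
    have hq'ψ : ψ q' ≤ ψhat/2 := hq'T.2
    have hq'gt : y0 < q' := lt_of_le_of_ne hq'T.1.1 (by
      intro h; rw [← h] at hq'ψ; linarith)
    have hIcoS : ∀ x ∈ Ico y0 q', ψhat/2 ≤ ψ x := by
      intro x hx
      by_contra hlt
      push_neg at hlt
      have hxT : x ∈ T' := by
        rw [hT'def]; exact ⟨⟨hx.1, hx.2.le.trans hq'T.1.2⟩, hlt.le⟩
      have := csInf_le hT'bdd hxT
      rw [← hq'def] at this
      exact absurd this (not_le.mpr hx.2)
    -- lengths
    obtain ⟨L₁, hL1def⟩ : ∃ L : ℝ, L = y0 - p' := ⟨_, rfl⟩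
    obtain ⟨L₂, hL2def⟩ : ∃ L : ℝ, L = q' - y0 := ⟨_, rfl⟩
    have hL1 : 0 < L₁ := by rw [hL1def]; linarith
    have hL2 : 0 < L₂ := by rw [hL2def]; linarith
    have hdisj : Disjoint (Ioc p' y0) (Ioo y0 q') := by
      apply Set.disjoint_left.mpr
      intro x hx1 hx2
      exact absurd hx1.2 (not_le.mpr hx2.1)
    have hsub : Ioc p' y0 ∪ Ioo y0 q' ⊆ {x | ψhat/2 ≤ ψ x} := by
      rintro x (hx | hx)
      · exact hIocS x hx
      · exact hIcoS x ⟨hx.1.le, hx.2⟩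
    have hL : L₁ + L₂ ≤ 2*w/ψhat := by
      have h1 := (measure_mono hsub).trans (hSdef ▸ hSmeas)
      rw [measure_union hdisj measurableSet_Ioo, Real.volume_Ioc, Real.volume_Ioo,
        ← hL1def, ← hL2def, ← ENNReal.ofReal_add (by linarith) (by linarith)] at h1
      exact (ENNReal.ofReal_le_ofReal_iff (by positivity)).mp h1
    -- lower bounds from Cauchy–Schwarz
    have hval1 : a ≤ ∫ s in p'..y0, dψ s := by
      have h1 := hFTC y0
      have h2 := hFTC p'
      have h3 := intervalIntegral.integral_add_adjacent_intervals (hloc 0 p') (hloc p' y0)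
      rw [hadef]
      linarith
    have hI1 : a ^ 2 / L₁ ≤ ∫ s in p'..y0, dψ s ^ 2 := by
      rw [hL1def]
      exact sq_integral_lower_bound dψ hp'lt (hloc p' y0) (hEsq.intervalIntegrable) ha hval1
    have hval2 : a ≤ ∫ s in y0..q', -dψ s := by
      rw [intervalIntegral.integral_neg]
      have h1 := hFTC y0
      have h2 := hFTC q'
      have h3 := intervalIntegral.integral_add_adjacent_intervals (hloc 0 y0) (hloc y0 q')
      rw [hadef]
      linarith
    have hI2 : a ^ 2 / L₂ ≤ ∫ s in y0..q', dψ s ^ 2 := by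
      rw [hL2def]
      have := sq_integral_lower_bound (fun s => -dψ s) hq'gt ((hloc y0 q').neg)
        (by simpa only [neg_sq] using hEsq.intervalIntegrable (a := y0) (b := q'))
        ha hval2
      simpa only [neg_sq] using this
    -- sum the two contributions into E
    have hIE : (∫ s in p'..y0, dψ s ^ 2) + (∫ s in y0..q', dψ s ^ 2) ≤ E := by
      rw [intervalIntegral.integral_of_le hp'lt.le, intervalIntegral.integral_of_le hq'gt.le,
        integral_Ioc_eq_integral_Ioo (x := y0) (y := q'),
        ← setIntegral_union hdisj measurableSet_Ioo hEsq.integrableOn hEsq.integrableOn, hEdef]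
      exact setIntegral_le_integral hEsq (ae_of_all _ fun y => sq_nonneg _)
    -- arithmetic
    have hsum2 : 4 * a^2 / (L₁ + L₂) ≤ a^2/L₁ + a^2/L₂ := by
      rw [div_add_div _ _ hL1.ne' hL2.ne', div_le_div_iff₀ (by linarith) (by positivity)]
      nlinarith [sq_nonneg (L₁ - L₂), sq_nonneg a]
    have hLψ : (L₁ + L₂) * ψhat ≤ 2*w := (le_div_iff₀ hM).mp hL
    have hsum3 : 2 * a^2 * ψhat / w ≤ 4 * a^2 / (L₁ + L₂) := by
      rw [div_le_div_iff₀ hw (by linarith)]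
      nlinarith [mul_le_mul_of_nonneg_left hLψ (show (0:ℝ) ≤ 2*a^2 by positivity)]
    have : 2 * a^2 * ψhat / w ≤ E := by
      calc 2 * a^2 * ψhat / w ≤ 4 * a^2 / (L₁ + L₂) := hsum3
        _ ≤ a^2/L₁ + a^2/L₂ := hsum2
        _ ≤ (∫ s in p'..y0, dψ s ^ 2) + (∫ s in y0..q', dψ s ^ 2) := add_le_add hI1 hI2
        _ ≤ E := hIE
    have h5 := mul_le_mul_of_nonneg_left this (by norm_num : (0:ℝ) ≤ 1/2)
    rw [← hadef]
    calc ψhat * a^2 / w = 1/2 * (2 * a^2 * ψhat / w) := by ring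
      _ ≤ 1/2 * E := h5
  -- Step C: pass to the limit ε → 0⁺
  have hcont : Tendsto (fun ε : ℝ => ψhat * (ψhat/2 - ε)^2 / w) (𝓝[>] 0)
      (𝓝 (ψhat * (ψhat/2 - 0)^2 / w)) := by
    apply Tendsto.mono_left _ nhdsWithin_le_nhds
    exact ((continuous_const.mul ((continuous_const.sub continuous_id).pow 2)).div_const w).tendsto 0
  have hev : ∀ᶠ ε in 𝓝[>] (0:ℝ), (fun ε : ℝ => ψhat * (ψhat/2 - ε)^2 / w) ε ≤ (1/2) * E := by
    filter_upwards [Ioo_mem_nhdsGT_of_mem (show (0:ℝ) ∈ Ico (0:ℝ) (ψhat/2) from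
      ⟨le_refl 0, by linarith⟩)] with ε hε
    exact Hε ε hε
  have hlim : ψhat * (ψhat/2 - 0)^2 / w ≤ (1/2) * E :=
    le_of_tendsto hcont hev
  calc ψhat ^ 3 / (4 * w) = ψhat * (ψhat/2 - 0)^2 / w := by ring
    _ ≤ (1/2) * E := hlim
end

section
/- Let c : [0,∞) → [0,∞) be lower semicontinuous and bounded on every compact interval [a,b] ⊂ (0,∞). Let T ∈ (0,∞], ψ̂ > 0, and let ψ : [0,T) → [0,∞) be locally absolutely continuous with ψ(0) = ψ̂ and ψ(t) → 0 as t → T. Then ∫_0^T (1/2)|ψ'(t)|² + c(ψ(t)) dt ≥ ∫_0^{ψ̂} √(2 c(φ)) dφ. -/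
open MeasureTheory Filter Set
open scoped ENNReal Topology

/-- Covering lemma: a point of `(a, a + k*h]` lies in one of the `k` bands. -/
private lemma mm_band_mem {a h : ℝ} (hh : 0 < h) :
    ∀ (k : ℕ) (y : ℝ), a < y → y ≤ a + k * h →
      ∃ j < k, y ∈ Set.Ioc (a + j * h) (a + (j + 1) * h) := by
  intro k
  induction k with
  | zero => intro y hy hy'; push_cast at hy'; exfalso; linarith
  | succ k ih =>
    intro y hy hy'
    by_cases hc : y ≤ a + k * h
    · obtain ⟨j, hj, hmem⟩ := ih y hy hc
      exact ⟨j, Nat.lt_succ_of_lt hj, hmem⟩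
    · push_neg at hc
      refine ⟨k, Nat.lt_succ_self k, hc, ?_⟩
      push_cast at hy' ⊢
      linarith

set_option maxHeartbeats 1000000 in
/-- Modica-Mortola lower bound: any locally absolutely continuous profile on
`[0,T)` decreasing from `ψ̂` to `0` has energy at least `∫₀^ψ̂ √(2c(φ)) dφ`.
Here `T ∈ (0,∞]`, the profile `ψ` has a.e. derivative `g`, and local absolute
continuity is expressed by the integral representation via `g`. -/
theorem modica_mortola_lower_bound
    (c : ℝ → ℝ) (hcnn : ∀ x ∈ Ici (0:ℝ), 0 ≤ c x)
    (hclsc : LowerSemicontinuousOn c (Ici 0))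
    (hcbd : ∀ a b : ℝ, 0 < a → a ≤ b → ∃ M, ∀ x ∈ Icc a b, c x ≤ M)
    (T : ℝ≥0∞) (hT : 0 < T) (ψhat : ℝ) (hψhat : 0 < ψhat)
    (ψ g : ℝ → ℝ)
    (hψnn : ∀ t : ℝ, 0 ≤ t → ENNReal.ofReal t < T → 0 ≤ ψ t)
    (hAC : ∀ t : ℝ, 0 ≤ t → ENNReal.ofReal t < T →
      IntegrableOn g (Icc 0 t) ∧ ψ t = ψ 0 + ∫ s in (0:ℝ)..t, g s)
    (hψ0 : ψ 0 = ψhat)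
    (hlim : Tendsto ψ (if T = ⊤ then atTop else 𝓝[<] T.toReal) (𝓝 0)) :
    (∫⁻ φ in Ioc 0 ψhat, ENNReal.ofReal (Real.sqrt (2 * c φ))) ≤
      ∫⁻ t in {t : ℝ | 0 ≤ t ∧ ENNReal.ofReal t < T},
        ENNReal.ofReal ((1/2) * g t ^ 2 + c (ψ t)) := by
  classical
  set S : Set ℝ := {t : ℝ | 0 ≤ t ∧ ENNReal.ofReal t < T} with hSdef
  set E : ℝ≥0∞ := ∫⁻ t in S, ENNReal.ofReal ((1/2) * g t ^ 2 + c (ψ t)) with hEdef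
  have h0S : (0:ℝ) ∈ S := ⟨le_rfl, by simpa using hT⟩
  have hIccS : ∀ {v : ℝ}, v ∈ S → Icc (0:ℝ) v ⊆ S := by
    intro v hv t ht
    exact ⟨ht.1, lt_of_le_of_lt (ENNReal.ofReal_le_ofReal ht.2) hv.2⟩
  -- continuity of ψ on [0, v] for v ∈ S
  have hψcont : ∀ v ∈ S, ContinuousOn ψ (Icc (0:ℝ) v) := by
    intro v hv
    have hint := (hAC v hv.1 hv.2).1
    have h1 : ContinuousOn (fun x => ψ 0 + ∫ t in Ioc 0 x, g t) (Icc (0:ℝ) v) :=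
      continuousOn_const.add (intervalIntegral.continuousOn_primitive hint)
    refine h1.congr ?_
    intro t ht
    have htS := hIccS hv ht
    rw [(hAC t htS.1 htS.2).2, intervalIntegral.integral_of_le ht.1]
  -- ψ eventually reaches any positive level
  have hreach : ∀ u ∈ S, ∀ y : ℝ, 0 < y → ∃ v, v ∈ S ∧ u ≤ v ∧ ψ v < y := by
    intro u hu y hy
    by_cases hTtop : T = ⊤
    · rw [if_pos hTtop] at hlim
      obtain ⟨v, hv1, hv2⟩ := ((hlim.eventually_lt_const hy).and (eventually_ge_atTop u)).exists
      exact ⟨v, ⟨le_trans hu.1 hv2, by simp [hTtop]⟩, hv2, hv1⟩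
    · rw [if_neg hTtop] at hlim
      have huT : u < T.toReal := (ENNReal.ofReal_lt_iff_lt_toReal hu.1 hTtop).1 hu.2
      have h2 : ∀ᶠ v in 𝓝[<] T.toReal, u < v :=
        eventually_nhdsWithin_of_eventually_nhds (eventually_gt_nhds huT)
      have h3 : ∀ᶠ v in 𝓝[<] T.toReal, v < T.toReal := eventually_mem_nhdsWithin
      obtain ⟨v, hv1, hv2, hv3⟩ := ((hlim.eventually_lt_const hy).and (h2.and h3)).exists
      refine ⟨v, ⟨le_trans hu.1 hv2.le, ?_⟩, hv2.le, hv1⟩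
      calc ENNReal.ofReal v < ENNReal.ofReal T.toReal := by
            exact (ENNReal.ofReal_lt_ofReal_iff (ENNReal.toReal_pos hT.ne' hTtop)).2 hv3
        _ = T := ENNReal.ofReal_toReal hTtop
  have hbddb : ∀ a b : ℝ, 0 < a → BddBelow (c '' Icc a b) := by
    intro a b ha
    refine ⟨0, ?_⟩
    rintro x ⟨z, hz, rfl⟩
    exact hcnn z (le_trans ha.le hz.1)
  -- Band lemma: crossing a level band [a,b] costs at least √(2 inf c) (b - a)
  have hband : ∀ a b u : ℝ, 0 < a → a < b → u ∈ S → ψ u = b →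
      ∃ t, t ∈ S ∧ u ≤ t ∧ ψ t = a ∧
        ENNReal.ofReal (Real.sqrt (2 * sInf (c '' Icc a b)) * (b - a)) ≤
          ∫⁻ r in Ioc u t, ENNReal.ofReal ((1/2) * g r ^ 2 + c (ψ r)) := by
    intro a b u ha hab hu hψu
    obtain ⟨v, hvS, huv, hψv⟩ := hreach u hu a ha
    have hu0 : 0 ≤ u := hu.1
    have hcv : ContinuousOn ψ (Icc u v) := (hψcont v hvS).mono (Icc_subset_Icc hu0 le_rfl)
    -- first hitting time of level a
    set A : Set ℝ := Icc u v ∩ ψ ⁻¹' Iic a with hAdef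
    have hAclosed : IsClosed A := hcv.preimage_isClosed_of_isClosed isClosed_Icc isClosed_Iic
    have hAne : A.Nonempty := ⟨v, ⟨huv, le_rfl⟩, hψv.le⟩
    have hAbdd : BddBelow A := ⟨u, fun x hx => hx.1.1⟩
    set t := sInf A with htdef
    have htA : t ∈ A := hAclosed.csInf_mem hAne hAbdd
    have hut : u ≤ t := htA.1.1
    have htv : t ≤ v := htA.1.2
    have hta : ψ t ≤ a := htA.2
    have hunt : u ≠ t := by
      intro h
      rw [← h, hψu] at hta
      linarith
    have hutlt : u < t := lt_of_le_of_ne hut hunt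
    have hbefore : ∀ r ∈ Ico u t, a < ψ r := by
      intro r hr
      by_contra hcon
      push_neg at hcon
      have hrA : r ∈ A := ⟨⟨hr.1, le_trans hr.2.le htv⟩, hcon⟩
      exact absurd (csInf_le hAbdd hrA) (not_le.mpr hr.2)
    have hψt : ψ t = a := by
      refine le_antisymm hta ?_
      have hclos : t ∈ closure (Ico u t) := by
        rw [closure_Ico hunt]; exact ⟨hut, le_rfl⟩
      have hcw : Tendsto ψ (𝓝[Ico u t] t) (𝓝 (ψ t)) :=
        ((hcv t ⟨hut, htv⟩).mono (fun r hr => ⟨hr.1, le_trans hr.2.le htv⟩))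
      have hne := mem_closure_iff_nhdsWithin_neBot.mp hclos
      exact ge_of_tendsto hcw (eventually_mem_nhdsWithin.mono fun r hr => (hbefore r hr).le)
    -- last departure time from level b before t
    set B : Set ℝ := Icc u t ∩ ψ ⁻¹' Ici b with hBdef
    have hBclosed : IsClosed B :=
      ((hcv.mono (Icc_subset_Icc le_rfl htv)).preimage_isClosed_of_isClosed isClosed_Icc
        isClosed_Ici)
    have hBne : B.Nonempty := ⟨u, ⟨le_rfl, hut⟩, hψu.ge⟩
    have hBbdd : BddAbove B := ⟨t, fun x hx => hx.1.2⟩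
    set s := sSup B with hsdef
    have hsB : s ∈ B := hBclosed.csSup_mem hBne hBbdd
    have hus : u ≤ s := hsB.1.1
    have hst' : s ≤ t := hsB.1.2
    have hsb : b ≤ ψ s := hsB.2
    have hsnt : s ≠ t := by
      intro h
      rw [h, hψt] at hsb
      linarith
    have hst : s < t := lt_of_le_of_ne hst' hsnt
    have hafter : ∀ r ∈ Ioc s t, ψ r < b := by
      intro r hr
      by_contra hcon
      push_neg at hcon
      have hrB : r ∈ B := ⟨⟨le_trans hus hr.1.le, hr.2⟩, hcon⟩
      exact absurd (le_csSup hBbdd hrB) (not_le.mpr hr.1)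
    have hψs : ψ s = b := by
      refine le_antisymm ?_ hsb
      have hclos : s ∈ closure (Ioc s t) := by
        rw [closure_Ioc hsnt]; exact ⟨le_rfl, hst'⟩
      have hcw : Tendsto ψ (𝓝[Ioc s t] s) (𝓝 (ψ s)) :=
        ((hcv s ⟨hus, le_trans hst' htv⟩).mono
          (fun r hr => ⟨le_trans hus hr.1.le, le_trans hr.2 htv⟩))
      have hne := mem_closure_iff_nhdsWithin_neBot.mp hclos
      exact le_of_tendsto hcw (eventually_mem_nhdsWithin.mono fun r hr => (hafter r hr).le)
    -- range of ψ on [s,t]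
    have hrange : ∀ r ∈ Icc s t, ψ r ∈ Icc a b := by
      intro r hr
      rcases eq_or_lt_of_le hr.1 with h | h
      · rw [← h, hψs]; exact ⟨hab.le, le_rfl⟩
      · constructor
        · rcases eq_or_lt_of_le hr.2 with h2 | h2
          · rw [h2, hψt]
          · exact (hbefore r ⟨le_trans hus h.le, h2⟩).le
        · exact (hafter r ⟨h, hr.2⟩).le
    set K := sInf (c '' Icc a b) with hKdef
    have hKnn : 0 ≤ K := by
      refine le_csInf ((nonempty_Icc.mpr hab.le).image c) ?_
      rintro x ⟨z, hz, rfl⟩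
      exact hcnn z (le_trans ha.le hz.1)
    have hKle : ∀ x ∈ Icc a b, K ≤ c x := fun x hx =>
      csInf_le (hbddb a b ha) (mem_image_of_mem c hx)
    have hptwise : ∀ r ∈ Ioc s t,
        Real.sqrt (2 * K) * |g r| ≤ (1/2) * g r ^ 2 + c (ψ r) := by
      intro r hr
      have h1 : K ≤ c (ψ r) := hKle _ (hrange r ⟨hr.1.le, hr.2⟩)
      have h2 : Real.sqrt (2 * K) ^ 2 = 2 * K := Real.sq_sqrt (by linarith)
      nlinarith [sq_nonneg (|g r| - Real.sqrt (2 * K)), sq_abs (g r),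
        Real.sqrt_nonneg (2 * K), abs_nonneg (g r)]
    have h0v : (0:ℝ) ≤ v := le_trans hu0 huv
    have hIocsub : Ioc s t ⊆ Icc (0:ℝ) v :=
      fun x hx => ⟨le_trans hu0 (le_trans hus hx.1.le), le_trans hx.2 htv⟩
    have hgint : IntegrableOn g (Ioc s t) := ((hAC v hvS.1 hvS.2).1).mono_set hIocsub
    have htS : t ∈ S := hIccS hvS ⟨le_trans hu0 hut, htv⟩
    have hsS : s ∈ S := hIccS hvS ⟨le_trans hu0 hus, le_trans hst' htv⟩
    -- ∫ g over (s, t] equals a - b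
    have hint_st : ∫ r in Ioc s t, g r = a - b := by
      have e1 := (hAC t htS.1 htS.2).2
      have e2 := (hAC s hsS.1 hsS.2).2
      have hii1 : IntervalIntegrable g volume 0 s := by
        rw [intervalIntegrable_iff_integrableOn_Ioc_of_le hsS.1]
        exact ((hAC v hvS.1 hvS.2).1).mono_set
          (fun x hx => ⟨hx.1.le, le_trans hx.2 (le_trans hst' htv)⟩)
      have hii2 : IntervalIntegrable g volume s t := by
        rw [intervalIntegrable_iff_integrableOn_Ioc_of_le hst.le]
        exact hgint
      have hadd := intervalIntegral.integral_add_adjacent_intervals hii1 hii2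
      have : ∫ r in s..t, g r = ψ t - ψ s := by
        rw [e1, e2] at *
        linarith [hadd]
      rw [← intervalIntegral.integral_of_le hst.le, this, hψt, hψs]
    have habs : b - a ≤ ∫ r in Ioc s t, |g r| := by
      have h1 : |∫ r in Ioc s t, g r| ≤ ∫ r in Ioc s t, |g r| := by
        simpa [Real.norm_eq_abs] using
          norm_integral_le_integral_norm (μ := volume.restrict (Ioc s t)) g
      rw [hint_st] at h1
      calc b - a = -(a - b) := by ring
        _ ≤ |a - b| := neg_le_abs _
        _ ≤ ∫ r in Ioc s t, |g r| := h1
    refine ⟨t, htS, hut, hψt, ?_⟩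
    have hf_int : IntegrableOn (fun r => Real.sqrt (2 * K) * |g r|) (Ioc s t) :=
      hgint.abs.const_mul _
    calc ENNReal.ofReal (Real.sqrt (2 * K) * (b - a))
        ≤ ENNReal.ofReal (∫ r in Ioc s t, Real.sqrt (2 * K) * |g r|) := by
          apply ENNReal.ofReal_le_ofReal
          rw [integral_const_mul]
          exact mul_le_mul_of_nonneg_left habs (Real.sqrt_nonneg _)
      _ = ∫⁻ r in Ioc s t, ENNReal.ofReal (Real.sqrt (2 * K) * |g r|) :=
          ofReal_integral_eq_lintegral_ofReal hf_int
            (Eventually.of_forall fun r => mul_nonneg (Real.sqrt_nonneg _) (abs_nonneg _))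
      _ ≤ ∫⁻ r in Ioc s t, ENNReal.ofReal ((1/2) * g r ^ 2 + c (ψ r)) := by
          refine lintegral_mono_ae ?_
          rw [ae_restrict_iff' measurableSet_Ioc]
          exact Eventually.of_forall fun r hr => ENNReal.ofReal_le_ofReal (hptwise r hr)
      _ ≤ ∫⁻ r in Ioc u t, ENNReal.ofReal ((1/2) * g r ^ 2 + c (ψ r)) :=
          lintegral_mono_set (Ioc_subset_Ioc_left hus)
  -- Chain the bands over a partition
  have hchain : ∀ (aa hh : ℝ), 0 < aa → 0 < hh → ∀ k : ℕ, ∀ u, u ∈ S →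
      ψ u = aa + k * hh →
      ∃ t, t ∈ S ∧ u ≤ t ∧ ψ t = aa ∧
        (∑ j ∈ Finset.range k, ENNReal.ofReal
          (Real.sqrt (2 * sInf (c '' Icc (aa + j * hh) (aa + (j + 1) * hh))) * hh)) ≤
          ∫⁻ r in Ioc u t, ENNReal.ofReal ((1/2) * g r ^ 2 + c (ψ r)) := by
    intro aa hh haa hhh k
    induction k with
    | zero =>
      intro u huS hu
      exact ⟨u, huS, le_rfl, by simpa using hu, by simp⟩
    | succ k ih =>
      intro u huS hu
      have hb : ψ u = (aa + k * hh) + hh := by push_cast at hu ⊢; linarith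
      have hapos : 0 < aa + k * hh := by
        have : (0:ℝ) ≤ (k:ℝ) * hh := mul_nonneg (Nat.cast_nonneg k) hhh.le
        linarith
      obtain ⟨t₁, ht₁S, hut₁, hψt₁, hb1⟩ :=
        hband (aa + k * hh) (aa + (k + 1) * hh) u hapos (by push_cast; linarith) huS
          (by push_cast; push_cast at hu; linarith)
      obtain ⟨t, htS, ht₁t, hψt, hb2⟩ := ih t₁ ht₁S hψt₁
      refine ⟨t, htS, le_trans hut₁ ht₁t, hψt, ?_⟩
      have hsplit : (∫⁻ r in Ioc u t, ENNReal.ofReal ((1/2) * g r ^ 2 + c (ψ r)))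
          = (∫⁻ r in Ioc u t₁, ENNReal.ofReal ((1/2) * g r ^ 2 + c (ψ r)))
            + ∫⁻ r in Ioc t₁ t, ENNReal.ofReal ((1/2) * g r ^ 2 + c (ψ r)) := by
        rw [← Set.Ioc_union_Ioc_eq_Ioc hut₁ ht₁t,
          lintegral_union measurableSet_Ioc (Set.Ioc_disjoint_Ioc_of_le le_rfl)]
      rw [hsplit, Finset.sum_range_succ]
      have hterm : ENNReal.ofReal
          (Real.sqrt (2 * sInf (c '' Icc (aa + k * hh) (aa + (k + 1) * hh))) * hh) ≤
          ∫⁻ r in Ioc u t₁, ENNReal.ofReal ((1/2) * g r ^ 2 + c (ψ r)) := by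
        rw [show (aa + (↑k + 1) * hh) - (aa + ↑k * hh) = hh by ring] at hb1
        exact hb1
      exact le_trans (add_le_add hb2 hterm) (le_of_eq (add_comm _ _))
  -- lower Darboux sums are bounded by the energy
  set ε : ℕ → ℝ := fun n => ψhat / (n + 2) with hεdef
  set h : ℕ → ℝ := fun n => (ψhat - ε n) / (n + 1) with hhdef
  have hεpos : ∀ n, 0 < ε n := by
    intro n
    apply div_pos hψhat
    positivity
  have hεlt : ∀ n, ε n < ψhat := by
    intro n
    rw [hεdef]
    rw [div_lt_iff₀ (by positivity)]
    nlinarith [Nat.cast_nonneg (α := ℝ) n]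
  have hhpos : ∀ n, 0 < h n := by
    intro n
    apply div_pos (by linarith [hεlt n])
    positivity
  have hεtop : ∀ n, ε n + (n + 1) * h n = ψhat := by
    intro n
    rw [hhdef]
    field_simp
    ring
  have hlower : ∀ n : ℕ,
      (∑ j ∈ Finset.range (n + 1), ENNReal.ofReal
        (Real.sqrt (2 * sInf (c '' Icc (ε n + j * h n) (ε n + (j + 1) * h n))) * h n)) ≤ E := by
    intro n
    obtain ⟨t, htS, h0t, hψt, hsum⟩ := hchain (ε n) (h n) (hεpos n) (hhpos n) (n + 1) 0 h0S
      (by rw [hψ0, ← hεtop n]; push_cast; ring)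
    refine le_trans hsum ?_
    rw [hEdef]
    apply lintegral_mono_set
    intro x hx
    exact ⟨hx.1.le, lt_of_le_of_lt (ENNReal.ofReal_le_ofReal hx.2) htS.2⟩
  -- step functions
  set sfun : ℕ → ℝ → ℝ≥0∞ := fun n y => ∑ j ∈ Finset.range (n + 1),
    (Set.Ioc (ε n + j * h n) (ε n + (j + 1) * h n)).indicator
      (fun _ => ENNReal.ofReal
        (Real.sqrt (2 * sInf (c '' Icc (ε n + j * h n) (ε n + (j + 1) * h n))))) y
    with hsfundef
  have hsfun_meas : ∀ n, Measurable (sfun n) := by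
    intro n
    apply Finset.measurable_sum
    intro j _
    exact measurable_const.indicator measurableSet_Ioc
  have hsfun_int : ∀ n, (∫⁻ y in Ioc 0 ψhat, sfun n y) =
      ∑ j ∈ Finset.range (n + 1), ENNReal.ofReal
        (Real.sqrt (2 * sInf (c '' Icc (ε n + j * h n) (ε n + (j + 1) * h n))) * h n) := by
    intro n
    rw [hsfundef]
    simp only
    rw [lintegral_finset_sum _ (fun j _ => measurable_const.indicator measurableSet_Ioc)]
    apply Finset.sum_congr rfl
    intro j hj
    have hjsub : Set.Ioc (ε n + j * h n) (ε n + (j + 1) * h n) ⊆ Ioc 0 ψhat := by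
      intro x hx
      constructor
      · refine lt_of_le_of_lt ?_ hx.1
        exact add_nonneg (hεpos n).le (mul_nonneg (Nat.cast_nonneg j) (hhpos n).le)
      · refine le_trans hx.2 ?_
        rw [← hεtop n]
        have hj1 : (j:ℝ) + 1 ≤ (n:ℝ) + 1 := by
          have := Finset.mem_range.mp hj
          exact_mod_cast Nat.succ_le_succ (Nat.lt_succ_iff.mp this)
        nlinarith [hhpos n]
    rw [lintegral_indicator measurableSet_Ioc, setLIntegral_const,
      Measure.restrict_apply measurableSet_Ioc,
      Set.inter_eq_self_of_subset_left hjsub, Real.volume_Ioc,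
      ← ENNReal.ofReal_mul (Real.sqrt_nonneg _)]
    congr 1
    ring_nf
  -- pointwise liminf lower bound
  have hpt : ∀ y ∈ Ioc (0:ℝ) ψhat,
      ENNReal.ofReal (Real.sqrt (2 * c y)) ≤ liminf (fun n => sfun n y) atTop := by
    intro y hy
    rw [le_liminf_iff]
    intro b hb
    have hcy : 0 ≤ c y := hcnn y hy.1.le
    have hbne : b ≠ ⊤ := hb.ne_top
    have hβ : b.toReal < Real.sqrt (2 * c y) := (ENNReal.lt_ofReal_iff_toReal_lt hbne).1 hb
    have hβ0 : 0 ≤ b.toReal := ENNReal.toReal_nonneg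
    have hsq : b.toReal ^ 2 < 2 * c y := by
      nlinarith [Real.sq_sqrt (by linarith : (0:ℝ) ≤ 2 * c y), Real.sqrt_nonneg (2 * c y)]
    set lam := (b.toReal ^ 2 / 2 + c y) / 2 with hlamdef
    have hlam1 : b.toReal ^ 2 / 2 < lam := by rw [hlamdef]; linarith
    have hlam2 : lam < c y := by rw [hlamdef]; linarith
    have hlsc := hclsc y (mem_Ici.mpr hy.1.le) lam hlam2
    obtain ⟨η, hη, hball⟩ := Metric.mem_nhdsWithin_iff.mp hlsc
    have hεlim : Tendsto (fun n : ℕ => ε n) atTop (𝓝 0) := by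
      rw [hεdef]
      apply Tendsto.div_atTop tendsto_const_nhds
      apply tendsto_atTop_add_const_right
      exact tendsto_natCast_atTop_atTop
    have hhlim : Tendsto (fun n : ℕ => h n) atTop (𝓝 0) := by
      have hub : Tendsto (fun n : ℕ => ψhat / (n + 1)) atTop (𝓝 0) := by
        apply Tendsto.div_atTop tendsto_const_nhds
        apply tendsto_atTop_add_const_right
        exact tendsto_natCast_atTop_atTop
      apply squeeze_zero (fun n => (hhpos n).le) (fun n => ?_) hub
      calc h n = (ψhat - ε n) / (n + 1) := rfl
        _ ≤ ψhat / (n + 1) := by gcongr; linarith [hεpos n]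
    have hev1 : ∀ᶠ n : ℕ in atTop, ε n < y := hεlim.eventually_lt_const hy.1
    have hev2 : ∀ᶠ n : ℕ in atTop, h n < η := hhlim.eventually_lt_const hη
    filter_upwards [hev1, hev2] with n hn1 hn2
    obtain ⟨j, hjk, hyj⟩ := mm_band_mem (hhpos n) (n + 1) y hn1 (by push_cast; rw [hεtop n]; exact hy.2)
    have heval : sfun n y = ENNReal.ofReal
        (Real.sqrt (2 * sInf (c '' Icc (ε n + j * h n) (ε n + (j + 1) * h n)))) := by
      rw [hsfundef]
      simp only
      rw [Finset.sum_eq_single j]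
      · rw [Set.indicator_of_mem hyj]
      · intro j' _ hne
        rw [Set.indicator_of_notMem]
        intro hmem
        rcases lt_or_gt_of_ne hne with hlt | hgt
        · -- j' < j : upper edge of band j' is ≤ lower edge of band j
          have hc1 : (j' : ℝ) + 1 ≤ (j : ℝ) := by exact_mod_cast hlt
          have h1 : ε n + ((j':ℝ) + 1) * h n ≤ ε n + (j:ℝ) * h n := by
            nlinarith [hhpos n]
          have hyy : y < y := lt_of_le_of_lt (le_trans hmem.2 h1) hyj.1
          exact absurd hyy (lt_irrefl y)
        · -- j < j' : lower edge of band j' is ≥ upper edge of band j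
          have hc1 : (j : ℝ) + 1 ≤ (j' : ℝ) := by exact_mod_cast hgt
          have h1 : ε n + ((j:ℝ) + 1) * h n ≤ ε n + (j':ℝ) * h n := by
            nlinarith [hhpos n]
          have := lt_of_le_of_lt (le_trans hyj.2 h1) hmem.1
          exact absurd this (lt_irrefl y)
      · intro hnotin
        exact absurd (Finset.mem_range.mpr hjk) hnotin
    rw [heval]
    have hKlam : lam ≤ sInf (c '' Icc (ε n + j * h n) (ε n + (j + 1) * h n)) := by
      refine le_csInf ((nonempty_Icc.mpr ?_).image c) ?_
      · nlinarith [hhpos n]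
      · rintro x ⟨z, hz, rfl⟩
        have hylo : ε n + (j:ℝ) * h n < y := hyj.1
        have hyhi : y ≤ ε n + ((j:ℝ) + 1) * h n := hyj.2
        have hexp : ((j:ℝ) + 1) * h n = (j:ℝ) * h n + h n := by ring
        have hz1 : z ∈ Metric.ball y η := by
          rw [Metric.mem_ball, Real.dist_eq, abs_lt]
          constructor
          · linarith [hz.1, hz.2]
          · linarith [hz.1, hz.2]
        have hz0 : z ∈ Ici (0:ℝ) := by
          have h0 : (0:ℝ) ≤ ε n + (j:ℝ) * h n :=
            add_nonneg (hεpos n).le (mul_nonneg (Nat.cast_nonneg j) (hhpos n).le)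
          exact le_trans h0 hz.1
        exact (hball ⟨hz1, hz0⟩).le
    calc b < ENNReal.ofReal (Real.sqrt (2 * lam)) := by
          rw [ENNReal.lt_ofReal_iff_toReal_lt hbne]
          calc b.toReal = Real.sqrt (b.toReal ^ 2) := (Real.sqrt_sq hβ0).symm
            _ < Real.sqrt (2 * lam) := Real.sqrt_lt_sqrt (sq_nonneg _) (by linarith)
      _ ≤ ENNReal.ofReal (Real.sqrt (2 * sInf (c '' Icc (ε n + j * h n) (ε n + (j + 1) * h n)))) := by
          apply ENNReal.ofReal_le_ofReal
          exact Real.sqrt_le_sqrt (by linarith)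
  -- final assembly via Fatou
  calc (∫⁻ y in Ioc 0 ψhat, ENNReal.ofReal (Real.sqrt (2 * c y)))
      ≤ ∫⁻ y in Ioc 0 ψhat, liminf (fun n => sfun n y) atTop := by
        refine lintegral_mono_ae ?_
        rw [ae_restrict_iff' measurableSet_Ioc]
        exact Eventually.of_forall hpt
    _ ≤ liminf (fun n => ∫⁻ y in Ioc 0 ψhat, sfun n y) atTop :=
        lintegral_liminf_le fun n => hsfun_meas n
    _ ≤ E := by
        apply liminf_le_of_frequently_le'
        apply Frequently.of_forall
        intro n
        rw [hsfun_int n]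
        exact hlower n
end
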